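/- arXiv:math/9202202 — 6 statements merged into one kernel-verified Lean document; each statement's English description precedes it below -/
import Mathlib

section
/- Let X be a real Banach space and φ : [0,1] → X a McShane integrable function. Then for any Lebesgue measurable set E ⊆ [0,1] the function φ_E = φ·χ(E) : [0,1] → X, defined by φ_E(t) = φ(t) if t ∈ E and φ_E(t) = 0 otherwise, is McShane integrable. -/
open MeasureTheory Filter Set

noncomputable section

/-- A McShane partition of `[0,1]`: a finite family of non-overlapping closed intervals
`[a i, b i]` covering `[0,1]`, with tags `t i ∈ [0,1]`. -/
def IsMcShanePartition (n : ℕ) (a b t : Fin n → ℝ) : Prop :=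
  (∀ i, a i ≤ b i) ∧ (∀ i, t i ∈ Set.Icc (0:ℝ) 1) ∧
  (⋃ i, Set.Icc (a i) (b i)) = Set.Icc (0:ℝ) 1 ∧
  Pairwise fun i j => Set.Ioo (a i) (b i) ∩ Set.Ioo (a j) (b j) = ∅

/-- The partition is subordinate to the gauge `δ`. -/
def SubordinateTo (n : ℕ) (a b t : Fin n → ℝ) (δ : ℝ → ℝ) : Prop :=
  ∀ i, t i - δ (t i) ≤ a i ∧ b i ≤ t i + δ (t i)

/-- `φ : [0,1] → X` is McShane integrable with integral `w`. -/
def HasMcShaneIntegral {X : Type*} [NormedAddCommGroup X] [NormedSpace ℝ X]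
    (φ : ℝ → X) (w : X) : Prop :=
  ∀ ε > (0:ℝ), ∃ δ : ℝ → ℝ, (∀ s ∈ Set.Icc (0:ℝ) 1, 0 < δ s) ∧
    ∀ (n : ℕ) (a b t : Fin n → ℝ), IsMcShanePartition n a b t →
      SubordinateTo n a b t δ →
      ‖w - ∑ i, (b i - a i) • φ (t i)‖ ≤ ε

/-- `wE` is the Pettis integral of `φ` over `E`. -/
def HasPettisIntegralOn {X : Type*} [NormedAddCommGroup X] [NormedSpace ℝ X]
    (φ : ℝ → X) (E : Set ℝ) (wE : X) : Prop :=
  ∀ f : X →L[ℝ] ℝ, IntegrableOn (fun s => f (φ s)) E volume ∧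
    (∫ s in E, f (φ s)) = f wE

/-- `φ : [0,1] → X` is Pettis integrable. -/
def PettisIntegrable {X : Type*} [NormedAddCommGroup X] [NormedSpace ℝ X]
    (φ : ℝ → X) : Prop :=
  ∀ E : Set ℝ, MeasurableSet E → E ⊆ Set.Icc (0:ℝ) 1 →
    ∃ wE : X, HasPettisIntegralOn φ E wE

/-- `P` is the product, over `ℕ`, of copies of the measure `μ`. -/
def IsNatPowerOf {S : Type*} [MeasurableSpace S] (μ : Measure S) (P : Measure (ℕ → S)) : Prop :=
  ∀ (F : Finset ℕ) (A : ℕ → Set S), (∀ i ∈ F, MeasurableSet (A i)) →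
    P {s | ∀ i ∈ F, s i ∈ A i} = ∏ i ∈ F, μ (A i)

/-- `φ : [0,1] → X` is Talagrand integrable with integral `w` : for almost every sequence
in `[0,1]` (for the product probability on `[0,1]^ℕ`) the averages of `φ` converge to `w`. -/
def HasTalagrandIntegral {X : Type*} [NormedAddCommGroup X] [NormedSpace ℝ X]
    (φ : ℝ → X) (w : X) : Prop :=
  ∀ P : Measure (ℕ → ℝ), IsNatPowerOf (volume.restrict (Set.Icc (0:ℝ) 1)) P →
    ∀ᵐ s ∂P, Tendsto (fun n : ℕ => (n : ℝ)⁻¹ • ∑ i ∈ Finset.range n, φ (s i))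
      atTop (nhds w)

def TalagrandIntegrable {X : Type*} [NormedAddCommGroup X] [NormedSpace ℝ X]
    (φ : ℝ → X) : Prop :=
  ∃ w, HasTalagrandIntegral φ w

/-- A set `A` of real-valued functions is stable with respect to `μ`. -/
def Stable {S : Type*} [MeasurableSpace S] (μ : Measure S) (A : Set (S → ℝ)) : Prop :=
  ∀ E : Set S, MeasurableSet E → 0 < μ E → ∀ α β : ℝ, α < β →
    ∃ m n : ℕ, 0 < m ∧ 0 < n ∧
      (Measure.prod (Measure.pi fun _ : Fin m => μ) (Measure.pi fun _ : Fin n => μ))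
        {p : (Fin m → S) × (Fin n → S) |
          (∀ i, p.1 i ∈ E) ∧ (∀ j, p.2 j ∈ E) ∧
          ∃ f ∈ A, (∀ i, f (p.1 i) ≤ α) ∧ (∀ j, β ≤ f (p.2 j))}
        < μ E ^ (m + n)

end

noncomputable section
open Metric

structure GoodPart {ι : Type*} [Fintype ι] (A B T : ι → ℝ) (δ : ℝ → ℝ) : Prop where
  le : ∀ i, A i ≤ B i
  tag_mem : ∀ i, T i ∈ Set.Icc (0:ℝ) 1
  cover : (⋃ i, Set.Icc (A i) (B i)) = Set.Icc (0:ℝ) 1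
  disj : Pairwise fun i j => Set.Ioo (A i) (B i) ∩ Set.Ioo (A j) (B j) = ∅
  sub : ∀ i, T i - δ (T i) ≤ A i ∧ B i ≤ T i + δ (T i)

variable {X : Type*} [NormedAddCommGroup X] [NormedSpace ℝ X]

lemma good_apply {ι : Type*} [Fintype ι] {A B T : ι → ℝ} {δ : ℝ → ℝ}
    (h : GoodPart A B T δ)
    {w : X} {φ : ℝ → X} {ε : ℝ}
    (H : ∀ (n : ℕ) (a b t : Fin n → ℝ), IsMcShanePartition n a b t → SubordinateTo n a b t δ →
      ‖w - ∑ i, (b i - a i) • φ (t i)‖ ≤ ε) :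
    ‖w - ∑ i, (B i - A i) • φ (T i)‖ ≤ ε := by
  classical
  let e := (Fintype.equivFin ι).symm
  have h1 : IsMcShanePartition (Fintype.card ι) (A ∘ e) (B ∘ e) (T ∘ e) := by
    refine ⟨fun i => h.le _, fun i => h.tag_mem _, ?_, ?_⟩
    · rw [← h.cover]
      exact e.surjective.iUnion_comp (fun j => Set.Icc (A j) (B j))
    · exact h.disj.comp_of_injective e.injective
  have h2 : SubordinateTo (Fintype.card ι) (A ∘ e) (B ∘ e) (T ∘ e) δ := fun i => h.sub _
  have := H _ (A ∘ e) (B ∘ e) (T ∘ e) h1 h2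
  rwa [show ∑ i, ((B ∘ e) i - (A ∘ e) i) • φ ((T ∘ e) i)
      = ∑ i, (B i - A i) • φ (T i) from e.sum_comp fun j => (B j - A j) • φ (T j)] at this

lemma good_interval_subset {ι : Type*} [Fintype ι] {A B T : ι → ℝ} {δ : ℝ → ℝ}
    (h : GoodPart A B T δ) (i : ι) : Set.Icc (A i) (B i) ⊆ Set.Icc (0:ℝ) 1 := by
  rw [← h.cover]; exact Set.subset_iUnion (fun j => Set.Icc (A j) (B j)) i

/-! clamp -/

def cA (a b c : ℝ) : ℝ := min (max a c) b
def cB (a b c d : ℝ) : ℝ := max (min b d) (cA a b c)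

variable {a b c d : ℝ}

lemma cA_mem (hab : a ≤ b) : a ≤ cA a b c ∧ cA a b c ≤ b :=
  ⟨le_min (le_max_left _ _) hab, min_le_right _ _⟩

lemma cA_le_cB : cA a b c ≤ cB a b c d := le_max_right _ _

lemma cB_le (hab : a ≤ b) : cB a b c d ≤ b :=
  max_le (min_le_left _ _) (cA_mem hab).2

lemma clamp_of_ne (hne : max a c ≤ min b d) (hab : a ≤ b) :
    cA a b c = max a c ∧ cB a b c d = min b d := by
  have h1 : cA a b c = max a c := min_eq_left (le_trans hne (min_le_left _ _))
  exact ⟨h1, by rw [cB, h1, max_eq_left hne]⟩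

lemma clamp_of_not_ne (hne : ¬ max a c ≤ min b d) (hab : a ≤ b) (hcd : c ≤ d) :
    cA a b c = cB a b c d := by
  rcases lt_or_ge b c with hbc | hbc
  · have h1 : cA a b c = b := by
      rw [cA, max_eq_right (le_of_lt (lt_of_le_of_lt hab hbc)), min_eq_right (le_of_lt hbc)]
    have h2 : min b d = b := min_eq_left (le_trans (le_of_lt hbc) hcd)
    rw [h1, cB, h1, h2, max_self]
  · push_neg at hne
    have hda : d < a := by
      have hma : b ⊓ d < a := by
        rcases lt_max_iff.1 hne with h | h
        · exact h
        · rcases min_lt_iff.1 h with h' | h'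
          · exact absurd hbc (not_le.2 h')
          · exact absurd hcd (not_le.2 h')
      rcases min_lt_iff.1 hma with h' | h'
      · exact absurd hab (not_le.2 h')
      · exact h'
    have h1 : cA a b c = a := by
      rw [cA, max_eq_left (le_trans hcd (le_of_lt hda)), min_eq_left hab]
    have h2 : b ⊓ d ≤ a := le_trans (min_le_right b d) (le_of_lt hda)
    rw [h1, cB, h1, max_eq_right h2]

lemma clamp_Ioo_subset (hab : a ≤ b) (hcd : c ≤ d) :
    Set.Ioo (cA a b c) (cB a b c d) ⊆ Set.Ioo a b ∩ Set.Ioo c d := by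
  by_cases hne : max a c ≤ min b d
  · obtain ⟨h1, h2⟩ := clamp_of_ne hne hab
    rw [h1, h2]
    intro x hx
    exact ⟨⟨lt_of_le_of_lt (le_max_left a c) hx.1, lt_of_lt_of_le hx.2 (min_le_left b d)⟩,
      ⟨lt_of_le_of_lt (le_max_right a c) hx.1, lt_of_lt_of_le hx.2 (min_le_right b d)⟩⟩
  · rw [← clamp_of_not_ne hne hab hcd]
    simp

lemma clamp_Icc_subset (hab : a ≤ b) : Set.Icc (cA a b c) (cB a b c d) ⊆ Set.Icc a b :=
  Set.Icc_subset_Icc (cA_mem hab).1 (cB_le hab)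

lemma clamp_Icc_subset' (hne : max a c ≤ min b d) (hab : a ≤ b) :
    Set.Icc (cA a b c) (cB a b c d) ⊆ Set.Icc c d := by
  obtain ⟨h1, h2⟩ := clamp_of_ne hne hab
  rw [h1, h2]
  exact Set.Icc_subset_Icc (le_max_right a c) (min_le_right b d)

lemma mem_clamp (hx : x ∈ Set.Icc a b ∩ Set.Icc c d) :
    max a c ≤ min b d ∧ x ∈ Set.Icc (cA a b c) (cB a b c d) := by
  obtain ⟨⟨h1, h2⟩, ⟨h3, h4⟩⟩ := hx
  have hne : max a c ≤ min b d := le_trans (max_le h1 h3) (le_min h2 h4)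
  have hab : a ≤ b := le_trans h1 h2
  obtain ⟨e1, e2⟩ := clamp_of_ne hne hab
  exact ⟨hne, by rw [e1, e2]; exact ⟨max_le h1 h3, le_min h2 h4⟩⟩

lemma clamp_len_symm (hab : a ≤ b) (hcd : c ≤ d) :
    cB a b c d - cA a b c = cB c d a b - cA c d a := by
  by_cases hne : max a c ≤ min b d
  · obtain ⟨h1, h2⟩ := clamp_of_ne hne hab
    obtain ⟨h3, h4⟩ := clamp_of_ne (by rwa [max_comm, min_comm]) hcd
    rw [h1, h2, h3, h4, max_comm, min_comm]
  · rw [← clamp_of_not_ne hne hab hcd, sub_self,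
      ← clamp_of_not_ne (by rwa [max_comm, min_comm] at hne) hcd hab, sub_self]



lemma measure_biUnion_Icc {ι : Type*} (S : Finset ι) (A B : ι → ℝ)
    (hAB : ∀ i ∈ S, A i ≤ B i)
    (hdisj : ∀ i ∈ S, ∀ j ∈ S, i ≠ j → Set.Ioo (A i) (B i) ∩ Set.Ioo (A j) (B j) = ∅) :
    volume (⋃ i ∈ S, Set.Icc (A i) (B i)) = ENNReal.ofReal (∑ i ∈ S, (B i - A i)) := by
  rw [measure_biUnion_finset₀ ?_ (fun i _ => measurableSet_Icc.nullMeasurableSet)]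
  · rw [ENNReal.ofReal_sum_of_nonneg (fun i hi => sub_nonneg.2 (hAB i hi))]
    exact Finset.sum_congr rfl fun i _ => Real.volume_Icc
  · intro i hi j hj hij
    have hsub : Set.Icc (A i) (B i) ∩ Set.Icc (A j) (B j)
        ⊆ ({A i, B i, A j, B j} : Set ℝ) := by
      rintro x ⟨⟨h1, h2⟩, ⟨h3, h4⟩⟩
      by_contra hx
      simp only [Set.mem_insert_iff, Set.mem_singleton_iff, not_or] at hx
      have : x ∈ Set.Ioo (A i) (B i) ∩ Set.Ioo (A j) (B j) :=
        ⟨⟨lt_of_le_of_ne h1 (Ne.symm hx.1), lt_of_le_of_ne h2 hx.2.1⟩,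
         ⟨lt_of_le_of_ne h3 (Ne.symm hx.2.2.1), lt_of_le_of_ne h4 hx.2.2.2⟩⟩
      rw [hdisj i hi j hj hij] at this
      exact this
    exact measure_mono_null hsub ((Set.toFinite _).measure_zero volume)

lemma iUnion_pieces (a h : ℝ) (h0 : 0 ≤ h) (M : ℕ) (hM : 0 < M) :
    (⋃ m : Fin M, Set.Icc (a + (m : ℕ) * h) (a + ((m : ℕ) + 1) * h))
      = Set.Icc a (a + M * h) := by
  apply Set.Subset.antisymm
  · refine Set.iUnion_subset fun m => Set.Icc_subset_Icc ?_ ?_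
    · nlinarith [(Nat.cast_nonneg m.1 : (0:ℝ) ≤ (m.1 : ℝ))]
    · have hm : ((m : ℕ) : ℝ) + 1 ≤ M := by exact_mod_cast m.2
      nlinarith
  · intro x hx
    rcases eq_or_lt_of_le h0 with h0' | h0'
    · refine Set.mem_iUnion.2 ⟨⟨0, hM⟩, ?_⟩
      have hxa : x = a := by
        have h1 := hx.1
        have h2 := hx.2
        rw [← h0', mul_zero, add_zero] at h2
        linarith
      simp [hxa, ← h0']
    · have hxa : 0 ≤ (x - a) / h := div_nonneg (by linarith [hx.1]) (le_of_lt h0')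
      have hfloor : (0:ℤ) ≤ ⌊(x - a) / h⌋ := Int.floor_nonneg.2 hxa
      set kk : ℕ := ⌊(x - a) / h⌋.toNat with hkk
      have hcast : ((kk : ℕ) : ℝ) = ((⌊(x - a) / h⌋ : ℤ) : ℝ) := by
        have : ((kk : ℕ) : ℤ) = ⌊(x - a) / h⌋ := Int.toNat_of_nonneg hfloor
        exact_mod_cast congrArg (fun z : ℤ => (z : ℝ)) this
      have hkkle : (kk : ℝ) ≤ (x - a) / h := by
        rw [hcast]; exact Int.floor_le _
      have hkklt : (x - a) / h < (kk : ℝ) + 1 := by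
        rw [hcast]; exact Int.lt_floor_add_one _
      set k : ℕ := min kk (M - 1) with hk
      have hkM : k < M := lt_of_le_of_lt (min_le_right _ _) (by omega)
      refine Set.mem_iUnion.2 ⟨⟨k, hkM⟩, ?_, ?_⟩
      · have h1 : (k : ℝ) ≤ (x - a) / h :=
          le_trans (by exact_mod_cast Nat.cast_le.2 (min_le_left kk (M-1))) hkkle
        have := (le_div_iff₀ h0').1 h1
        linarith
      · rcases le_or_gt kk (M - 1) with hc | hc
        · have hkek : (k : ℝ) = (kk : ℝ) := by exact_mod_cast congrArg Nat.cast (min_eq_left hc)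
          show x ≤ a + ((k : ℝ) + 1) * h
          have := (div_lt_iff₀ h0').1 hkklt
          rw [hkek]; linarith
        · have hkek : k = M - 1 := min_eq_right (le_of_lt hc)
          have hcast2 : ((k : ℕ) : ℝ) + 1 = (M : ℝ) := by
            rw [hkek]; push_cast [Nat.cast_sub (by omega : 1 ≤ M)]; ring
          show x ≤ a + ((k : ℝ) + 1) * h
          rw [hcast2]; exact hx.2


lemma cover_setup (δ : ℝ → ℝ) (hδ : ∀ s ∈ Set.Icc (0:ℝ) 1, 0 < δ s) :
    ∃ (T : Finset ℝ) (ρ : ℝ), (∀ t ∈ T, t ∈ Set.Icc (0:ℝ) 1) ∧ 0 < ρ ∧ T.Nonempty ∧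
      ∀ x ∈ Set.Icc (0:ℝ) 1, ∃ t ∈ T, Metric.ball x ρ ⊆ Set.Icc (t - δ t) (t + δ t) := by
  classical
  set c : ↥(Set.Icc (0:ℝ) 1) → Set ℝ := fun t => Set.Ioo ((t:ℝ) - δ t) ((t:ℝ) + δ t) with hc
  have hcov : Set.Icc (0:ℝ) 1 ⊆ ⋃ t, c t := by
    intro x hx
    exact Set.mem_iUnion.2 ⟨⟨x, hx⟩, by
      simp only [hc, Set.mem_Ioo]
      constructor <;> [linarith [hδ x hx]; linarith [hδ x hx]]⟩
  obtain ⟨T₀, hT₀⟩ := isCompact_Icc.elim_finite_subcover c (fun t => isOpen_Ioo) hcov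
  have hcov2 : Set.Icc (0:ℝ) 1 ⊆ ⋃ i : ↥T₀, c i := by
    intro x hx
    obtain ⟨t, ht, hxt⟩ := Set.mem_iUnion₂.1 (hT₀ hx)
    exact Set.mem_iUnion.2 ⟨⟨t, ht⟩, hxt⟩
  obtain ⟨ρ, hρ, hleb⟩ := lebesgue_number_lemma_of_metric isCompact_Icc
    (fun i : ↥T₀ => isOpen_Ioo) hcov2
  refine ⟨Finset.image Subtype.val T₀, ρ, ?_, hρ, ?_, ?_⟩
  · intro t ht
    rw [Finset.mem_image] at ht
    obtain ⟨u, _, rfl⟩ := ht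
    exact u.2
  · obtain ⟨i, hi⟩ := Set.mem_iUnion.1 (hcov2 ⟨le_refl 0, zero_le_one⟩)
    exact ⟨((i : ↥(Set.Icc (0:ℝ) 1)) : ℝ), Finset.mem_image_of_mem Subtype.val i.2⟩
  · intro x hx
    obtain ⟨i, hi⟩ := hleb x hx
    refine ⟨((i : ↥(Set.Icc (0:ℝ) 1)) : ℝ), Finset.mem_image_of_mem Subtype.val i.2, ?_⟩
    exact hi.trans Set.Ioo_subset_Icc_self
namespace McShaneAux

variable {X : Type*} [NormedAddCommGroup X] [NormedSpace ℝ X]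

lemma pieces_disj (a h : ℝ) (h0 : 0 ≤ h) {M : ℕ} {m m' : Fin M} (hne : m ≠ m') :
    Set.Ioo (a + ((m:ℕ):ℝ) * h) (a + (((m:ℕ):ℝ) + 1) * h)
      ∩ Set.Ioo (a + ((m':ℕ):ℝ) * h) (a + (((m':ℕ):ℝ) + 1) * h) = ∅ := by
  have key : ∀ p q : Fin M, (p:ℕ) < (q:ℕ) →
      Set.Ioo (a + ((p:ℕ):ℝ) * h) (a + (((p:ℕ):ℝ) + 1) * h)
        ∩ Set.Ioo (a + ((q:ℕ):ℝ) * h) (a + (((q:ℕ):ℝ) + 1) * h) = ∅ := by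
    intro p q hpq
    apply Set.eq_empty_of_forall_notMem
    rintro x ⟨⟨_, h2⟩, ⟨h3, _⟩⟩
    have hc : ((p:ℕ):ℝ) + 1 ≤ ((q:ℕ):ℝ) := by exact_mod_cast hpq
    nlinarith
  rcases lt_or_gt_of_ne (fun hc => hne (by exact_mod_cast Fin.ext hc : m = m')) with hlt | hlt
  · exact key m m' hlt
  · rw [Set.inter_comm]; exact key m' m hlt

lemma exists_fine (δ : ℝ → ℝ) (hδ : ∀ s ∈ Set.Icc (0:ℝ) 1, 0 < δ s) :
    ∃ (n : ℕ) (a b t : Fin n → ℝ), IsMcShanePartition n a b t ∧ SubordinateTo n a b t δ := by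
  classical
  obtain ⟨Tset, ρ, hTmem, hρ, hTne, hcov⟩ := cover_setup δ hδ
  set M : ℕ := ⌈1/ρ⌉₊ + 1 with hM
  have hM0 : 0 < M := Nat.succ_pos _
  have hM0' : (0:ℝ) < M := Nat.cast_pos.2 hM0
  have hMρ : (1:ℝ)/M < ρ := by
    rw [div_lt_iff₀ hM0']
    have h1 : 1/ρ ≤ (⌈1/ρ⌉₊ : ℝ) := Nat.le_ceil _
    have h2 : ((⌈1/ρ⌉₊ : ℝ)) + 1 = (M:ℝ) := by rw [hM]; push_cast; ring
    have h3 : ρ * (1/ρ) = 1 := by field_simp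
    have h4 : ρ * (1/ρ) ≤ ρ * (⌈1/ρ⌉₊ : ℝ) := mul_le_mul_of_nonneg_left h1 hρ.le
    nlinarith
  set a : Fin M → ℝ := fun m => 0 + (m : ℕ) * (1/M) with ha
  set b : Fin M → ℝ := fun m => 0 + ((m : ℕ) + 1) * (1/M) with hb
  have hab : ∀ m, a m ≤ b m := by
    intro m; simp only [ha, hb]
    have : (0:ℝ) ≤ 1/M := by positivity
    nlinarith
  have hmem : ∀ m, a m ∈ Set.Icc (0:ℝ) 1 ∧ b m ∈ Set.Icc (0:ℝ) 1 := by
    intro m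
    have h1 : ((m:ℕ):ℝ) + 1 ≤ M := by exact_mod_cast m.2
    have h2 : (0:ℝ) ≤ ((m:ℕ):ℝ) := Nat.cast_nonneg _
    have h3 : (0:ℝ) < 1/M := by positivity
    have h4 : (((m:ℕ):ℝ) + 1) * (1/M) ≤ (M:ℝ) * (1/M) := by nlinarith
    have h5 : (M:ℝ) * (1/M) = 1 := by field_simp
    refine ⟨⟨?_, ?_⟩, ⟨?_, ?_⟩⟩ <;> simp only [ha, hb, zero_add]
    · positivity
    · nlinarith
    · positivity
    · nlinarith
  have hcover : (⋃ m : Fin M, Set.Icc (a m) (b m)) = Set.Icc (0:ℝ) 1 := by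
    have := iUnion_pieces 0 (1/M) (by positivity) M hM0
    rw [ha] ; rw [hb]
    convert this using 2
    rw [mul_one_div, div_self (ne_of_gt hM0'), zero_add]
  choose tg htg1 htg2 using fun m : Fin M => hcov (a m) (hmem m).1
  refine ⟨M, a, b, tg, ⟨hab, fun m => hTmem _ (htg1 m), hcover, ?_⟩, ?_⟩
  · -- pairwise disjoint
    have key : ∀ p q : Fin M, (p:ℕ) < (q:ℕ) →
        Set.Ioo (a p) (b p) ∩ Set.Ioo (a q) (b q) = ∅ := by
      intro p q hpq
      apply Set.eq_empty_of_forall_notMem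
      rintro x ⟨⟨_, h2⟩, ⟨h3, _⟩⟩
      have : ((p:ℕ):ℝ) + 1 ≤ (q:ℕ) := by exact_mod_cast hpq
      have hpos : (0:ℝ) < 1/M := by positivity
      simp only [ha, hb, zero_add] at h2 h3
      nlinarith
    intro p q hpq
    rcases lt_or_gt_of_ne (fun h => hpq (by exact_mod_cast Fin.ext h : p = q)) with h | h
    · exact key p q h
    · rw [Set.inter_comm]; exact key q p h
  · intro m
    have hball : Set.Icc (a m) (b m) ⊆ Metric.ball (a m) ρ := by
      intro y hy
      obtain ⟨hy1, hy2⟩ := hy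
      rw [Metric.mem_ball, Real.dist_eq, abs_lt]
      have hba : b m - a m = 1/M := by simp only [ha, hb]; ring
      clear_value a b M
      constructor <;> linarith
    have h1 := htg2 m (hball ⟨le_refl _, hab m⟩)
    have h2 := htg2 m (hball ⟨hab m, le_refl _⟩)
    exact ⟨h1.1, h2.2⟩

lemma small_sum {φ : ℝ → X} {w : X} {ε : ℝ} (hε : 0 < ε) {δ : ℝ → ℝ}
    (hδ : ∀ s ∈ Set.Icc (0:ℝ) 1, 0 < δ s)
    (H : ∀ (n : ℕ) (a b t : Fin n → ℝ), IsMcShanePartition n a b t → SubordinateTo n a b t δ →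
      ‖w - ∑ i, (b i - a i) • φ (t i)‖ ≤ ε) :
    ∃ η > (0:ℝ), ∀ {ι : Type} [Fintype ι] (A B T : ι → ℝ), GoodPart A B T δ →
      ∀ S : Finset ι, (∑ i ∈ S, (B i - A i)) ≤ η →
        ‖∑ i ∈ S, (B i - A i) • φ (T i)‖ ≤ 3 * ε := by
  classical
  obtain ⟨Tset, ρ, hTmem, hρ, hTne, hcov⟩ := cover_setup δ hδ
  set Mb : ℝ := Tset.sup' hTne (fun t => ‖φ t‖) with hMb
  have hMbB : ∀ t ∈ Tset, ‖φ t‖ ≤ Mb := by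
    intro t ht
    rw [hMb]
    exact Finset.le_sup' (fun t => ‖φ t‖) ht
  have hMb0 : 0 ≤ Mb := le_trans (norm_nonneg _) (hMbB _ hTne.choose_spec)
  refine ⟨ε / (Mb + 1), by positivity, ?_⟩
  intro ι _ A B T hgood S hS
  set M : ℕ := ⌈1/ρ⌉₊ + 1 with hM
  have hM0 : 0 < M := Nat.succ_pos _
  have hM0' : (0:ℝ) < M := Nat.cast_pos.2 hM0
  have hMρ : (1:ℝ)/M < ρ := by
    rw [div_lt_iff₀ hM0']
    have h1 : 1/ρ ≤ (⌈1/ρ⌉₊ : ℝ) := Nat.le_ceil _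
    have h2 : ((⌈1/ρ⌉₊ : ℝ)) + 1 = (M:ℝ) := by rw [hM]; push_cast; ring
    have h3 : ρ * (1/ρ) = 1 := by field_simp
    have h4 : ρ * (1/ρ) ≤ ρ * (⌈1/ρ⌉₊ : ℝ) := mul_le_mul_of_nonneg_left h1 hρ.le
    nlinarith
  set h : ι → ℝ := fun i => (B i - A i)/M with hh
  have hh0 : ∀ i, 0 ≤ h i := fun i => div_nonneg (sub_nonneg.2 (hgood.le i)) (le_of_lt hM0')
  have hMh : ∀ i, (M : ℝ) * h i = B i - A i := fun i => by
    rw [hh]; field_simp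
  have hint : ∀ i, A i ∈ Set.Icc (0:ℝ) 1 ∧ B i ∈ Set.Icc (0:ℝ) 1 := fun i =>
    ⟨good_interval_subset hgood i (Set.left_mem_Icc.2 (hgood.le i)),
     good_interval_subset hgood i (Set.right_mem_Icc.2 (hgood.le i))⟩
  have hBA1 : ∀ i, B i - A i ≤ 1 := fun i => by
    have := (hint i).1.1; have := (hint i).2.2; linarith
  set PA : ι × Fin M → ℝ := fun p => A p.1 + ((p.2 : ℕ) : ℝ) * h p.1 with hPA
  set PB : ι × Fin M → ℝ := fun p => A p.1 + (((p.2 : ℕ) : ℝ) + 1) * h p.1 with hPB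
  have hlen : ∀ p, PB p - PA p = h p.1 := fun p => by simp only [hPA, hPB]; ring
  have hPmem : ∀ p, A p.1 ≤ PA p ∧ PA p ≤ PB p ∧ PB p ≤ B p.1 := by
    intro p
    have h1 : (0:ℝ) ≤ ((p.2 : ℕ) : ℝ) := Nat.cast_nonneg _
    have h2 : ((p.2 : ℕ) : ℝ) + 1 ≤ M := by exact_mod_cast p.2.2
    have h3 := hh0 p.1
    have h4 := hMh p.1
    simp only [hPA, hPB]
    refine ⟨by nlinarith, by nlinarith, by nlinarith⟩
  have hPsub : ∀ p, Set.Icc (PA p) (PB p) ⊆ Set.Icc (A p.1) (B p.1) := fun p =>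
    Set.Icc_subset_Icc (hPmem p).1 (hPmem p).2.2
  -- choice of fresh tags
  have hPA01 : ∀ p, PA p ∈ Set.Icc (0:ℝ) 1 := fun p => by
    have := hint p.1
    exact ⟨le_trans this.1.1 (hPmem p).1,
      le_trans (le_trans (hPmem p).2.1 (hPmem p).2.2) this.2.2⟩
  choose tg htg1 htg2 using fun p : ι × Fin M => hcov (PA p) (hPA01 p)
  have htgs : ∀ p, tg p - δ (tg p) ≤ PA p ∧ PB p ≤ tg p + δ (tg p) := by
    intro p
    have hball : Set.Icc (PA p) (PB p) ⊆ Metric.ball (PA p) ρ := by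
      intro y hy
      obtain ⟨hy1, hy2⟩ := hy
      rw [Metric.mem_ball, Real.dist_eq, abs_lt]
      have e1 : PB p - PA p ≤ 1/M := by
        rw [hlen, hh]
        rw [div_le_div_iff₀ hM0' hM0']
        nlinarith [hBA1 p.1, hM0']
      clear_value PA PB h M
      constructor <;> linarith
    have h1 := htg2 p (hball ⟨le_refl _, (hPmem p).2.1⟩)
    have h2 := htg2 p (hball ⟨(hPmem p).2.1, le_refl _⟩)
    exact ⟨h1.1, h2.2⟩
  set TA : ι × Fin M → ℝ := fun p => T p.1 with hTA
  set TB : ι × Fin M → ℝ := fun p => if p.1 ∈ S then tg p else T p.1 with hTB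
  have hinner : ∀ (i : ι) (v : X), ∑ m : Fin M, (PB (i, m) - PA (i, m)) • v = (B i - A i) • v := by
    intro i v
    have e : ∀ m ∈ Finset.univ, (PB (i, m) - PA (i, m)) • v = h i • v := fun m _ => by
      rw [hlen (i, m)]
    rw [Finset.sum_congr rfl e, Finset.sum_const, Finset.card_univ, Fintype.card_fin,
      ← Nat.cast_smul_eq_nsmul ℝ, smul_smul, hMh i]
  have hinner_len : ∀ i : ι, ∑ m : Fin M, (PB (i, m) - PA (i, m)) = B i - A i := by
    intro i
    have e : ∀ m ∈ Finset.univ, PB (i, m) - PA (i, m) = h i := fun m _ => hlen (i, m)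
    rw [Finset.sum_congr rfl e, Finset.sum_const, Finset.card_univ,
      Fintype.card_fin, nsmul_eq_mul, hMh i]
  have hcoverP : (⋃ p : ι × Fin M, Set.Icc (PA p) (PB p)) = Set.Icc (0:ℝ) 1 := by
    rw [Set.iUnion_prod' (fun p => Set.Icc (PA p) (PB p))]
    have e : ∀ i : ι, (⋃ m : Fin M, Set.Icc (PA (i, m)) (PB (i, m))) = Set.Icc (A i) (B i) := by
      intro i
      have := iUnion_pieces (A i) (h i) (hh0 i) M hM0
      simp only [hPA, hPB]
      rw [this, show A i + (M:ℝ) * h i = B i by rw [hMh i]; ring]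
    rw [Set.iUnion_congr e]
    exact hgood.cover
  have hdisjP : Pairwise fun p q : ι × Fin M =>
      Set.Ioo (PA p) (PB p) ∩ Set.Ioo (PA q) (PB q) = ∅ := by
    intro p q hpq
    by_cases hi : p.1 = q.1
    · have hm : p.2 ≠ q.2 := fun hm2 => hpq (Prod.ext hi hm2)
      simp only [hPA, hPB, ← hi]
      exact pieces_disj (A p.1) (h p.1) (hh0 p.1) hm
    · have h1 : Set.Ioo (PA p) (PB p) ⊆ Set.Ioo (A p.1) (B p.1) :=
        Set.Ioo_subset_Ioo (hPmem p).1 (hPmem p).2.2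
      have h2 : Set.Ioo (PA q) (PB q) ⊆ Set.Ioo (A q.1) (B q.1) :=
        Set.Ioo_subset_Ioo (hPmem q).1 (hPmem q).2.2
      exact Set.eq_empty_of_subset_empty
        ((Set.inter_subset_inter h1 h2).trans (Set.subset_empty_iff.2 (hgood.disj hi)))
  have goodA : GoodPart PA PB TA δ := by
    refine ⟨fun p => (hPmem p).2.1, fun p => hgood.tag_mem p.1, hcoverP, hdisjP, fun p => ?_⟩
    exact ⟨le_trans (hgood.sub p.1).1 (hPmem p).1, le_trans (hPmem p).2.2 (hgood.sub p.1).2⟩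
  have goodB : GoodPart PA PB TB δ := by
    refine ⟨fun p => (hPmem p).2.1, fun p => ?_, hcoverP, hdisjP, fun p => ?_⟩
    · simp only [hTB]
      by_cases hp : p.1 ∈ S
      · simp only [hp, if_true]; exact hTmem _ (htg1 p)
      · simp only [hp, if_false]; exact hgood.tag_mem p.1
    · simp only [hTB]
      by_cases hp : p.1 ∈ S
      · simp only [hp, if_true]; exact htgs p
      · simp only [hp, if_false]
        exact ⟨le_trans (hgood.sub p.1).1 (hPmem p).1, le_trans (hPmem p).2.2 (hgood.sub p.1).2⟩
  have hA := good_apply goodA H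
  have hB := good_apply goodB H
  set SSA : X := ∑ p : ι × Fin M, (PB p - PA p) • φ (TA p) with hSA
  set SSB : X := ∑ p : ι × Fin M, (PB p - PA p) • φ (TB p) with hSB
  set R : X := ∑ p ∈ Finset.univ.filter (fun p : ι × Fin M => p.1 ∈ S),
      (PB p - PA p) • φ (tg p) with hR
  have claim1 : ∑ p ∈ Finset.univ.filter (fun p : ι × Fin M => p.1 ∈ S),
      (PB p - PA p) • φ (T p.1) = ∑ i ∈ S, (B i - A i) • φ (T i) := by
    rw [Finset.sum_filter, Fintype.sum_prod_type]
    have e : ∀ i : ι, (∑ m : Fin M, if (i, m).1 ∈ S then (PB (i, m) - PA (i, m)) • φ (T (i, m).1) else 0)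
        = if i ∈ S then (B i - A i) • φ (T i) else 0 := by
      intro i
      by_cases hi : i ∈ S
      · simp only [hi, if_true]
        exact hinner i (φ (T i))
      · simp only [hi, if_false, Finset.sum_const_zero]
    rw [Finset.sum_congr rfl (fun i _ => e i), Finset.sum_ite_mem, Finset.univ_inter]
  have claim2 : ∑ p ∈ Finset.univ.filter (fun p : ι × Fin M => p.1 ∈ S),
      (PB p - PA p) = ∑ i ∈ S, (B i - A i) := by
    rw [Finset.sum_filter, Fintype.sum_prod_type]
    have e : ∀ i : ι, (∑ m : Fin M, if (i, m).1 ∈ S then (PB (i, m) - PA (i, m)) else 0)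
        = if i ∈ S then (B i - A i) else 0 := by
      intro i
      by_cases hi : i ∈ S
      · simp only [hi, if_true]
        exact hinner_len i
      · simp only [hi, if_false, Finset.sum_const_zero]
    rw [Finset.sum_congr rfl (fun i _ => e i), Finset.sum_ite_mem, Finset.univ_inter]
  have hdiff : SSA - SSB = (∑ i ∈ S, (B i - A i) • φ (T i)) - R := by
    rw [hSA, hSB, ← Finset.sum_sub_distrib]
    have e : ∀ p : ι × Fin M, (PB p - PA p) • φ (TA p) - (PB p - PA p) • φ (TB p)
        = if p.1 ∈ S then ((PB p - PA p) • φ (T p.1) - (PB p - PA p) • φ (tg p)) else 0 := by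
      intro p
      by_cases hp : p.1 ∈ S <;> simp [hTA, hTB, hp]
    rw [Finset.sum_congr rfl (fun p _ => e p), ← Finset.sum_filter, Finset.sum_sub_distrib,
      claim1, hR]
  have hRbound : ‖R‖ ≤ Mb * (ε / (Mb + 1)) := by
    have h1 : ‖R‖ ≤ ∑ p ∈ Finset.univ.filter (fun p : ι × Fin M => p.1 ∈ S),
        (PB p - PA p) * Mb := by
      refine le_trans (norm_sum_le _ _) (Finset.sum_le_sum fun p _ => ?_)
      rw [norm_smul, Real.norm_eq_abs, abs_of_nonneg (by rw [hlen]; exact hh0 p.1)]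
      exact mul_le_mul_of_nonneg_left (hMbB _ (htg1 p)) (by rw [hlen]; exact hh0 p.1)
    rw [← Finset.sum_mul, claim2] at h1
    have h2 : (∑ i ∈ S, (B i - A i)) * Mb ≤ (ε / (Mb + 1)) * Mb := by
      apply mul_le_mul_of_nonneg_right hS hMb0
    linarith
  have hfin : ∑ i ∈ S, (B i - A i) • φ (T i) = (SSA - SSB) + R := by
    rw [hdiff]; abel
  rw [hfin]
  have hAB : ‖SSA - SSB‖ ≤ 2 * ε := by
    have : SSA - SSB = (w - SSB) - (w - SSA) := by abel
    rw [this]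
    refine le_trans (norm_sub_le _ _) ?_
    linarith
  have hMbε : Mb * (ε / (Mb + 1)) ≤ ε := by
    rw [mul_div_assoc'] -- Mb * ε / (Mb+1)
    rw [div_le_iff₀ (by linarith : (0:ℝ) < Mb + 1)]
    nlinarith
  calc ‖(SSA - SSB) + R‖ ≤ ‖SSA - SSB‖ + ‖R‖ := norm_add_le _ _
    _ ≤ 2 * ε + Mb * (ε / (Mb + 1)) := by linarith
    _ ≤ 3 * ε := by linarith

end McShaneAux

namespace McShaneAux

variable {X : Type*} [NormedAddCommGroup X] [NormedSpace ℝ X]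

lemma main_cauchy {φ : ℝ → X} {w : X} (hw : HasMcShaneIntegral φ w)
    (E : Set ℝ) (hE : MeasurableSet E) (hE1 : E ⊆ Set.Icc (0:ℝ) 1)
    {ε : ℝ} (hε : 0 < ε) :
    ∃ δ' : ℝ → ℝ, (∀ r ∈ Set.Icc (0:ℝ) 1, 0 < δ' r) ∧
      ∀ (n : ℕ) (a b t : Fin n → ℝ), IsMcShanePartition n a b t → SubordinateTo n a b t δ' →
      ∀ (m : ℕ) (c d s : Fin m → ℝ), IsMcShanePartition m c d s → SubordinateTo m c d s δ' →
        ‖(∑ i, (b i - a i) • (E.indicator φ) (t i)) -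
         (∑ j, (d j - c j) • (E.indicator φ) (s j))‖ ≤ 8 * ε := by
  classical
  obtain ⟨δ, hδpos, Hδ⟩ := hw ε hε
  obtain ⟨η, hη, Hsmall⟩ := small_sum hε hδpos Hδ
  -- measure-theoretic approximation of E
  have hEfin : volume E ≠ ⊤ := by
    refine ne_of_lt (lt_of_le_of_lt (measure_mono hE1) ?_)
    rw [Real.volume_Icc]
    exact ENNReal.ofReal_lt_top
  have hhalf : (0:ℝ) < η/2 := by positivity
  obtain ⟨U, hEU, hUopen, hUlt⟩ := exists_isOpen_lt_of_lt E (volume E + ENNReal.ofReal (η/2))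
    (by
      apply ENNReal.lt_add_right hEfin
      simp [ENNReal.ofReal_pos.2 hhalf, ne_of_gt (ENNReal.ofReal_pos.2 hhalf)])
  have hUdiff : volume (U \ E) < ENNReal.ofReal (η/2) := by
    apply measure_diff_lt_of_lt_add hE.nullMeasurableSet hEU hEfin hUlt
  obtain ⟨K, hKE, hKcpt, hKlt⟩ := hE.exists_isCompact_lt_add hEfin
    (ε := ENNReal.ofReal (η/2)) (by simp [ne_of_gt (ENNReal.ofReal_pos.2 hhalf)])
  have hKfin : volume K ≠ ⊤ := ne_of_lt (lt_of_le_of_lt (measure_mono hKE) (lt_of_le_of_ne le_top hEfin))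
  have hKdiff : volume (E \ K) < ENNReal.ofReal (η/2) :=
    measure_diff_lt_of_lt_add hKcpt.isClosed.measurableSet.nullMeasurableSet hKE hKfin hKlt
  set U' : Set ℝ := U ∩ Set.Ioo (-1) 2 with hU'
  have hU'open : IsOpen U' := hUopen.inter isOpen_Ioo
  have hEU' : E ⊆ U' := fun x hx =>
    ⟨hEU hx, ⟨by linarith [(hE1 hx).1], by linarith [(hE1 hx).2]⟩⟩
  have hU'c : IsClosed U'ᶜ := hU'open.isClosed_compl
  have hU'ne : (U'ᶜ).Nonempty := by
    refine ⟨2, fun hc => ?_⟩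
    exact (by norm_num : ¬((2:ℝ) < 2)) hc.2.2
  set W : Set ℝ := U' \ K with hWdef
  have hW : volume W ≤ ENNReal.ofReal η := by
    have hsub : W ⊆ (U \ E) ∪ (E \ K) := by
      rintro x ⟨hx1, hx2⟩
      by_cases hxE : x ∈ E
      · exact Or.inr ⟨hxE, hx2⟩
      · exact Or.inl ⟨hx1.1, hxE⟩
    refine le_trans (measure_mono hsub) (le_trans (measure_union_le _ _) ?_)
    have : ENNReal.ofReal (η/2) + ENNReal.ofReal (η/2) = ENNReal.ofReal η := by
      rw [← ENNReal.ofReal_add (by positivity) (by positivity)]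
      norm_num
    rw [← this]
    exact add_le_add hUdiff.le hKdiff.le
  -- the gauge
  set δ' : ℝ → ℝ := fun r => if r ∈ E then min (δ r) (Metric.infDist r U'ᶜ / 2)
    else if K.Nonempty then min (δ r) (Metric.infDist r K / 2) else δ r with hδ'def
  have hδ'δ : ∀ r, δ' r ≤ δ r := by
    intro r
    simp only [hδ'def]
    split_ifs
    · exact min_le_left _ _
    · exact min_le_left _ _
    · exact le_refl _
  have hδ'pos : ∀ r ∈ Set.Icc (0:ℝ) 1, 0 < δ' r := by
    intro r hr
    simp only [hδ'def]
    split_ifs with h1 h2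
    · refine lt_min (hδpos r hr) (half_pos ?_)
      exact (hU'c.notMem_iff_infDist_pos hU'ne).1 (Set.notMem_compl_iff.2 (hEU' h1))
    · refine lt_min (hδpos r hr) (half_pos ?_)
      exact (hKcpt.isClosed.notMem_iff_infDist_pos h2).1 (fun hc => h1 (hKE hc))
    · exact hδpos r hr
  have G1 : ∀ r ∈ E, ∀ x : ℝ, |x - r| ≤ δ' r → x ∈ U' := by
    intro r hr x hx
    have hpos : 0 < Metric.infDist r U'ᶜ :=
      (hU'c.notMem_iff_infDist_pos hU'ne).1 (Set.notMem_compl_iff.2 (hEU' hr))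
    have hle : δ' r ≤ Metric.infDist r U'ᶜ / 2 := by
      simp only [hδ'def]; rw [if_pos hr]; exact min_le_right _ _
    by_contra hxc
    have := Metric.infDist_le_dist_of_mem (x := r) (Set.mem_compl hxc)
    rw [Real.dist_eq, abs_sub_comm] at this
    linarith
  have G2 : ∀ r, r ∉ E → ∀ x : ℝ, |x - r| ≤ δ' r → x ∉ K := by
    intro r hr x hx hxK
    have hKne : K.Nonempty := ⟨x, hxK⟩
    have hrK : r ∉ K := fun hc => hr (hKE hc)
    have hpos : 0 < Metric.infDist r K :=
      (hKcpt.isClosed.notMem_iff_infDist_pos hKne).1 hrK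
    have hle : δ' r ≤ Metric.infDist r K / 2 := by
      simp only [hδ'def]; rw [if_neg hr, if_pos hKne]; exact min_le_right _ _
    have := Metric.infDist_le_dist_of_mem (x := r) hxK
    rw [Real.dist_eq, abs_sub_comm] at this
    linarith
  refine ⟨δ', hδ'pos, ?_⟩
  intro n a b t hP hsubP m c d s hQ hsubQ
  have gP : GoodPart a b t δ' := ⟨hP.1, hP.2.1, hP.2.2.1, hP.2.2.2, hsubP⟩
  have gQ : GoodPart c d s δ' := ⟨hQ.1, hQ.2.1, hQ.2.2.1, hQ.2.2.2, hsubQ⟩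
  -- the common refinement
  set KA : Fin n × Fin m → ℝ := fun p => cA (a p.1) (b p.1) (c p.2) with hKA
  set KB : Fin n × Fin m → ℝ := fun p => cB (a p.1) (b p.1) (c p.2) (d p.2) with hKB
  have kab : ∀ p, KA p ≤ KB p := fun p => by
    simp only [hKA, hKB]; exact cA_le_cB
  have ksub1 : ∀ p, Set.Icc (KA p) (KB p) ⊆ Set.Icc (a p.1) (b p.1) := fun p => by
    simp only [hKA, hKB]; exact clamp_Icc_subset (gP.le p.1)
  have ksub2 : ∀ p, max (a p.1) (c p.2) ≤ min (b p.1) (d p.2) →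
      Set.Icc (KA p) (KB p) ⊆ Set.Icc (c p.2) (d p.2) := fun p hne => by
    simp only [hKA, hKB]; exact clamp_Icc_subset' hne (gP.le p.1)
  have kIoo : ∀ p, Set.Ioo (KA p) (KB p) ⊆ Set.Ioo (a p.1) (b p.1) ∩ Set.Ioo (c p.2) (d p.2) :=
    fun p => by simp only [hKA, hKB]; exact clamp_Ioo_subset (gP.le p.1) (gQ.le p.2)
  have kdisj : Pairwise fun p q : Fin n × Fin m =>
      Set.Ioo (KA p) (KB p) ∩ Set.Ioo (KA q) (KB q) = ∅ := by
    intro p q hpq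
    by_cases hi : p.1 = q.1
    · have hj : p.2 ≠ q.2 := fun hc => hpq (Prod.ext hi hc)
      refine Set.eq_empty_of_subset_empty ?_
      refine le_trans (Set.inter_subset_inter
        ((kIoo p).trans Set.inter_subset_right)
        ((kIoo q).trans Set.inter_subset_right)) ?_
      exact (gQ.disj hj).le
    · refine Set.eq_empty_of_subset_empty ?_
      refine le_trans (Set.inter_subset_inter
        ((kIoo p).trans Set.inter_subset_left)
        ((kIoo q).trans Set.inter_subset_left)) ?_
      exact (gP.disj hi).le
  have kmemIcc : ∀ p, Set.Icc (KA p) (KB p) ⊆ Set.Icc (0:ℝ) 1 :=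
    fun p => (ksub1 p).trans (good_interval_subset gP p.1)
  have kcover : (⋃ p : Fin n × Fin m, Set.Icc (KA p) (KB p)) = Set.Icc (0:ℝ) 1 := by
    apply Set.Subset.antisymm
    · exact Set.iUnion_subset fun p => kmemIcc p
    · intro x hx
      have hx1 : x ∈ ⋃ i, Set.Icc (a i) (b i) := by rw [gP.cover]; exact hx
      have hx2 : x ∈ ⋃ j, Set.Icc (c j) (d j) := by rw [gQ.cover]; exact hx
      obtain ⟨i, hi⟩ := Set.mem_iUnion.1 hx1
      obtain ⟨j, hj⟩ := Set.mem_iUnion.1 hx2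
      obtain ⟨hne, hmem⟩ := mem_clamp ⟨hi, hj⟩
      exact Set.mem_iUnion.2 ⟨(i, j), by simp only [hKA, hKB]; exact hmem⟩
  have klen_i : ∀ i, ∑ j : Fin m, (KB (i, j) - KA (i, j)) = b i - a i := by
    intro i
    have hun : (⋃ j ∈ (Finset.univ : Finset (Fin m)), Set.Icc (KA (i, j)) (KB (i, j)))
        = Set.Icc (a i) (b i) := by
      apply Set.Subset.antisymm
      · exact Set.iUnion₂_subset fun j _ => ksub1 (i, j)
      · intro x hx
        have hx01 : x ∈ Set.Icc (0:ℝ) 1 := good_interval_subset gP i hx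
        have hx2 : x ∈ ⋃ j, Set.Icc (c j) (d j) := by rw [gQ.cover]; exact hx01
        obtain ⟨j, hj⟩ := Set.mem_iUnion.1 hx2
        obtain ⟨hne, hmem⟩ := mem_clamp ⟨hx, hj⟩
        exact Set.mem_iUnion₂.2 ⟨j, Finset.mem_univ j, by simp only [hKA, hKB]; exact hmem⟩
    have h1 := measure_biUnion_Icc Finset.univ (fun j => KA (i, j)) (fun j => KB (i, j))
      (fun j _ => kab (i, j))
      (fun j _ j' _ hjj => kdisj (fun hc => hjj (Prod.ext_iff.1 hc).2))
    rw [hun, Real.volume_Icc] at h1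
    have hge : 0 ≤ ∑ j ∈ Finset.univ, (KB (i, j) - KA (i, j)) :=
      Finset.sum_nonneg fun j _ => sub_nonneg.2 (kab (i, j))
    exact ((ENNReal.ofReal_eq_ofReal_iff (sub_nonneg.2 (gP.le i)) hge).1 h1).symm
  have klen_j : ∀ j, ∑ i : Fin n, (KB (i, j) - KA (i, j)) = d j - c j := by
    intro j
    set KA' : Fin n × Fin m → ℝ := fun p => cA (c p.2) (d p.2) (a p.1) with hKA'
    set KB' : Fin n × Fin m → ℝ := fun p => cB (c p.2) (d p.2) (a p.1) (b p.1) with hKB'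
    have hswap : ∀ p, KB p - KA p = KB' p - KA' p := fun p => by
      simp only [hKA, hKB, hKA', hKB']; exact clamp_len_symm (gP.le p.1) (gQ.le p.2)
    have kab' : ∀ p, KA' p ≤ KB' p := fun p => by simp only [hKA', hKB']; exact cA_le_cB
    have ksub1' : ∀ p : Fin n × Fin m, Set.Icc (KA' p) (KB' p) ⊆ Set.Icc (c p.2) (d p.2) :=
      fun p => by simp only [hKA', hKB']; exact clamp_Icc_subset (gQ.le p.2)
    have kIoo' : ∀ p : Fin n × Fin m,
        Set.Ioo (KA' p) (KB' p) ⊆ Set.Ioo (c p.2) (d p.2) ∩ Set.Ioo (a p.1) (b p.1) :=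
      fun p => by simp only [hKA', hKB']; exact clamp_Ioo_subset (gQ.le p.2) (gP.le p.1)
    have hun : (⋃ i ∈ (Finset.univ : Finset (Fin n)), Set.Icc (KA' (i, j)) (KB' (i, j)))
        = Set.Icc (c j) (d j) := by
      apply Set.Subset.antisymm
      · exact Set.iUnion₂_subset fun i _ => ksub1' (i, j)
      · intro x hx
        have hx01 : x ∈ Set.Icc (0:ℝ) 1 := good_interval_subset gQ j hx
        have hx2 : x ∈ ⋃ i, Set.Icc (a i) (b i) := by rw [gP.cover]; exact hx01
        obtain ⟨i, hi⟩ := Set.mem_iUnion.1 hx2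
        obtain ⟨hne, hmem⟩ := mem_clamp ⟨hx, hi⟩
        exact Set.mem_iUnion₂.2 ⟨i, Finset.mem_univ i, by simp only [hKA', hKB']; exact hmem⟩
    have h1 := measure_biUnion_Icc Finset.univ (fun i => KA' (i, j)) (fun i => KB' (i, j))
      (fun i _ => kab' (i, j))
      (fun i _ i' _ hii => by
        refine Set.eq_empty_of_subset_empty ?_
        refine le_trans (Set.inter_subset_inter
          ((kIoo' (i, j)).trans Set.inter_subset_right)
          ((kIoo' (i', j)).trans Set.inter_subset_right)) ?_
        exact (gP.disj hii).le)
    rw [hun, Real.volume_Icc] at h1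
    have hge : 0 ≤ ∑ i ∈ Finset.univ, (KB' (i, j) - KA' (i, j)) :=
      Finset.sum_nonneg fun i _ => sub_nonneg.2 (kab' (i, j))
    have h2 := ((ENNReal.ofReal_eq_ofReal_iff (sub_nonneg.2 (gQ.le j)) hge).1 h1).symm
    calc ∑ i : Fin n, (KB (i, j) - KA (i, j)) = ∑ i : Fin n, (KB' (i, j) - KA' (i, j)) :=
          Finset.sum_congr rfl fun i _ => hswap (i, j)
      _ = d j - c j := h2
  -- tags of the refinement
  set nep : Fin n × Fin m → Prop := fun p => max (a p.1) (c p.2) ≤ min (b p.1) (d p.2) with hnep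
  set m1 : Fin n × Fin m → ℝ :=
    fun p => if nep p then (if t p.1 ∈ E then t p.1 else s p.2) else t p.1 with hm1
  set m2 : Fin n × Fin m → ℝ :=
    fun p => if nep p then (if s p.2 ∈ E then s p.2
      else (if t p.1 ∈ E then t p.1 else s p.2)) else t p.1 with hm2
  have hm1ts : ∀ p, m1 p = t p.1 ∨ (m1 p = s p.2 ∧ nep p) := by
    intro p
    simp only [hm1]
    split_ifs with h1 h2
    · exact Or.inl rfl
    · exact Or.inr ⟨rfl, h1⟩
    · exact Or.inl rfl
  have hm2ts : ∀ p, m2 p = t p.1 ∨ (m2 p = s p.2 ∧ nep p) := by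
    intro p
    simp only [hm2]
    split_ifs with h1 h2 h3
    · exact Or.inr ⟨rfl, h1⟩
    · exact Or.inl rfl
    · exact Or.inr ⟨rfl, h1⟩
    · exact Or.inl rfl
  have subT : ∀ p : Fin n × Fin m,
      t p.1 - δ (t p.1) ≤ KA p ∧ KB p ≤ t p.1 + δ (t p.1) := by
    intro p
    have h1 := (ksub1 p) ⟨le_refl _, kab p⟩
    have h2 := (ksub1 p) ⟨kab p, le_refl _⟩
    have h3 := hsubP p.1
    have h4 := hδ'δ (t p.1)
    exact ⟨by linarith [h1.1, h3.1], by linarith [h2.2, h3.2]⟩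
  have subS : ∀ p : Fin n × Fin m, nep p →
      s p.2 - δ (s p.2) ≤ KA p ∧ KB p ≤ s p.2 + δ (s p.2) := by
    intro p hne
    have h1 := (ksub2 p hne) ⟨le_refl _, kab p⟩
    have h2 := (ksub2 p hne) ⟨kab p, le_refl _⟩
    have h3 := hsubQ p.2
    have h4 := hδ'δ (s p.2)
    exact ⟨by linarith [h1.1, h3.1], by linarith [h2.2, h3.2]⟩
  have good1 : GoodPart KA KB m1 δ := by
    refine ⟨kab, fun p => ?_, kcover, kdisj, fun p => ?_⟩
    · rcases hm1ts p with h | ⟨h, _⟩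
      · rw [h]; exact gP.tag_mem p.1
      · rw [h]; exact gQ.tag_mem p.2
    · rcases hm1ts p with h | ⟨h, hne⟩
      · rw [h]; exact subT p
      · rw [h]; exact subS p hne
  have good2 : GoodPart KA KB m2 δ := by
    refine ⟨kab, fun p => ?_, kcover, kdisj, fun p => ?_⟩
    · rcases hm2ts p with h | ⟨h, _⟩
      · rw [h]; exact gP.tag_mem p.1
      · rw [h]; exact gQ.tag_mem p.2
    · rcases hm2ts p with h | ⟨h, hne⟩
      · rw [h]; exact subT p
      · rw [h]; exact subS p hne
  -- rewriting the two Riemann sums over the refinement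
  have hSP : ∑ i, (b i - a i) • (E.indicator φ) (t i)
      = ∑ p : Fin n × Fin m, (KB p - KA p) • (E.indicator φ) (t p.1) := by
    rw [Fintype.sum_prod_type]
    refine Finset.sum_congr rfl fun i _ => ?_
    rw [← klen_i i, Finset.sum_smul]
  have hSQ : ∑ j, (d j - c j) • (E.indicator φ) (s j)
      = ∑ p : Fin n × Fin m, (KB p - KA p) • (E.indicator φ) (s p.2) := by
    rw [Fintype.sum_prod_type_right]
    refine Finset.sum_congr rfl fun j _ => ?_
    rw [← klen_j j, Finset.sum_smul]
  -- the exceptional families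
  have hWsub1 : ∀ p : Fin n × Fin m, t p.1 ∈ E → s p.2 ∉ E → nep p →
      Set.Icc (KA p) (KB p) ⊆ W := by
    intro p h1 h2 hne x hx
    have hxab := ksub1 p hx
    have hxcd := ksub2 p hne hx
    have h3 := hsubP p.1
    have h4 := hsubQ p.2
    constructor
    · refine G1 _ h1 x ?_
      rw [abs_le]
      exact ⟨by linarith [hxab.1, h3.1], by linarith [hxab.2, h3.2]⟩
    · refine G2 _ h2 x ?_
      rw [abs_le]
      exact ⟨by linarith [hxcd.1, h4.1], by linarith [hxcd.2, h4.2]⟩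
  have hWsub2 : ∀ p : Fin n × Fin m, t p.1 ∉ E → s p.2 ∈ E → nep p →
      Set.Icc (KA p) (KB p) ⊆ W := by
    intro p h1 h2 hne x hx
    have hxab := ksub1 p hx
    have hxcd := ksub2 p hne hx
    have h3 := hsubP p.1
    have h4 := hsubQ p.2
    constructor
    · refine G1 _ h2 x ?_
      rw [abs_le]
      exact ⟨by linarith [hxcd.1, h4.1], by linarith [hxcd.2, h4.2]⟩
    · refine G2 _ h1 x ?_
      rw [abs_le]
      exact ⟨by linarith [hxab.1, h3.1], by linarith [hxab.2, h3.2]⟩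
  have hsmall_family : ∀ S' : Finset (Fin n × Fin m),
      (∀ p ∈ S', Set.Icc (KA p) (KB p) ⊆ W) → ∑ p ∈ S', (KB p - KA p) ≤ η := by
    intro S' hsub
    have h1 := measure_biUnion_Icc S' KA KB (fun p _ => kab p)
      (fun p _ q _ hpq => kdisj hpq)
    have h2 : volume (⋃ p ∈ S', Set.Icc (KA p) (KB p)) ≤ volume W :=
      measure_mono (Set.iUnion₂_subset hsub)
    rw [h1] at h2
    exact (ENNReal.ofReal_le_ofReal_iff hη.le).1 (le_trans h2 hW)
  -- the pointwise identity
  have key : ∀ p : Fin n × Fin m,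
      (KB p - KA p) • (E.indicator φ) (t p.1) - (KB p - KA p) • (E.indicator φ) (s p.2)
        = (((KB p - KA p) • φ (m1 p) - (KB p - KA p) • φ (m2 p))
          + (if t p.1 ∈ E ∧ s p.2 ∉ E ∧ nep p then (KB p - KA p) • φ (m1 p) else 0))
          - (if t p.1 ∉ E ∧ s p.2 ∈ E ∧ nep p then (KB p - KA p) • φ (m2 p) else 0) := by
    intro p
    by_cases hne : nep p
    · by_cases h1 : t p.1 ∈ E <;> by_cases h2 : s p.2 ∈ E <;>
        simp [hm1, hm2, hne, h1, h2, Set.indicator_of_mem, Set.indicator_of_notMem]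
    · have hz : KB p - KA p = 0 := by
        simp only [hKA, hKB]
        rw [← clamp_of_not_ne hne (gP.le p.1) (gQ.le p.2)]
        ring
      simp [hz, hne]
  have hident : (∑ i, (b i - a i) • (E.indicator φ) (t i))
        - (∑ j, (d j - c j) • (E.indicator φ) (s j))
      = (((∑ p : Fin n × Fin m, (KB p - KA p) • φ (m1 p))
          - (∑ p : Fin n × Fin m, (KB p - KA p) • φ (m2 p)))
        + (∑ p ∈ Finset.univ.filter (fun p : Fin n × Fin m => t p.1 ∈ E ∧ s p.2 ∉ E ∧ nep p),
            (KB p - KA p) • φ (m1 p)))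
        - (∑ p ∈ Finset.univ.filter (fun p : Fin n × Fin m => t p.1 ∉ E ∧ s p.2 ∈ E ∧ nep p),
            (KB p - KA p) • φ (m2 p)) := by
    rw [hSP, hSQ, ← Finset.sum_sub_distrib, Finset.sum_congr rfl (fun p _ => key p),
      Finset.sum_sub_distrib, Finset.sum_add_distrib, ← Finset.sum_sub_distrib,
      Finset.sum_filter, Finset.sum_filter]
  -- bounds
  have hD1 := good_apply good1 Hδ
  have hD2 := good_apply good2 Hδ
  have hR1 : ‖∑ p ∈ Finset.univ.filter (fun p : Fin n × Fin m => t p.1 ∈ E ∧ s p.2 ∉ E ∧ nep p),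
      (KB p - KA p) • φ (m1 p)‖ ≤ 3 * ε := by
    refine Hsmall KA KB m1 good1 _ (hsmall_family _ ?_)
    intro p hp
    rw [Finset.mem_filter] at hp
    exact hWsub1 p hp.2.1 hp.2.2.1 hp.2.2.2
  have hR2 : ‖∑ p ∈ Finset.univ.filter (fun p : Fin n × Fin m => t p.1 ∉ E ∧ s p.2 ∈ E ∧ nep p),
      (KB p - KA p) • φ (m2 p)‖ ≤ 3 * ε := by
    refine Hsmall KA KB m2 good2 _ (hsmall_family _ ?_)
    intro p hp
    rw [Finset.mem_filter] at hp
    exact hWsub2 p hp.2.1 hp.2.2.1 hp.2.2.2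
  rw [hident]
  have hDD : ‖(∑ p : Fin n × Fin m, (KB p - KA p) • φ (m1 p))
      - (∑ p : Fin n × Fin m, (KB p - KA p) • φ (m2 p))‖ ≤ 2 * ε := by
    have e : (∑ p : Fin n × Fin m, (KB p - KA p) • φ (m1 p))
        - (∑ p : Fin n × Fin m, (KB p - KA p) • φ (m2 p))
        = (w - (∑ p : Fin n × Fin m, (KB p - KA p) • φ (m2 p)))
          - (w - (∑ p : Fin n × Fin m, (KB p - KA p) • φ (m1 p))) := by abel
    rw [e]
    refine le_trans (norm_sub_le _ _) ?_
    linarith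
  refine le_trans (norm_sub_le _ _) (le_trans (add_le_add (norm_add_le _ _) (le_refl _)) ?_)
  linarith

end McShaneAux


end

/-- 2E: if `φ : [0,1] → X` is McShane integrable and `E ⊆ [0,1]` is Lebesgue measurable,
then `φ·χ(E)` is McShane integrable. -/
theorem stmt3 {X : Type*} [NormedAddCommGroup X] [NormedSpace ℝ X] [CompleteSpace X]
    (φ : ℝ → X) (w : X) (hw : HasMcShaneIntegral φ w)
    (E : Set ℝ) (hE : MeasurableSet E) (hE1 : E ⊆ Set.Icc (0:ℝ) 1) :
    ∃ w' : X, HasMcShaneIntegral (E.indicator φ) w' := by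
  classical
  open McShaneAux in
  have hmc := fun k : ℕ => McShaneAux.main_cauchy hw E hE hE1
    (by positivity : (0:ℝ) < 1/((k:ℝ)+1))
  choose δs hδspos hδscauchy using hmc
  set Δ : ℕ → ℝ → ℝ := fun k r => (Finset.range (k+1)).inf' (by simp) (fun j => δs j r)
    with hΔ
  have hΔle : ∀ j k, j ≤ k → ∀ r, Δ k r ≤ δs j r := by
    intro j k hjk r
    simp only [hΔ]
    exact Finset.inf'_le _ (Finset.mem_range.2 (by omega))
  have hΔpos : ∀ k, ∀ r ∈ Set.Icc (0:ℝ) 1, 0 < Δ k r := by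
    intro k r hr
    simp only [hΔ]
    rw [Finset.lt_inf'_iff]
    exact fun j _ => hδspos j r hr
  have sub_mono : ∀ (n : ℕ) (a b t : Fin n → ℝ) (δ1 δ2 : ℝ → ℝ),
      (∀ r, δ1 r ≤ δ2 r) → SubordinateTo n a b t δ1 → SubordinateTo n a b t δ2 := by
    intro n a b t δ1 δ2 hle hs i
    exact ⟨by linarith [(hs i).1, hle (t i)], by linarith [(hs i).2, hle (t i)]⟩
  have hparts := fun k : ℕ => McShaneAux.exists_fine (Δ k) (hΔpos k)
  choose ns as bs ts hparts1 hparts2 using hparts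
  set x : ℕ → X := fun k => ∑ i, (bs k i - as k i) • (E.indicator φ) (ts k i) with hx
  have hclose : ∀ j k l : ℕ, j ≤ k → j ≤ l → ‖x k - x l‖ ≤ 8 * (1/((j:ℝ)+1)) := by
    intro j k l hjk hjl
    exact hδscauchy j (ns k) (as k) (bs k) (ts k) (hparts1 k)
      (sub_mono _ _ _ _ _ _ (hΔle j k hjk) (hparts2 k))
      (ns l) (as l) (bs l) (ts l) (hparts1 l)
      (sub_mono _ _ _ _ _ _ (hΔle j l hjl) (hparts2 l))
  have hcauchy : CauchySeq x := by
    refine cauchySeq_of_le_tendsto_0 (fun j => 8 * (1/((j:ℝ)+1))) ?_ ?_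
    · intro k l N hk hl
      rw [dist_eq_norm]
      exact hclose N k l hk hl
    · have h1 : Tendsto (fun j : ℕ => 1/((j:ℝ)+1)) atTop (nhds 0) :=
        tendsto_one_div_add_atTop_nhds_zero_nat
      have := h1.const_mul (8:ℝ)
      simpa using this
  obtain ⟨w', hw'⟩ := cauchySeq_tendsto_of_complete hcauchy
  refine ⟨w', ?_⟩
  intro ε hε
  obtain ⟨k, hk⟩ := exists_nat_ge (8/ε)
  have hkε : 8 * (1/((k:ℝ)+1)) ≤ ε := by
    have h0 : (0:ℝ) < (k:ℝ) + 1 := by positivity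
    rw [mul_one_div, div_le_iff₀ h0]
    have h2 : 8/ε ≤ (k:ℝ) := hk
    rw [div_le_iff₀ hε] at h2
    nlinarith
  refine ⟨δs k, hδspos k, ?_⟩
  intro n a b t hpart hsub
  have hbound : ∀ l, k ≤ l →
      ‖(∑ i, (b i - a i) • (E.indicator φ) (t i)) - x l‖ ≤ 8 * (1/((k:ℝ)+1)) := by
    intro l hl
    exact hδscauchy k n a b t hpart hsub (ns l) (as l) (bs l) (ts l) (hparts1 l)
      (sub_mono _ _ _ _ _ _ (hΔle k l hl) (hparts2 l))
  have hlim : Tendsto (fun l => ‖(∑ i, (b i - a i) • (E.indicator φ) (t i)) - x l‖)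
      atTop (nhds ‖(∑ i, (b i - a i) • (E.indicator φ) (t i)) - w'‖) :=
    (tendsto_const_nhds.sub hw').norm
  have hfinal : ‖(∑ i, (b i - a i) • (E.indicator φ) (t i)) - w'‖ ≤ 8 * (1/((k:ℝ)+1)) :=
    le_of_tendsto hlim (Filter.eventually_atTop.2 ⟨k, hbound⟩)
  rw [norm_sub_rev] at hfinal
  exact le_trans hfinal hkε
end

section
/- Let X be a real Banach space. If φ : [0,1] → X is McShane integrable with McShane integral w, then ‖w‖ ≤ ∫̲ ‖φ(t)‖ μ(dt), the lower Lebesgue integral of the function t ↦ ‖φ(t)‖ on [0,1]. -/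
open MeasureTheory Filter Set

set_option maxHeartbeats 1000000 in
/-- Measurability of the gauge-infimum minorant. -/
lemma stmt4_meas (G δ : ℝ → ℝ) (hG : ∀ s', 0 ≤ G s') :
    Measurable (fun u => sInf (G '' {s' | s' ∈ Set.Icc (0:ℝ) 1 ∧ |u - s'| < δ s'})) := by
  apply measurable_of_Iio
  intro c
  set D : Set ℝ := ⋃ (s' : ℝ) (_ : s' ∈ Set.Icc (0:ℝ) 1), Set.Ioo (s' - δ s') (s' + δ s')
    with hDdef
  set U : Set ℝ := ⋃ (s' : ℝ) (_ : s' ∈ Set.Icc (0:ℝ) 1 ∧ G s' < c),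
      Set.Ioo (s' - δ s') (s' + δ s') with hUdef
  have hD : IsOpen D := isOpen_iUnion fun _ => isOpen_iUnion fun _ => isOpen_Ioo
  have hU : IsOpen U := isOpen_iUnion fun _ => isOpen_iUnion fun _ => isOpen_Ioo
  have habs : ∀ u s' : ℝ, u ∈ Set.Ioo (s' - δ s') (s' + δ s') ↔ |u - s'| < δ s' := by
    intro u s'
    rw [Set.mem_Ioo, abs_sub_lt_iff]
    constructor
    · rintro ⟨h1, h2⟩; exact ⟨by linarith, by linarith⟩
    · rintro ⟨h1, h2⟩; exact ⟨by linarith, by linarith⟩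
  have hbdd : ∀ u : ℝ, BddBelow (G '' {s' | s' ∈ Set.Icc (0:ℝ) 1 ∧ |u - s'| < δ s'}) := by
    intro u
    refine ⟨0, ?_⟩
    rintro v ⟨s', _, rfl⟩
    exact hG s'
  have key : (fun u => sInf (G '' {s' | s' ∈ Set.Icc (0:ℝ) 1 ∧ |u - s'| < δ s'})) ⁻¹'
      (Set.Iio c) = U ∪ (Dᶜ ∩ {_u : ℝ | (0:ℝ) < c}) := by
    ext u
    simp only [Set.mem_preimage, Set.mem_Iio, Set.mem_union, Set.mem_inter_iff,
      Set.mem_compl_iff, Set.mem_setOf_eq]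
    constructor
    · intro hu
      by_cases hD' : u ∈ D
      · left
        rw [hDdef] at hD'
        simp only [Set.mem_iUnion] at hD'
        obtain ⟨s₀, hs₀, hIoo⟩ := hD'
        have hne : (G '' {s' | s' ∈ Set.Icc (0:ℝ) 1 ∧ |u - s'| < δ s'}).Nonempty :=
          ⟨G s₀, ⟨s₀, ⟨hs₀, (habs u s₀).1 hIoo⟩, rfl⟩⟩
        obtain ⟨v, ⟨s₁, hs₁, rfl⟩, hvc⟩ := (csInf_lt_iff (hbdd u) hne).1 hu
        rw [hUdef]
        simp only [Set.mem_iUnion]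
        exact ⟨s₁, ⟨hs₁.1, hvc⟩, (habs u s₁).2 hs₁.2⟩
      · right
        refine ⟨hD', ?_⟩
        have hemp : (G '' {s' | s' ∈ Set.Icc (0:ℝ) 1 ∧ |u - s'| < δ s'}) = ∅ := by
          rw [Set.eq_empty_iff_forall_notMem]
          rintro v ⟨s', ⟨hs'1, hs'2⟩, rfl⟩
          refine hD' ?_
          rw [hDdef]
          simp only [Set.mem_iUnion]
          exact ⟨s', hs'1, (habs u s').2 hs'2⟩
        rw [hemp, Real.sInf_empty] at hu
        exact hu
    · rintro (hu | ⟨hnD, hc⟩)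
      · rw [hUdef] at hu
        simp only [Set.mem_iUnion] at hu
        obtain ⟨s₀, ⟨hs₀1, hs₀2⟩, hIoo⟩ := hu
        have h1 : sInf (G '' {s' | s' ∈ Set.Icc (0:ℝ) 1 ∧ |u - s'| < δ s'}) ≤ G s₀ :=
          csInf_le (hbdd u) ⟨s₀, ⟨hs₀1, (habs u s₀).1 hIoo⟩, rfl⟩
        exact lt_of_le_of_lt h1 hs₀2
      · have hemp : (G '' {s' | s' ∈ Set.Icc (0:ℝ) 1 ∧ |u - s'| < δ s'}) = ∅ := by
          rw [Set.eq_empty_iff_forall_notMem]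
          rintro v ⟨s', ⟨hs'1, hs'2⟩, rfl⟩
          refine hnD ?_
          rw [hDdef]
          simp only [Set.mem_iUnion]
          exact ⟨s', hs'1, (habs u s').2 hs'2⟩
        rw [hemp, Real.sInf_empty]
        exact hc
  rw [key]
  exact hU.measurableSet.union (hD.measurableSet.compl.inter (MeasurableSet.const _))

set_option maxHeartbeats 2000000 in
open BoxIntegral in
/-- Key scalar estimate: for a dual functional of norm at most 1, `f w` is bounded by the
lower integral of the norm. -/
lemma stmt4_key {X : Type*} [NormedAddCommGroup X] [NormedSpace ℝ X]
    (φ : ℝ → X) (w : X) (hw : HasMcShaneIntegral φ w) (f : X →L[ℝ] ℝ) (hf : ‖f‖ ≤ 1)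
    (hL : (∫⁻ t in Set.Icc (0:ℝ) 1, (‖φ t‖₊ : ENNReal)) ≠ ⊤) :
    f w ≤ (∫⁻ t in Set.Icc (0:ℝ) 1, (‖φ t‖₊ : ENNReal)).toReal := by
  set L := ∫⁻ t in Set.Icc (0:ℝ) 1, (‖φ t‖₊ : ENNReal) with hLdef
  have main : ∀ ε : ℝ, 0 < ε → f w ≤ L.toReal + 3 * ε := by
    intro ε hε
    obtain ⟨δ, hδpos, hδ⟩ := hw ε hε
    set G : ℝ → ℝ := fun s' => max (f (φ s')) 0 with hGdef
    have hG0 : ∀ s', 0 ≤ G s' := fun s' => le_max_right _ _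
    set h : ℝ → ℝ := fun u => sInf (G '' {s' | s' ∈ Set.Icc (0:ℝ) 1 ∧ |u - s'| < δ s'})
      with hhdef
    have hbdd : ∀ u : ℝ, BddBelow (G '' {s' | s' ∈ Set.Icc (0:ℝ) 1 ∧ |u - s'| < δ s'}) := by
      intro u; refine ⟨0, ?_⟩; rintro v ⟨s', _, rfl⟩; exact hG0 s'
    have hh0 : ∀ u, 0 ≤ h u := by
      intro u
      refine Real.sInf_nonneg ?_
      rintro v ⟨s', _, rfl⟩; exact hG0 s'
    have hGle : ∀ s', G s' ≤ ‖φ s'‖ := by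
      intro s'
      refine max_le ?_ (norm_nonneg _)
      calc f (φ s') ≤ |f (φ s')| := le_abs_self _
        _ ≤ ‖f‖ * ‖φ s'‖ := f.le_opNorm _
        _ ≤ 1 * ‖φ s'‖ := mul_le_mul_of_nonneg_right hf (norm_nonneg _)
        _ = ‖φ s'‖ := one_mul _
    have hmemself : ∀ u ∈ Set.Icc (0:ℝ) 1,
        G u ∈ G '' {s' | s' ∈ Set.Icc (0:ℝ) 1 ∧ |u - s'| < δ s'} := by
      intro u hu
      exact ⟨u, ⟨hu, by simpa using hδpos u hu⟩, rfl⟩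
    have hhle : ∀ u ∈ Set.Icc (0:ℝ) 1, h u ≤ ‖φ u‖ :=
      fun u hu => le_trans (csInf_le (hbdd u) (hmemself u hu)) (hGle u)
    have hmeas : Measurable h := stmt4_meas G δ hG0
    -- tag selector
    have hselx : ∀ u : ℝ, ∃ s' : ℝ, u ∈ Set.Icc (0:ℝ) 1 →
        s' ∈ Set.Icc (0:ℝ) 1 ∧ |u - s'| < δ s' ∧ G s' < h u + ε := by
      intro u
      by_cases hu : u ∈ Set.Icc (0:ℝ) 1
      · obtain ⟨v, ⟨s', hs', rfl⟩, hv⟩ :=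
          Real.lt_sInf_add_pos ⟨G u, hmemself u hu⟩ hε
        exact ⟨s', fun _ => ⟨hs'.1, hs'.2, hv⟩⟩
      · exact ⟨0, fun hu' => absurd hu' hu⟩
    choose sel hsel using hselx
    -- lintegral bound for h
    have hlint : ∫⁻ u in Set.Icc (0:ℝ) 1, ENNReal.ofReal (h u) ≤ L := by
      rw [hLdef]
      refine lintegral_mono_ae ((ae_restrict_iff' measurableSet_Icc).2 (ae_of_all _ ?_))
      intro u hu
      calc ENNReal.ofReal (h u) ≤ ENNReal.ofReal ‖φ u‖ := ENNReal.ofReal_le_ofReal (hhle u hu)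
        _ = (‖φ u‖₊ : ENNReal) := ofReal_norm _
    have hint : IntegrableOn h (Set.Icc (0:ℝ) 1) := by
      refine ⟨hmeas.aestronglyMeasurable, ?_⟩
      rw [hasFiniteIntegral_iff_norm]
      have : ∫⁻ u in Set.Icc (0:ℝ) 1, ENNReal.ofReal ‖h u‖
          = ∫⁻ u in Set.Icc (0:ℝ) 1, ENNReal.ofReal (h u) := by
        refine lintegral_congr fun u => ?_
        rw [Real.norm_of_nonneg (hh0 u)]
      rw [this]
      exact lt_of_le_of_lt hlint hL.lt_top
    -- move to the 1-dimensional box [0,1]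
    set I₀ : Box (Fin 1) := ⟨fun _ => 0, fun _ => 1, fun _ => one_pos⟩ with hI₀
    set e : (Fin 1 → ℝ) ≃ᵐ ℝ := MeasurableEquiv.funUnique (Fin 1) ℝ with hedef
    have he : ∀ x : Fin 1 → ℝ, e x = x 0 := fun x => rfl
    have hIset : (I₀ : Set (Fin 1 → ℝ)) = e ⁻¹' Set.Ioc (0:ℝ) 1 := by
      ext x
      simp only [Box.mem_coe, Box.mem_def, Set.mem_preimage, he]
      constructor
      · intro hx; exact hx 0
      · intro hx i
        have : i = 0 := Subsingleton.elim i 0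
        rw [this]; exact hx
    have hvolpres := MeasureTheory.volume_preserving_funUnique (Fin 1) ℝ
    set H : (Fin 1 → ℝ) → ℝ := h ∘ ⇑e with hHdef
    have hHap : ∀ x : Fin 1 → ℝ, H x = h (x 0) := fun _ => rfl
    have hHint : IntegrableOn H (I₀ : Set (Fin 1 → ℝ)) := by
      rw [hIset, hHdef]
      exact (hvolpres.integrableOn_comp_preimage e.measurableEmbedding
        (f := h) (s := Set.Ioc (0:ℝ) 1)).2 (hint.mono_set Set.Ioc_subset_Icc_self)
    have hIeq : (∫ x in (I₀ : Set (Fin 1 → ℝ)), H x) = ∫ u in Set.Ioc (0:ℝ) 1, h u := by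
      rw [hIset]
      exact hvolpres.setIntegral_preimage_emb e.measurableEmbedding h (Set.Ioc (0:ℝ) 1)
    have hbox := hHint.hasBoxIntegral (l := IntegrationParams.McShane) rfl
    obtain ⟨r, hrc, hr⟩ := BoxIntegral.hasIntegral_iff.1 hbox ε hε
    -- the combined gauge
    set ρ : (Fin 1 → ℝ) → Set.Ioi (0:ℝ) := fun x =>
      if hx : x 0 ∈ Set.Icc (0:ℝ) 1 then
        ⟨min (r 0 x) (δ (sel (x 0)) - |x 0 - sel (x 0)|),
          lt_min (r 0 x).2 (sub_pos.2 (hsel (x 0) hx).2.1)⟩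
      else r 0 x with hρdef
    obtain ⟨π, hπ, hπHen, hπρ, -, -⟩ :=
      Box.exists_taggedPartition_isHenstock_isSubordinate_homothetic I₀ ρ
    have hρle : ∀ x ∈ Box.Icc I₀, (ρ x : ℝ) ≤ r 0 x := by
      intro x _
      rw [hρdef]
      dsimp only
      split_ifs with hx
      · exact min_le_left _ _
      · exact le_rfl
    have hπr : π.IsSubordinate (r 0) := hπρ.mono hρle
    have hmem : IntegrationParams.McShane.MemBaseSet I₀ 0 (r 0) π := by
      refine ⟨hπr, fun _ => hπHen, fun hc => ?_, fun hc => ?_⟩ <;>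
        simp [IntegrationParams.McShane] at hc
    have hdist := hr 0 π hmem hπ
    -- index the boxes
    set n : ℕ := π.boxes.card with hn
    set E : Fin n ≃ ↥π.boxes := π.boxes.equivFin.symm with hE
    set Jb : Fin n → Box (Fin 1) := fun i => (E i : Box (Fin 1)) with hJb
    have hJmem : ∀ i, Jb i ∈ π.boxes := fun i => (E i).2
    set a : Fin n → ℝ := fun i => (Jb i).lower 0 with ha
    set b : Fin n → ℝ := fun i => (Jb i).upper 0 with hb
    set u : Fin n → ℝ := fun i => π.tag (Jb i) 0 with hu
    set t : Fin n → ℝ := fun i => sel (u i) with ht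
    have hab : ∀ i, a i ≤ b i := fun i => ((Jb i).lower_lt_upper 0).le
    have humem : ∀ i, u i ∈ Set.Icc (0:ℝ) 1 := by
      intro i
      have h1 := π.tag_mem_Icc (Jb i)
      rw [Box.Icc_def, Set.mem_Icc] at h1
      exact ⟨h1.1 0, h1.2 0⟩
    -- subordination facts
    have hsubord : ∀ i, ∀ x ∈ Set.Icc (a i) (b i),
        |x - u i| ≤ (ρ (π.tag (Jb i)) : ℝ) := by
      intro i x hx
      have hxIcc : (fun _ : Fin 1 => x) ∈ Box.Icc (Jb i) := by
        rw [Box.Icc_def, Set.mem_Icc]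
        constructor
        · intro k
          have hk : k = 0 := Subsingleton.elim k 0
          rw [hk]; exact hx.1
        · intro k
          have hk : k = 0 := Subsingleton.elim k 0
          rw [hk]; exact hx.2
      have h1 := hπρ (Jb i) (hJmem i) hxIcc
      have hd := dist_le_pi_dist (fun _ : Fin 1 => x) (π.tag (Jb i)) 0
      rw [Real.dist_eq] at hd
      rw [Metric.mem_closedBall] at h1
      exact hd.trans h1
    have hρval : ∀ i, (ρ (π.tag (Jb i)) : ℝ) ≤ δ (t i) - |u i - t i| := by
      intro i
      rw [hρdef]
      dsimp only
      rw [dif_pos (humem i)]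
      exact min_le_right _ _
    have hSub : SubordinateTo n a b t δ := by
      intro i
      have h1 := hsubord i (a i) ⟨le_rfl, hab i⟩
      have h2 := hsubord i (b i) ⟨hab i, le_rfl⟩
      have h3 := hρval i
      have h4 := abs_sub_le (a i) (u i) (t i)
      have h5 := abs_sub_le (b i) (u i) (t i)
      have h6 := abs_le.1 (show |a i - t i| ≤ δ (t i) by linarith)
      have h7 := abs_le.1 (show |b i - t i| ≤ δ (t i) by linarith)
      constructor
      · linarith [h6.1]
      · linarith [h7.2]
    -- it's a McShane partition
    have hMc : IsMcShanePartition n a b t := by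
      refine ⟨hab, fun i => (hsel (u i) (humem i)).1, ?_, ?_⟩
      · apply Set.Subset.antisymm
        · refine Set.iUnion_subset fun i => ?_
          have hle := π.toPrepartition.le_of_mem (hJmem i)
          rw [Box.le_iff_bounds] at hle
          exact Set.Icc_subset_Icc (hle.1 0) (hle.2 0)
        · have hsub2 : Set.Ioc (0:ℝ) 1 ⊆ ⋃ i, Set.Icc (a i) (b i) := by
            intro x hx
            have hxI : (fun _ : Fin 1 => x) ∈ I₀ := by
              rw [Box.mem_def]
              intro k
              exact hx
            obtain ⟨J, hJ, hxJ⟩ := hπ _ hxI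
            have hsurj : ∃ i, Jb i = J := by
              refine ⟨E.symm ⟨J, hJ⟩, ?_⟩
              rw [hJb]
              simp
            obtain ⟨i, hJi⟩ := hsurj
            rw [← hJi, Box.mem_def] at hxJ
            have h0 := hxJ 0
            exact Set.mem_iUnion.2 ⟨i, Set.mem_Icc.2 ⟨h0.1.le, h0.2⟩⟩
          have hcl : IsClosed (⋃ i, Set.Icc (a i) (b i)) :=
            isClosed_iUnion_of_finite fun i => isClosed_Icc
          have hcls := closure_mono hsub2
          rwa [closure_Ioc (by norm_num : (0:ℝ) ≠ 1), hcl.closure_eq] at hcls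
      · intro i j hij
        have hne : Jb i ≠ Jb j := by
          intro hEq
          exact hij (π.boxes.equivFin.symm.injective (Subtype.ext hEq))
        have hdisj := π.toPrepartition.pairwiseDisjoint (hJmem i) (hJmem j) hne
        rw [Set.eq_empty_iff_forall_notMem]
        rintro x ⟨hx1, hx2⟩
        have hm1 : (fun _ : Fin 1 => x) ∈ (Jb i : Set (Fin 1 → ℝ)) := by
          rw [Box.mem_coe, Box.mem_def]
          intro k
          have hk : k = 0 := Subsingleton.elim k 0
          rw [hk]
          exact ⟨hx1.1, hx1.2.le⟩
        have hm2 : (fun _ : Fin 1 => x) ∈ (Jb j : Set (Fin 1 → ℝ)) := by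
          rw [Box.mem_coe, Box.mem_def]
          intro k
          have hk : k = 0 := Subsingleton.elim k 0
          rw [hk]
          exact ⟨hx2.1, hx2.2.le⟩
        exact Set.disjoint_left.1 hdisj hm1 hm2
    -- the McShane estimate for φ
    have hφbound := hδ n a b t hMc hSub
    have hfle : f w ≤ (∑ i, (b i - a i) * f (φ (t i))) + ε := by
      have h1 : f w - f (∑ i, (b i - a i) • φ (t i)) ≤ ε := by
        rw [← map_sub]
        calc f (w - ∑ i, (b i - a i) • φ (t i))
            ≤ |f (w - ∑ i, (b i - a i) • φ (t i))| := le_abs_self _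
          _ ≤ ‖f‖ * ‖w - ∑ i, (b i - a i) • φ (t i)‖ := f.le_opNorm _
          _ ≤ 1 * ε := mul_le_mul hf hφbound (norm_nonneg _) zero_le_one
          _ = ε := one_mul _
      have h2 : f (∑ i, (b i - a i) • φ (t i)) = ∑ i, (b i - a i) * f (φ (t i)) := by
        rw [map_sum]
        refine Finset.sum_congr rfl fun i _ => ?_
        rw [_root_.map_smul, smul_eq_mul]
      linarith
    -- lengths
    have hlen : ∀ i, (volume : Measure (Fin 1 → ℝ)).toBoxAdditive (Jb i) = b i - a i := by
      intro i
      rw [Box.volume_apply]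
      simp [Fin.prod_univ_one, hb, ha]
    have hsum_eq : ∀ (F : Box (Fin 1) → ℝ),
        (∑ J ∈ π.boxes, F J) = ∑ i, F (Jb i) := by
      intro F
      rw [← Finset.sum_coe_sort π.boxes F]
      exact (Equiv.sum_comp E fun x : ↥π.boxes => F ↑x).symm
    have hlensum : (∑ i, (b i - a i)) = 1 := by
      have h1 := (volume : Measure (Fin 1 → ℝ)).toBoxAdditive.sum_partition_boxes le_top
        (π := π.toPrepartition) hπ
      rw [hsum_eq] at h1
      have h2 : (volume : Measure (Fin 1 → ℝ)).toBoxAdditive I₀ = 1 := by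
        rw [Box.volume_apply]
        simp [hI₀]
      rw [← h2, ← h1]
      exact Finset.sum_congr rfl fun i _ => (hlen i).symm
    -- identify the integral sum
    have hIS : BoxIntegral.integralSum H
        (volume : Measure (Fin 1 → ℝ)).toBoxAdditive.toSMul π
        = ∑ i, (b i - a i) * h (u i) := by
      rw [BoxIntegral.integralSum, hsum_eq]
      refine Finset.sum_congr rfl fun i _ => ?_
      rw [BoxAdditiveMap.toSMul_apply, hlen i, smul_eq_mul, hHap]
    have hISle : (∑ i, (b i - a i) * h (u i)) ≤ (∫ u' in Set.Ioc (0:ℝ) 1, h u') + ε := by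
      rw [← hIS, ← hIeq]
      have := abs_sub_le_iff.1 (by rwa [Real.dist_eq] at hdist)
      linarith [this.1]
    have hIbound : (∫ u' in Set.Ioc (0:ℝ) 1, h u') ≤ L.toReal := by
      have h1 : (∫ u' in Set.Ioc (0:ℝ) 1, h u')
          = (∫⁻ u' in Set.Ioc (0:ℝ) 1, ENNReal.ofReal (h u')).toReal :=
        integral_eq_lintegral_of_nonneg_ae (ae_of_all _ hh0) hmeas.aestronglyMeasurable.restrict
      have h2 : (∫⁻ u' in Set.Ioc (0:ℝ) 1, ENNReal.ofReal (h u')) ≤ L :=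
        le_trans (lintegral_mono_set Set.Ioc_subset_Icc_self) hlint
      rw [h1]
      exact ENNReal.toReal_mono hL h2
    -- final chain
    have hgh : ∀ i, f (φ (t i)) ≤ h (u i) + ε := fun i =>
      le_trans (le_max_left _ _) (le_of_lt (hsel (u i) (humem i)).2.2)
    have hstep : (∑ i, (b i - a i) * f (φ (t i)))
        ≤ (∑ i, (b i - a i) * h (u i)) + ε := by
      have h1 : (∑ i, (b i - a i) * f (φ (t i)))
          ≤ ∑ i, (b i - a i) * (h (u i) + ε) := by
        refine Finset.sum_le_sum fun i _ => ?_
        exact mul_le_mul_of_nonneg_left (hgh i) (sub_nonneg.2 (hab i))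
      have h2 : (∑ i, (b i - a i) * (h (u i) + ε))
          = (∑ i, (b i - a i) * h (u i)) + (∑ i, (b i - a i)) * ε := by
        rw [Finset.sum_mul]
        rw [← Finset.sum_add_distrib]
        refine Finset.sum_congr rfl fun i _ => ?_
        ring
      rw [h2, hlensum, one_mul] at h1
      exact h1
    calc f w ≤ (∑ i, (b i - a i) * f (φ (t i))) + ε := hfle
      _ ≤ ((∑ i, (b i - a i) * h (u i)) + ε) + ε := by linarith
      _ ≤ (((∫ u' in Set.Ioc (0:ℝ) 1, h u') + ε) + ε) + ε := by linarith
      _ ≤ L.toReal + 3 * ε := by linarith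
  refine le_of_forall_pos_le_add fun ε hε => ?_
  have := main (ε / 3) (by positivity)
  linarith

/-- 2G: if `φ : [0,1] → X` is McShane integrable with integral `w`, then `‖w‖` is at most
the lower Lebesgue integral of `t ↦ ‖φ t‖` over `[0,1]` (which is `∫⁻`, the supremum of the
integrals of (simple, equivalently integrable) functions below `t ↦ ‖φ t‖`). -/
theorem stmt4 {X : Type*} [NormedAddCommGroup X] [NormedSpace ℝ X] [CompleteSpace X]
    (φ : ℝ → X) (w : X) (hw : HasMcShaneIntegral φ w) :
    ENNReal.ofReal ‖w‖ ≤ ∫⁻ t in Set.Icc (0:ℝ) 1, (‖φ t‖₊ : ENNReal) := by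
  by_cases hL : (∫⁻ t in Set.Icc (0:ℝ) 1, (‖φ t‖₊ : ENNReal)) = ⊤
  · rw [hL]
    exact le_top
  · obtain ⟨f, hf1, hfw⟩ := exists_dual_vector'' ℝ w
    have hkey := stmt4_key φ w hw f hf1 hL
    rw [hfw] at hkey
    exact ENNReal.ofReal_le_of_le_toReal hkey
end

section
/- Let (S,Σ,μ) be a probability space and B ⊆ ℝ^S a stable set of real-valued functions on S. Suppose that A ⊆ ℝ^S is a countable set of functions such that A \ U is stable whenever U is an open subset of ℝ^S for the topology of pointwise convergence with B ⊆ U. Then A is stable. -/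
open MeasureTheory Filter Set

namespace Stmt11Aux
set_option linter.unusedSectionVars false
open scoped ENNReal

open MeasureTheory Set

variable {S : Type*} [MeasurableSpace S]

/-- The product measure in the definition of `Stable`. -/
noncomputable def PP (μ : Measure S) (m n : ℕ) : Measure ((Fin m → S) × (Fin n → S)) :=
  Measure.prod (Measure.pi fun _ : Fin m => μ) (Measure.pi fun _ : Fin n => μ)

/-- The set in the definition of `Stable`. -/
def ZSet (A : Set (S → ℝ)) (E : Set S) (m n : ℕ) (a b : ℝ) :
    Set ((Fin m → S) × (Fin n → S)) :=
  {p | (∀ i, p.1 i ∈ E) ∧ (∀ j, p.2 j ∈ E) ∧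
      ∃ f ∈ A, (∀ i, f (p.1 i) ≤ a) ∧ (∀ j, b ≤ f (p.2 j))}

instance PP.instSigmaFinite (μ : Measure S) [SigmaFinite μ] (m n : ℕ) :
    SigmaFinite (PP μ m n) := by
  unfold PP; infer_instance

instance PP.instIsProbabilityMeasure (μ : Measure S) [IsProbabilityMeasure μ] (m n : ℕ) :
    IsProbabilityMeasure (PP μ m n) := by
  unfold PP; infer_instance

lemma stable_iff (μ : Measure S) (A : Set (S → ℝ)) :
    Stable μ A ↔ ∀ E : Set S, MeasurableSet E → 0 < μ E → ∀ a b : ℝ, a < b →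
      ∃ m n : ℕ, 0 < m ∧ 0 < n ∧ PP μ m n (ZSet A E m n a b) < μ E ^ (m + n) :=
  Iff.rfl

lemma ZSet_mono {A A' : Set (S → ℝ)} (h : A ⊆ A') {E : Set S} {m n : ℕ} {a b : ℝ} :
    ZSet A E m n a b ⊆ ZSet A' E m n a b := by
  rintro p ⟨h1, h2, f, hf, hp⟩
  exact ⟨h1, h2, f, h hf, hp⟩

lemma stable_mono {μ : Measure S} {A A' : Set (S → ℝ)} (h : Stable μ A') (hsub : A ⊆ A') :
    Stable μ A := by
  rw [stable_iff] at h ⊢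
  intro E hE hμE a b hab
  obtain ⟨m, n, hm, hn, hlt⟩ := h E hE hμE a b hab
  exact ⟨m, n, hm, hn, lt_of_le_of_lt (measure_mono (ZSet_mono hsub)) hlt⟩

lemma PP_box (μ : Measure S) [SigmaFinite μ] (m n : ℕ) (X Y : Set S) :
    PP μ m n ((univ.pi fun _ : Fin m => X) ×ˢ (univ.pi fun _ : Fin n => Y))
      = μ X ^ m * μ Y ^ n := by
  rw [PP, Measure.prod_prod, Measure.pi_pi, Measure.pi_pi, Finset.prod_const,
    Finset.prod_const, Finset.card_univ, Finset.card_univ, Fintype.card_fin, Fintype.card_fin]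

/-- Separation: if `{f}` is stable then the measurable envelopes of
`E ∩ {f ≤ c}` and `E ∩ {c' ≤ f}` (within `E`) intersect in a null set. -/
lemma sep {μ : Measure S} [IsProbabilityMeasure μ] {f : S → ℝ}
    (hf : Stable μ {f}) {E : Set S} (hE : MeasurableSet E)
    {c c' : ℝ} (hcc' : c < c') :
    μ (E ∩ toMeasurable μ (E ∩ {x | f x ≤ c}) ∩ toMeasurable μ (E ∩ {x | c' ≤ f x})) = 0 := by
  by_contra h0
  set E' : Set S := E ∩ toMeasurable μ (E ∩ {x | f x ≤ c}) ∩ toMeasurable μ (E ∩ {x | c' ≤ f x})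
    with hE'def
  have hE'm : MeasurableSet E' :=
    (hE.inter (measurableSet_toMeasurable _ _)).inter (measurableSet_toMeasurable _ _)
  have hpos : 0 < μ E' := pos_iff_ne_zero.2 h0
  obtain ⟨m, n, hm, hn, hlt⟩ := (stable_iff μ {f}).1 hf E' hE'm hpos c c' hcc'
  set X : Set S := E' ∩ {x | f x ≤ c} with hXdef
  set Y : Set S := E' ∩ {x | c' ≤ f x} with hYdef
  have hE'E : E' ⊆ E := fun x hx => hx.1.1
  have hXμ : μ X = μ E' := by
    have h1 : (E ∩ {x | f x ≤ c}) ∩ E' = X := by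
      ext x
      constructor
      · rintro ⟨⟨_, hfx⟩, hx⟩; exact ⟨hx, hfx⟩
      · rintro ⟨hx, hfx⟩; exact ⟨⟨hE'E hx, hfx⟩, hx⟩
    have h2 : toMeasurable μ (E ∩ {x | f x ≤ c}) ∩ E' = E' :=
      inter_eq_self_of_subset_right (fun x hx => hx.1.2)
    calc μ X = μ ((E ∩ {x | f x ≤ c}) ∩ E') := by rw [h1]
    _ = μ (toMeasurable μ (E ∩ {x | f x ≤ c}) ∩ E') :=
        (Measure.measure_toMeasurable_inter hE'm (measure_ne_top μ _)).symm
    _ = μ E' := by rw [h2]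
  have hYμ : μ Y = μ E' := by
    have h1 : (E ∩ {x | c' ≤ f x}) ∩ E' = Y := by
      ext x
      constructor
      · rintro ⟨⟨_, hfx⟩, hx⟩; exact ⟨hx, hfx⟩
      · rintro ⟨hx, hfx⟩; exact ⟨⟨hE'E hx, hfx⟩, hx⟩
    have h2 : toMeasurable μ (E ∩ {x | c' ≤ f x}) ∩ E' = E' :=
      inter_eq_self_of_subset_right (fun x hx => hx.2)
    calc μ Y = μ ((E ∩ {x | c' ≤ f x}) ∩ E') := by rw [h1]
    _ = μ (toMeasurable μ (E ∩ {x | c' ≤ f x}) ∩ E') :=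
        (Measure.measure_toMeasurable_inter hE'm (measure_ne_top μ _)).symm
    _ = μ E' := by rw [h2]
  have hsub : (univ.pi fun _ : Fin m => X) ×ˢ (univ.pi fun _ : Fin n => Y)
      ⊆ ZSet {f} E' m n c c' := by
    rintro ⟨p1, p2⟩ ⟨hp1, hp2⟩
    have hp1' : ∀ i, p1 i ∈ X := fun i => hp1 i (mem_univ i)
    have hp2' : ∀ j, p2 j ∈ Y := fun j => hp2 j (mem_univ j)
    exact ⟨fun i => (hp1' i).1, fun j => (hp2' j).1, f, rfl,
      fun i => (hp1' i).2, fun j => (hp2' j).2⟩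
  have hge : μ E' ^ (m + n) ≤ PP μ m n (ZSet {f} E' m n c c') := by
    have := measure_mono (μ := PP μ m n) hsub
    rwa [PP_box, hXμ, hYμ, ← pow_add] at this
  exact absurd hlt (not_lt.2 hge)

-- continuation: measure preserving append
section AppendMP

variable {S : Type*} [MeasurableSpace S]

lemma measurable_finAppend (a b : ℕ) :
    Measurable (fun p : (Fin a → S) × (Fin b → S) => Fin.append p.1 p.2) := by
  apply measurable_pi_iff.2
  intro i
  refine Fin.addCases (motive := fun i =>
      Measurable fun p : (Fin a → S) × (Fin b → S) => Fin.append p.1 p.2 i)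
    (fun i => ?_) (fun i => ?_) i
  · simp only [Fin.append_left]
    exact (measurable_pi_apply i).comp measurable_fst
  · simp only [Fin.append_right]
    exact (measurable_pi_apply i).comp measurable_snd

lemma preimage_finAppend_pi (a b : ℕ) (s : Fin (a + b) → Set S) :
    (fun p : (Fin a → S) × (Fin b → S) => Fin.append p.1 p.2) ⁻¹' (univ.pi s)
      = (univ.pi fun i => s (Fin.castAdd b i)) ×ˢ (univ.pi fun j => s (Fin.natAdd a j)) := by
  ext p
  constructor
  · intro h
    refine ⟨fun i _ => ?_, fun j _ => ?_⟩
    · simpa only [Fin.append_left] using h (Fin.castAdd b i) (mem_univ _)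
    · simpa only [Fin.append_right] using h (Fin.natAdd a j) (mem_univ _)
  · rintro ⟨h1, h2⟩ i _
    refine Fin.addCases (motive := fun i => Fin.append p.1 p.2 i ∈ s i)
      (fun i => ?_) (fun j => ?_) i
    · simpa only [Fin.append_left] using h1 i (mem_univ _)
    · simpa only [Fin.append_right] using h2 j (mem_univ _)

lemma measurePreserving_finAppend (μ : Measure S) [SigmaFinite μ] (a b : ℕ) :
    MeasurePreserving (fun p : (Fin a → S) × (Fin b → S) => Fin.append p.1 p.2)
      ((Measure.pi fun _ : Fin a => μ).prod (Measure.pi fun _ : Fin b => μ))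
      (Measure.pi fun _ : Fin (a + b) => μ) := by
  refine ⟨measurable_finAppend a b, ?_⟩
  refine (Measure.pi_eq fun s hs => ?_).symm
  rw [Measure.map_apply (measurable_finAppend a b) (MeasurableSet.univ_pi hs),
    preimage_finAppend_pi, Measure.prod_prod, Measure.pi_pi, Measure.pi_pi]
  exact (Fin.prod_univ_add fun i => μ (s i)).symm

/-- The four-fold concatenation map is measure preserving. -/
lemma measurePreserving_theta (μ : Measure S) [SigmaFinite μ] (k l m n : ℕ) :
    MeasurePreserving
      (fun q : ((Fin k → S) × (Fin l → S)) × ((Fin m → S) × (Fin n → S)) =>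
        (Fin.append q.1.1 q.2.1, Fin.append q.1.2 q.2.2))
      (((Measure.pi fun _ : Fin k => μ).prod (Measure.pi fun _ : Fin l => μ)).prod
        ((Measure.pi fun _ : Fin m => μ).prod (Measure.pi fun _ : Fin n => μ)))
      ((Measure.pi fun _ : Fin (k + m) => μ).prod (Measure.pi fun _ : Fin (l + n) => μ)) := by
  have hmeas : Measurable
      (fun q : ((Fin k → S) × (Fin l → S)) × ((Fin m → S) × (Fin n → S)) =>
        (Fin.append q.1.1 q.2.1, Fin.append q.1.2 q.2.2)) := by
    refine Measurable.prodMk ?_ ?_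
    · exact (measurable_finAppend k m).comp
        ((measurable_fst.comp measurable_fst).prodMk (measurable_fst.comp measurable_snd))
    · exact (measurable_finAppend l n).comp
        ((measurable_snd.comp measurable_fst).prodMk (measurable_snd.comp measurable_snd))
  refine ⟨hmeas, ?_⟩
  refine (Measure.prod_eq fun P Q hP hQ => ?_).symm
  rw [Measure.map_apply hmeas (hP.prod hQ)]
  have hpre : (fun q : ((Fin k → S) × (Fin l → S)) × ((Fin m → S) × (Fin n → S)) =>
        (Fin.append q.1.1 q.2.1, Fin.append q.1.2 q.2.2)) ⁻¹' (P ×ˢ Q)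
      = {q : ((Fin k → S) × (Fin l → S)) × ((Fin m → S) × (Fin n → S)) |
          Fin.append q.1.1 q.2.1 ∈ P ∧ Fin.append q.1.2 q.2.2 ∈ Q} := rfl
  rw [hpre]
  have hPm : MeasurableSet ((fun p : (Fin k → S) × (Fin m → S) => Fin.append p.1 p.2) ⁻¹' P) :=
    (measurable_finAppend k m) hP
  have hQm : MeasurableSet ((fun p : (Fin l → S) × (Fin n → S) => Fin.append p.1 p.2) ⁻¹' Q) :=
    (measurable_finAppend l n) hQ
  have hset : MeasurableSet {q : ((Fin k → S) × (Fin l → S)) × ((Fin m → S) × (Fin n → S)) |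
      Fin.append q.1.1 q.2.1 ∈ P ∧ Fin.append q.1.2 q.2.2 ∈ Q} := by
    refine MeasurableSet.inter ?_ ?_
    · exact ((measurable_finAppend k m).comp
        ((measurable_fst.comp measurable_fst).prodMk (measurable_fst.comp measurable_snd))) hP
    · exact ((measurable_finAppend l n).comp
        ((measurable_snd.comp measurable_fst).prodMk (measurable_snd.comp measurable_snd))) hQ
  rw [Measure.prod_apply hset]
  have hsec : ∀ x : (Fin k → S) × (Fin l → S),
      (Prod.mk x ⁻¹' {q : ((Fin k → S) × (Fin l → S)) × ((Fin m → S) × (Fin n → S)) |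
        Fin.append q.1.1 q.2.1 ∈ P ∧ Fin.append q.1.2 q.2.2 ∈ Q})
      = {c : Fin m → S | Fin.append x.1 c ∈ P} ×ˢ {d : Fin n → S | Fin.append x.2 d ∈ Q} := by
    intro x; rfl
  have hFmeas : Measurable fun x1 : Fin k → S =>
      (Measure.pi fun _ : Fin m => μ) {c : Fin m → S | Fin.append x1 c ∈ P} :=
    measurable_measure_prodMk_left hPm
  have hGmeas : Measurable fun x2 : Fin l → S =>
      (Measure.pi fun _ : Fin n => μ) {d : Fin n → S | Fin.append x2 d ∈ Q} :=
    measurable_measure_prodMk_left hQm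
  calc ∫⁻ x, ((Measure.pi fun _ : Fin m => μ).prod (Measure.pi fun _ : Fin n => μ))
        (Prod.mk x ⁻¹' {q : ((Fin k → S) × (Fin l → S)) × ((Fin m → S) × (Fin n → S)) |
          Fin.append q.1.1 q.2.1 ∈ P ∧ Fin.append q.1.2 q.2.2 ∈ Q})
        ∂((Measure.pi fun _ : Fin k => μ).prod (Measure.pi fun _ : Fin l => μ))
      = ∫⁻ x, ((Measure.pi fun _ : Fin m => μ) {c : Fin m → S | Fin.append x.1 c ∈ P})
          * ((Measure.pi fun _ : Fin n => μ) {d : Fin n → S | Fin.append x.2 d ∈ Q})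
          ∂((Measure.pi fun _ : Fin k => μ).prod (Measure.pi fun _ : Fin l => μ)) := by
        refine lintegral_congr fun x => ?_
        rw [hsec x, Measure.prod_prod]
    _ = (∫⁻ x1, (Measure.pi fun _ : Fin m => μ) {c : Fin m → S | Fin.append x1 c ∈ P}
          ∂(Measure.pi fun _ : Fin k => μ))
        * ∫⁻ x2, (Measure.pi fun _ : Fin n => μ) {d : Fin n → S | Fin.append x2 d ∈ Q}
          ∂(Measure.pi fun _ : Fin l => μ) :=
        lintegral_prod_mul hFmeas.aemeasurable hGmeas.aemeasurable
    _ = (Measure.pi fun _ : Fin (k + m) => μ) P * (Measure.pi fun _ : Fin (l + n) => μ) Q := by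
        have e1 : (∫⁻ x1, (Measure.pi fun _ : Fin m => μ) {c | Fin.append x1 c ∈ P}
              ∂(Measure.pi fun _ : Fin k => μ))
            = ((Measure.pi fun _ : Fin k => μ).prod (Measure.pi fun _ : Fin m => μ))
              ((fun p : (Fin k → S) × (Fin m → S) => Fin.append p.1 p.2) ⁻¹' P) :=
          (Measure.prod_apply hPm).symm
        have e2 : (∫⁻ x2, (Measure.pi fun _ : Fin n => μ) {d | Fin.append x2 d ∈ Q}
              ∂(Measure.pi fun _ : Fin l => μ))
            = ((Measure.pi fun _ : Fin l => μ).prod (Measure.pi fun _ : Fin n => μ))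
              ((fun p : (Fin l → S) × (Fin n → S) => Fin.append p.1 p.2) ⁻¹' Q) :=
          (Measure.prod_apply hQm).symm
        rw [e1, e2,
          (measurePreserving_finAppend μ k m).measure_preimage hP.nullMeasurableSet,
          (measurePreserving_finAppend μ l n).measure_preimage hQ.nullMeasurableSet]
end AppendMP

section Helpers
variable {S : Type*} [MeasurableSpace S]

lemma lintegral_section_theta (μ : Measure S) [SigmaFinite μ] (k l m n : ℕ)
    (Y : Set ((Fin (k + m) → S) × (Fin (l + n) → S))) (hY : MeasurableSet Y) :
    (∫⁻ q, (PP μ m n) {w : (Fin m → S) × (Fin n → S) |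
        (Fin.append q.1 w.1, Fin.append q.2 w.2) ∈ Y} ∂(PP μ k l))
      = PP μ (k + m) (l + n) Y := by
  have h1 := (measurePreserving_theta μ k l m n).measure_preimage hY.nullMeasurableSet
  have hpre : MeasurableSet ((fun q : ((Fin k → S) × (Fin l → S)) × ((Fin m → S) × (Fin n → S)) =>
      (Fin.append q.1.1 q.2.1, Fin.append q.1.2 q.2.2)) ⁻¹' Y) :=
    (measurePreserving_theta μ k l m n).measurable hY
  have h2 : ((Measure.pi fun _ : Fin k => μ).prod (Measure.pi fun _ : Fin l => μ)).prod
        ((Measure.pi fun _ : Fin m => μ).prod (Measure.pi fun _ : Fin n => μ))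
        ((fun q : ((Fin k → S) × (Fin l → S)) × ((Fin m → S) × (Fin n → S)) =>
          (Fin.append q.1.1 q.2.1, Fin.append q.1.2 q.2.2)) ⁻¹' Y)
      = ∫⁻ q, (PP μ m n) {w : (Fin m → S) × (Fin n → S) |
          (Fin.append q.1 w.1, Fin.append q.2 w.2) ∈ Y} ∂(PP μ k l) :=
    Measure.prod_apply hpre
  exact h2.symm.trans h1

lemma measurable_section_theta (μ : Measure S) [SigmaFinite μ] (k l m n : ℕ)
    (Y : Set ((Fin (k + m) → S) × (Fin (l + n) → S))) (hY : MeasurableSet Y) :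
    Measurable fun q : (Fin k → S) × (Fin l → S) =>
      (PP μ m n) {w : (Fin m → S) × (Fin n → S) |
        (Fin.append q.1 w.1, Fin.append q.2 w.2) ∈ Y} :=
  measurable_measure_prodMk_left ((measurePreserving_theta μ k l m n).measurable hY)

lemma PP_slab_left_null (μ : Measure S) [SigmaFinite μ] (M N : ℕ) (i : Fin M)
    {Z : Set S} (h : μ Z = 0) :
    PP μ M N {p : (Fin M → S) × (Fin N → S) | p.1 i ∈ Z} = 0 := by
  have he : {p : (Fin M → S) × (Fin N → S) | p.1 i ∈ Z}
      = ({x : Fin M → S | x i ∈ Z} ×ˢ (univ : Set (Fin N → S))) := by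
    ext p; simp [Set.mem_prod]
  rw [he, PP, Measure.prod_prod]
  have h0 : (Measure.pi fun _ : Fin M => μ) {x : Fin M → S | x i ∈ Z} = 0 :=
    Measure.pi_eval_preimage_null _ h
  rw [h0, zero_mul]

lemma PP_slab_right_null (μ : Measure S) [SigmaFinite μ] (M N : ℕ) (j : Fin N)
    {Z : Set S} (h : μ Z = 0) :
    PP μ M N {p : (Fin M → S) × (Fin N → S) | p.2 j ∈ Z} = 0 := by
  have he : {p : (Fin M → S) × (Fin N → S) | p.2 j ∈ Z}
      = ((univ : Set (Fin M → S)) ×ˢ {x : Fin N → S | x j ∈ Z}) := by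
    ext p; simp [Set.mem_prod]
  rw [he, PP, Measure.prod_prod]
  have h0 : (Measure.pi fun _ : Fin N => μ) {x : Fin N → S | x j ∈ Z} = 0 :=
    Measure.pi_eval_preimage_null _ h
  rw [h0, mul_zero]

lemma ae_const_le_of_lintegral {Ω : Type*} [MeasurableSpace Ω] (ν : Measure Ω)
    [IsFiniteMeasure ν] {g : Ω → ℝ≥0∞} (hg : Measurable g) {c : ℝ≥0∞} (hc : c ≠ ⊤)
    (hle : ∀ q, g q ≤ c) (hint : c * ν univ ≤ ∫⁻ q, g q ∂ν) :
    ∀ᵐ q ∂ν, c ≤ g q := by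
  have h1 : (∫⁻ q, g q ∂ν) ≠ ⊤ := by
    refine ne_of_lt (lt_of_le_of_lt (lintegral_mono hle) ?_)
    rw [lintegral_const]
    exact ENNReal.mul_lt_top hc.lt_top (measure_lt_top ν univ)
  have hsub := lintegral_sub hg h1 (ae_of_all _ hle)
  have hzero : (∫⁻ q, (c - g q) ∂ν) = 0 := by
    rw [hsub, lintegral_const]
    exact tsub_eq_zero_of_le hint
  have hae := (lintegral_eq_zero_iff (measurable_const.sub hg)).1 hzero
  filter_upwards [hae] with q hq
  exact tsub_eq_zero_iff_le.1 hq

end Helpers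

end Stmt11Aux

open Stmt11Aux

/-- 3B (Lemma): let `(S, Σ, μ)` be a probability space and `B ⊆ ℝ^S` a stable set of
functions.  If `A ⊆ ℝ^S` is countable and `A \ U` is stable for every open `U ⊇ B` (for the
topology of pointwise convergence on `ℝ^S`), then `A` is stable. -/
theorem stmt11 {S : Type*} [MeasurableSpace S] (μ : Measure S) [IsProbabilityMeasure μ]
    (B : Set (S → ℝ)) (hB : Stable μ B)
    (A : Set (S → ℝ)) (hA : A.Countable)
    (hAU : ∀ U : Set (S → ℝ), IsOpen U → B ⊆ U → Stable μ (A \ U)) :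
    Stable μ A := by
  rw [Stmt11Aux.stable_iff]
  by_contra hA_unstable
  push_neg at hA_unstable
  obtain ⟨E, hE, hμE, α, β, hαβ, hfull⟩ := hA_unstable
  set α' : ℝ := α + (β - α) / 3 with hα'def
  set β' : ℝ := β - (β - α) / 3 with hβ'def
  have hαα' : α < α' := by rw [hα'def]; linarith
  have hα'β' : α' < β' := by rw [hα'def, hβ'def]; linarith
  have hβ'β : β' < β := by rw [hβ'def]; linarith
  -- every singleton from A is stable
  have hsingle : ∀ f ∈ A, Stable μ {f} := by
    intro f hf
    by_cases hfB : f ∈ B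
    · exact stable_mono hB (singleton_subset_iff.2 hfB)
    · have hBU : B ⊆ {f}ᶜ := fun g hg (hgf : g = f) => hfB (hgf ▸ hg)
      have h := hAU {f}ᶜ isOpen_compl_singleton hBU
      have heq : A \ {f}ᶜ = {f} := by
        ext g
        simp only [mem_diff, mem_compl_iff, mem_singleton_iff, not_not]
        exact ⟨fun h => h.2, fun h => ⟨h ▸ hf, h⟩⟩
      rwa [heq] at h
  -- measurable "proxies" for the level sets
  set Fs : (S → ℝ) → Set S := fun f =>
    (E ∩ toMeasurable μ (E ∩ {x | f x ≤ α})) \ toMeasurable μ (E ∩ {x | α' ≤ f x}) with hFsdef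
  set Gs : (S → ℝ) → Set S := fun f =>
    (E ∩ toMeasurable μ (E ∩ {x | β ≤ f x})) \ toMeasurable μ (E ∩ {x | f x ≤ β'}) with hGsdef
  have hFsm : ∀ f, MeasurableSet (Fs f) := fun f =>
    (hE.inter (measurableSet_toMeasurable _ _)).diff (measurableSet_toMeasurable _ _)
  have hGsm : ∀ f, MeasurableSet (Gs f) := fun f =>
    (hE.inter (measurableSet_toMeasurable _ _)).diff (measurableSet_toMeasurable _ _)
  have hFsE : ∀ f, Fs f ⊆ E := fun f x hx => hx.1.1
  have hGsE : ∀ f, Gs f ⊆ E := fun f x hx => hx.1.1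
  have hFslt : ∀ f, ∀ x ∈ Fs f, f x < α' := by
    intro f x hx
    by_contra hge
    push_neg at hge
    exact hx.2 (subset_toMeasurable _ _ ⟨hx.1.1, hge⟩)
  have hGslt : ∀ f, ∀ x ∈ Gs f, β' < f x := by
    intro f x hx
    by_contra hge
    push_neg at hge
    exact hx.2 (subset_toMeasurable _ _ ⟨hx.1.1, hge⟩)
  set NF : (S → ℝ) → Set S := fun f =>
    E ∩ toMeasurable μ (E ∩ {x | f x ≤ α}) ∩ toMeasurable μ (E ∩ {x | α' ≤ f x}) with hNFdef
  set NG : (S → ℝ) → Set S := fun f =>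
    E ∩ toMeasurable μ (E ∩ {x | f x ≤ β'}) ∩ toMeasurable μ (E ∩ {x | β ≤ f x}) with hNGdef
  have hNFnull : ∀ f ∈ A, μ (NF f) = 0 := fun f hf => sep (hsingle f hf) hE hαα'
  have hNGnull : ∀ f ∈ A, μ (NG f) = 0 := fun f hf => sep (hsingle f hf) hE hβ'β
  have hFcover : ∀ f, ∀ x, x ∈ E → f x ≤ α → x ∈ Fs f ∨ x ∈ NF f := by
    intro f x hxE hfx
    by_cases hx2 : x ∈ toMeasurable μ (E ∩ {x | α' ≤ f x})
    · exact Or.inr ⟨⟨hxE, subset_toMeasurable _ _ ⟨hxE, hfx⟩⟩, hx2⟩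
    · exact Or.inl ⟨⟨hxE, subset_toMeasurable _ _ ⟨hxE, hfx⟩⟩, hx2⟩
  have hGcover : ∀ f, ∀ x, x ∈ E → β ≤ f x → x ∈ Gs f ∨ x ∈ NG f := by
    intro f x hxE hfx
    by_cases hx2 : x ∈ toMeasurable μ (E ∩ {x | f x ≤ β'})
    · exact Or.inr ⟨⟨hxE, hx2⟩, subset_toMeasurable _ _ ⟨hxE, hfx⟩⟩
    · exact Or.inl ⟨⟨hxE, subset_toMeasurable _ _ ⟨hxE, hfx⟩⟩, hx2⟩
  -- stability of B at (α', β')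
  obtain ⟨k, l, hk, hl, hBlt⟩ := (Stmt11Aux.stable_iff μ B).1 hB E hE hμE α' β' hα'β'
  set W : Set ((Fin k → S) × (Fin l → S)) :=
    toMeasurable (PP μ k l) (ZSet B E k l α' β') with hWdef
  have hWm : MeasurableSet W := measurableSet_toMeasurable _ _
  have hWlt : PP μ k l W < μ E ^ (k + l) := by
    rw [hWdef, measure_toMeasurable]; exact hBlt
  -- the big union of measurable boxes
  have hYm : ∀ m n : ℕ, MeasurableSet
      (⋃ f ∈ A, (univ.pi fun _ : Fin (k + m) => Fs f) ×ˢ (univ.pi fun _ : Fin (l + n) => Gs f)) :=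
    fun m n => MeasurableSet.biUnion hA fun f _ =>
      (MeasurableSet.univ_pi fun _ => hFsm f).prod (MeasurableSet.univ_pi fun _ => hGsm f)
  -- the big set is almost full
  have hYfull : ∀ m n : ℕ, 0 < m → 0 < n →
      μ E ^ ((k + l) + (m + n)) ≤ PP μ (k + m) (l + n)
        (⋃ f ∈ A, (univ.pi fun _ : Fin (k + m) => Fs f)
          ×ˢ (univ.pi fun _ : Fin (l + n) => Gs f)) := by
    intro m n hm hn
    have h1 : μ E ^ ((k + m) + (l + n)) ≤ PP μ (k + m) (l + n) (ZSet A E (k + m) (l + n) α β) :=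
      hfull (k + m) (l + n) (by omega) (by omega)
    have hcov : ZSet A E (k + m) (l + n) α β
        ⊆ (⋃ f ∈ A, (univ.pi fun _ : Fin (k + m) => Fs f)
            ×ˢ (univ.pi fun _ : Fin (l + n) => Gs f))
          ∪ ⋃ f ∈ A,
            ((⋃ i, {p : (Fin (k + m) → S) × (Fin (l + n) → S) | p.1 i ∈ NF f})
              ∪ ⋃ j, {p : (Fin (k + m) → S) × (Fin (l + n) → S) | p.2 j ∈ NG f}) := by
      rintro p ⟨hp1, hp2, f, hfA, hlow, hhigh⟩
      by_cases hbad : (∃ i, p.1 i ∈ NF f) ∨ (∃ j, p.2 j ∈ NG f)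
      · refine Or.inr (mem_iUnion₂.2 ⟨f, hfA, ?_⟩)
        rcases hbad with ⟨i, hi⟩ | ⟨j, hj⟩
        · exact Or.inl (mem_iUnion.2 ⟨i, hi⟩)
        · exact Or.inr (mem_iUnion.2 ⟨j, hj⟩)
      · push_neg at hbad
        refine Or.inl (mem_iUnion₂.2 ⟨f, hfA, ?_, ?_⟩)
        · exact fun i _ => (hFcover f _ (hp1 i) (hlow i)).resolve_right (hbad.1 i)
        · exact fun j _ => (hGcover f _ (hp2 j) (hhigh j)).resolve_right (hbad.2 j)
    have hNnull : PP μ (k + m) (l + n)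
        (⋃ f ∈ A,
          ((⋃ i, {p : (Fin (k + m) → S) × (Fin (l + n) → S) | p.1 i ∈ NF f})
            ∪ ⋃ j, {p : (Fin (k + m) → S) × (Fin (l + n) → S) | p.2 j ∈ NG f})) = 0 := by
      refine (measure_biUnion_null_iff hA).2 fun f hf => ?_
      refine measure_union_null ?_ ?_
      · refine measure_iUnion_null fun i => PP_slab_left_null μ _ _ i (hNFnull f hf)
      · refine measure_iUnion_null fun j => PP_slab_right_null μ _ _ j (hNGnull f hf)
    have h2 := le_trans h1 (measure_mono hcov)
    have h3 := le_trans h2 (measure_union_le _ _)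
    rw [hNnull, add_zero] at h3
    have hexp : (k + m) + (l + n) = (k + l) + (m + n) := by ring
    rwa [hexp] at h3
  -- boxes in the E-box
  set EboxQ : Set ((Fin k → S) × (Fin l → S)) :=
    (univ.pi fun _ : Fin k => E) ×ˢ (univ.pi fun _ : Fin l => E) with hEboxQdef
  have hEboxQm : MeasurableSet EboxQ :=
    (MeasurableSet.univ_pi fun _ => hE).prod (MeasurableSet.univ_pi fun _ => hE)
  have hEboxQμ : PP μ k l EboxQ = μ E ^ (k + l) := by
    rw [hEboxQdef, PP_box, pow_add]
  -- the section function g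
  have hgood_ae : ∀ m n : ℕ, 0 < m → 0 < n →
      ∀ᵐ q ∂((PP μ k l).restrict EboxQ), μ E ^ (m + n) ≤ PP μ m n
        {w : (Fin m → S) × (Fin n → S) |
          (Fin.append q.1 w.1, Fin.append q.2 w.2) ∈
            ⋃ f ∈ A, (univ.pi fun _ : Fin (k + m) => Fs f)
              ×ˢ (univ.pi fun _ : Fin (l + n) => Gs f)} := by
    intro m n hm hn
    set Y := ⋃ f ∈ A, (univ.pi fun _ : Fin (k + m) => Fs f)
        ×ˢ (univ.pi fun _ : Fin (l + n) => Gs f) with hYdef2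
    set g : (Fin k → S) × (Fin l → S) → ENNReal := fun q =>
      PP μ m n {w : (Fin m → S) × (Fin n → S) |
        (Fin.append q.1 w.1, Fin.append q.2 w.2) ∈ Y} with hgdef
    have hgm : Measurable g := measurable_section_theta μ k l m n Y (hYm m n)
    have hgle : ∀ q, g q ≤ μ E ^ (m + n) := by
      intro q
      have hsub : {w : (Fin m → S) × (Fin n → S) |
          (Fin.append q.1 w.1, Fin.append q.2 w.2) ∈ Y}
          ⊆ (univ.pi fun _ : Fin m => E) ×ˢ (univ.pi fun _ : Fin n => E) := by
        rintro ⟨w1, w2⟩ hw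
        rw [hYdef2] at hw
        simp only [mem_iUnion, mem_setOf_eq] at hw
        obtain ⟨f, hfA, hwF, hwG⟩ := hw
        constructor
        · intro i _
          exact hFsE f (by simpa only [Fin.append_right] using hwF (Fin.natAdd k i) (mem_univ _))
        · intro j _
          exact hGsE f (by simpa only [Fin.append_right] using hwG (Fin.natAdd l j) (mem_univ _))
      calc g q ≤ PP μ m n ((univ.pi fun _ : Fin m => E) ×ˢ (univ.pi fun _ : Fin n => E)) :=
            measure_mono hsub
      _ = μ E ^ (m + n) := by rw [PP_box, pow_add]
    have hgzero : ∀ q, q ∉ EboxQ → g q = 0 := by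
      intro q hq
      have hempty : {w : (Fin m → S) × (Fin n → S) |
          (Fin.append q.1 w.1, Fin.append q.2 w.2) ∈ Y} = ∅ := by
        rw [eq_empty_iff_forall_notMem]
        rintro ⟨w1, w2⟩ hw
        rw [hYdef2] at hw
        simp only [mem_iUnion, mem_setOf_eq] at hw
        obtain ⟨f, hfA, hwF, hwG⟩ := hw
        refine hq ⟨fun i _ => ?_, fun j _ => ?_⟩
        · exact hFsE f (by simpa only [Fin.append_left] using hwF (Fin.castAdd m i) (mem_univ _))
        · exact hGsE f (by simpa only [Fin.append_left] using hwG (Fin.castAdd n j) (mem_univ _))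
      rw [hgdef]
      simp only
      rw [hempty, measure_empty]
    have hintfull : (∫⁻ q, g q ∂((PP μ k l).restrict EboxQ)) = ∫⁻ q, g q ∂(PP μ k l) := by
      rw [← lintegral_indicator hEboxQm]
      refine lintegral_congr fun q => ?_
      by_cases hq : q ∈ EboxQ
      · rw [indicator_of_mem hq]
      · rw [indicator_of_notMem hq, hgzero q hq]
    have hint : μ E ^ (m + n) * ((PP μ k l).restrict EboxQ) univ
        ≤ ∫⁻ q, g q ∂((PP μ k l).restrict EboxQ) := by
      rw [hintfull, Measure.restrict_apply_univ, hEboxQμ]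
      have h1 := hYfull m n hm hn
      rw [← lintegral_section_theta μ k l m n Y (hYm m n)] at h1
      calc μ E ^ (m + n) * μ E ^ (k + l) = μ E ^ ((k + l) + (m + n)) := by
            rw [pow_add]; ring
      _ ≤ ∫⁻ q, g q ∂(PP μ k l) := h1
    have hconst_ne : (μ E ^ (m + n) : ENNReal) ≠ ⊤ :=
      (ENNReal.pow_ne_top (measure_ne_top μ E))
    exact ae_const_le_of_lintegral _ hgm hconst_ne hgle hint
  -- gather all (m, n)
  have haeAll : ∀ᵐ q ∂((PP μ k l).restrict EboxQ),
      ∀ mn : ℕ × ℕ, 0 < mn.1 → 0 < mn.2 → μ E ^ (mn.1 + mn.2) ≤ PP μ mn.1 mn.2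
        {w : (Fin mn.1 → S) × (Fin mn.2 → S) |
          (Fin.append q.1 w.1, Fin.append q.2 w.2) ∈
            ⋃ f ∈ A, (univ.pi fun _ : Fin (k + mn.1) => Fs f)
              ×ˢ (univ.pi fun _ : Fin (l + mn.2) => Gs f)} := by
    rw [ae_all_iff]
    rintro ⟨m, n⟩
    by_cases hm : 0 < m
    · by_cases hn : 0 < n
      · filter_upwards [hgood_ae m n hm hn] with q hq
        exact fun _ _ => hq
      · exact ae_of_all _ fun q _ h2 => absurd h2 hn
    · exact ae_of_all _ fun q h1 _ => absurd h1 hm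
  -- extract a good point outside W
  set Bad : Set ((Fin k → S) × (Fin l → S)) := {q |
    ¬ ∀ mn : ℕ × ℕ, 0 < mn.1 → 0 < mn.2 → μ E ^ (mn.1 + mn.2) ≤ PP μ mn.1 mn.2
      {w : (Fin mn.1 → S) × (Fin mn.2 → S) |
        (Fin.append q.1 w.1, Fin.append q.2 w.2) ∈
          ⋃ f ∈ A, (univ.pi fun _ : Fin (k + mn.1) => Fs f)
            ×ˢ (univ.pi fun _ : Fin (l + mn.2) => Gs f)}} with hBaddef
  have hBadnull : ((PP μ k l).restrict EboxQ) Bad = 0 := haeAll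
  have hC : ((PP μ k l).restrict EboxQ) (EboxQ \ (W ∪ Bad)) ≠ 0 := by
    intro h0
    have hcov : (univ : Set ((Fin k → S) × (Fin l → S)))
        ⊆ (W ∪ Bad) ∪ ((EboxQ \ (W ∪ Bad)) ∪ EboxQᶜ) := by
      intro q _
      by_cases h1 : q ∈ W ∪ Bad
      · exact Or.inl h1
      · by_cases h2 : q ∈ EboxQ
        · exact Or.inr (Or.inl ⟨h2, h1⟩)
        · exact Or.inr (Or.inr h2)
    have hEc : ((PP μ k l).restrict EboxQ) EboxQᶜ = 0 := by
      rw [Measure.restrict_apply hEboxQm.compl, compl_inter_self, measure_empty]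
    have hWb : ((PP μ k l).restrict EboxQ) W ≤ PP μ k l W := by
      rw [Measure.restrict_apply hWm]
      exact measure_mono inter_subset_left
    have huniv : ((PP μ k l).restrict EboxQ) univ = μ E ^ (k + l) := by
      rw [Measure.restrict_apply_univ, hEboxQμ]
    have hle1 : ((PP μ k l).restrict EboxQ) univ
        ≤ ((PP μ k l).restrict EboxQ) (W ∪ Bad)
          + (((PP μ k l).restrict EboxQ) (EboxQ \ (W ∪ Bad))
            + ((PP μ k l).restrict EboxQ) EboxQᶜ) :=
      le_trans (measure_mono hcov) (le_trans (measure_union_le _ _)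
        (by gcongr; exact measure_union_le _ _))
    rw [h0, hEc, add_zero, add_zero] at hle1
    have hle2 : ((PP μ k l).restrict EboxQ) (W ∪ Bad)
        ≤ ((PP μ k l).restrict EboxQ) W + ((PP μ k l).restrict EboxQ) Bad :=
      measure_union_le _ _
    rw [hBadnull, add_zero] at hle2
    have : μ E ^ (k + l) < μ E ^ (k + l) := by
      calc μ E ^ (k + l) = ((PP μ k l).restrict EboxQ) univ := huniv.symm
      _ ≤ ((PP μ k l).restrict EboxQ) W := le_trans hle1 hle2
      _ ≤ PP μ k l W := hWb
      _ < μ E ^ (k + l) := hWlt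
    exact absurd this (lt_irrefl _)
  obtain ⟨q₀, hq₀⟩ := nonempty_of_measure_ne_zero hC
  obtain ⟨hq₀E, hq₀WB⟩ := hq₀
  have hq₀W : q₀ ∉ W := fun h => hq₀WB (Or.inl h)
  have hq₀good : ∀ mn : ℕ × ℕ, 0 < mn.1 → 0 < mn.2 → μ E ^ (mn.1 + mn.2) ≤ PP μ mn.1 mn.2
      {w : (Fin mn.1 → S) × (Fin mn.2 → S) |
        (Fin.append q₀.1 w.1, Fin.append q₀.2 w.2) ∈
          ⋃ f ∈ A, (univ.pi fun _ : Fin (k + mn.1) => Fs f)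
            ×ˢ (univ.pi fun _ : Fin (l + mn.2) => Gs f)} := by
    by_contra h
    exact hq₀WB (Or.inr h)
  -- the open set U
  set U : Set (S → ℝ) := {h | (∃ i : Fin k, α' < h (q₀.1 i)) ∨ ∃ j : Fin l, h (q₀.2 j) < β'}
    with hUdef
  have hUopen : IsOpen U := by
    have hrw : U = (⋃ i : Fin k, {h : S → ℝ | α' < h (q₀.1 i)})
        ∪ ⋃ j : Fin l, {h : S → ℝ | h (q₀.2 j) < β'} := by
      ext h
      simp [hUdef, mem_iUnion]
    rw [hrw]
    refine IsOpen.union (isOpen_iUnion fun i => ?_) (isOpen_iUnion fun j => ?_)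
    · exact isOpen_lt continuous_const (continuous_apply _)
    · exact isOpen_lt (continuous_apply _) continuous_const
  have hBU : B ⊆ U := by
    intro b hb
    by_contra hbU
    rw [hUdef] at hbU
    simp only [mem_setOf_eq, not_or, not_exists, not_lt] at hbU
    obtain ⟨h1, h2⟩ := hbU
    have hq₀ZB : q₀ ∈ ZSet B E k l α' β' :=
      ⟨fun i => hq₀E.1 i (mem_univ i), fun j => hq₀E.2 j (mem_univ j), b, hb, h1, h2⟩
    exact hq₀W (subset_toMeasurable _ _ hq₀ZB)
  -- final contradiction with stability of A \ U
  obtain ⟨m, n, hm, hn, hlt⟩ :=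
    (Stmt11Aux.stable_iff μ (A \ U)).1 (hAU U hUopen hBU) E hE hμE α' β' hα'β'
  have hgq₀ := hq₀good (m, n) hm hn
  have hsub : {w : (Fin m → S) × (Fin n → S) |
      (Fin.append q₀.1 w.1, Fin.append q₀.2 w.2) ∈
        ⋃ f ∈ A, (univ.pi fun _ : Fin (k + m) => Fs f)
          ×ˢ (univ.pi fun _ : Fin (l + n) => Gs f)}
      ⊆ ZSet (A \ U) E m n α' β' := by
    rintro ⟨w1, w2⟩ hw
    simp only [mem_iUnion, mem_setOf_eq] at hw
    obtain ⟨f, hfA, hwF, hwG⟩ := hw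
    have hFq : ∀ i : Fin k, q₀.1 i ∈ Fs f := fun i => by
      simpa only [Fin.append_left] using hwF (Fin.castAdd m i) (mem_univ _)
    have hFw : ∀ i : Fin m, w1 i ∈ Fs f := fun i => by
      simpa only [Fin.append_right] using hwF (Fin.natAdd k i) (mem_univ _)
    have hGq : ∀ j : Fin l, q₀.2 j ∈ Gs f := fun j => by
      simpa only [Fin.append_left] using hwG (Fin.castAdd n j) (mem_univ _)
    have hGw : ∀ j : Fin n, w2 j ∈ Gs f := fun j => by
      simpa only [Fin.append_right] using hwG (Fin.natAdd l j) (mem_univ _)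
    have hfU : f ∉ U := by
      intro hfU
      rw [hUdef] at hfU
      rcases hfU with ⟨i, hi⟩ | ⟨j, hj⟩
      · exact absurd hi (not_lt.2 (le_of_lt (hFslt f _ (hFq i))))
      · exact absurd hj (not_lt.2 (le_of_lt (hGslt f _ (hGq j))))
    exact ⟨fun i => hFsE f (hFw i), fun j => hGsE f (hGw j), f, ⟨hfA, hfU⟩,
      fun i => le_of_lt (hFslt f _ (hFw i)), fun j => le_of_lt (hGslt f _ (hGw j))⟩
  have hfinal : μ E ^ (m + n) ≤ PP μ m n (ZSet (A \ U) E m n α' β') :=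
    le_trans hgq₀ (measure_mono hsub)
  exact absurd hlt (not_lt.2 hfinal)
end

section
/- Let H ⊆ ℝ be a Lebesgue measurable set such that μ(H ∩ [a,b]) > 0 whenever a < b in ℝ, where μ is Lebesgue measure. If D is a subset of ℝ with μ*(D) > 0 (μ* the Lebesgue outer measure), then μ*(H ∩ (t + D)) > 0 for almost every t ∈ ℝ. -/
open MeasureTheory Filter Set

section Aux

open MeasureTheory Filter Set Metric

/-- If the symmetric difference budget: difference of two closed intervals of radius `r`
whose centers differ by at most `r/2` has measure at most `r/2`. -/
private lemma diff_Icc_le (a e r : ℝ) (h1 : a - r/2 ≤ e) (h2 : e ≤ a + r/2) :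
    volume (Set.Icc (a - r) (a + r) \ Set.Icc (e - r) (e + r)) ≤ ENNReal.ofReal (r/2) := by
  rcases le_total a e with hc | hc
  · have hsub : Set.Icc (a - r) (a + r) \ Set.Icc (e - r) (e + r) ⊆ Set.Icc (a - r) (e - r) := by
      rintro y ⟨⟨hy1, hy2⟩, hy3⟩
      refine ⟨hy1, ?_⟩
      by_contra hcon
      push_neg at hcon
      exact hy3 ⟨hcon.le, by linarith⟩
    refine (measure_mono hsub).trans ?_
    rw [Real.volume_Icc]
    exact ENNReal.ofReal_le_ofReal (by linarith)
  · have hsub : Set.Icc (a - r) (a + r) \ Set.Icc (e - r) (e + r) ⊆ Set.Icc (e + r) (a + r) := by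
      rintro y ⟨⟨hy1, hy2⟩, hy3⟩
      refine ⟨?_, hy2⟩
      by_contra hcon
      push_neg at hcon
      exact hy3 ⟨by linarith, hcon.le⟩
    refine (measure_mono hsub).trans ?_
    rw [Real.volume_Icc]
    exact ENNReal.ofReal_le_ofReal (by linarith)

/-- Key Steinhaus-type lemma: if `A`, `C` are measurable with positive measure, there is a
nontrivial interval on which `x ↦ μ (A ∩ {y | x - y ∈ C})` is positive. -/
private lemma keyA (A C : Set ℝ) (hA : MeasurableSet A) (hC : MeasurableSet C)
    (hA0 : volume A ≠ 0) (hC0 : volume C ≠ 0) :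
    ∃ u v : ℝ, u < v ∧ ∀ x ∈ Set.Icc u v, 0 < volume (A ∩ {y | x - y ∈ C}) := by
  haveI hnbA : (ae (volume.restrict A)).NeBot :=
    ae_neBot.mpr (by rwa [Ne, Measure.restrict_eq_zero])
  obtain ⟨a, ha⟩ := (Besicovitch.ae_tendsto_measure_inter_div volume A).exists
  haveI hnbC : (ae (volume.restrict C)).NeBot :=
    ae_neBot.mpr (by rwa [Ne, Measure.restrict_eq_zero])
  obtain ⟨c, hc⟩ := (Besicovitch.ae_tendsto_measure_inter_div volume C).exists
  have h78 : ENNReal.ofReal (7/8) < 1 := by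
    rw [ENNReal.ofReal_lt_one]; norm_num
  have hA' := ha.eventually (lt_mem_nhds h78)
  have hC' := hc.eventually (lt_mem_nhds h78)
  obtain ⟨r, ⟨hrA, hrC⟩, hr0⟩ := ((hA'.and hC').and self_mem_nhdsWithin).exists
  have key : ∀ (S : Set ℝ) (z : ℝ),
      ENNReal.ofReal (7/8) < volume (S ∩ closedBall z r) / volume (closedBall z r) →
      ENNReal.ofReal (7/4 * r) ≤ volume (S ∩ Set.Icc (z - r) (z + r)) := by
    intro S z hz
    rw [Real.volume_closedBall] at hz
    have h2r0 : ENNReal.ofReal (2*r) ≠ 0 := by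
      rw [Ne, ENNReal.ofReal_eq_zero]; push_neg; linarith
    have hlt := (ENNReal.lt_div_iff_mul_lt (Or.inl h2r0) (Or.inl ENNReal.ofReal_ne_top)).mp hz
    rw [← ENNReal.ofReal_mul (by norm_num)] at hlt
    rw [← Real.closedBall_eq_Icc]
    calc ENNReal.ofReal (7/4*r) = ENNReal.ofReal (7/8*(2*r)) := by congr 1; ring
    _ ≤ volume (S ∩ closedBall z r) := hlt.le
  have hAI := key A a hrA
  have hCI := key C c hrC
  refine ⟨a + c - r/2, a + c + r/2, by linarith, ?_⟩
  rintro x ⟨hx1, hx2⟩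
  rw [pos_iff_ne_zero]
  intro h0
  set e := x - c with he
  have he1 : a - r/2 ≤ e := by rw [he]; linarith
  have he2 : e ≤ a + r/2 := by rw [he]; linarith
  set I := Set.Icc (a - r) (a + r) with hI
  set J := Set.Icc (e - r) (e + r) with hJ
  set preC := {y : ℝ | x - y ∈ C} with hpreC
  have hpreCm : MeasurableSet preC := hC.preimage (measurable_const.sub measurable_id)
  have hpre_meas : ∀ S : Set ℝ, volume ((fun y => x - y) ⁻¹' S) = volume S := by
    intro S
    have h1 : (fun y : ℝ => x - y) ⁻¹' S = Neg.neg ⁻¹' ((x + ·) ⁻¹' S) := by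
      ext y; simp [sub_eq_add_neg]
    rw [h1, Measure.measure_preimage_neg]
    simpa using measure_preimage_vadd volume x S
  have hpe : preC ∩ J = (fun y => x - y) ⁻¹' (C ∩ Set.Icc (c - r) (c + r)) := by
    ext y
    simp only [hpreC, hJ, Set.mem_inter_iff, Set.mem_preimage, Set.mem_Icc, Set.mem_setOf_eq, he]
    constructor
    · rintro ⟨hy1, hy2, hy3⟩; exact ⟨hy1, by linarith, by linarith⟩
    · rintro ⟨hy1, hy2, hy3⟩; exact ⟨hy1, by linarith, by linarith⟩
  have hCJ : ENNReal.ofReal (7/4*r) ≤ volume (preC ∩ J) := by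
    rw [hpe, hpre_meas]; exact hCI
  have hd1 : volume (I \ J) ≤ ENNReal.ofReal (r/2) := diff_Icc_le a e r he1 he2
  have hd2 : volume (J \ I) ≤ ENNReal.ofReal (r/2) := diff_Icc_le e a r (by linarith) (by linarith)
  have hnull : volume ((A ∩ (I ∩ J)) ∩ (preC ∩ (I ∩ J))) = 0 :=
    measure_mono_null (by rintro y ⟨⟨hyA, -⟩, hyC, -⟩; exact ⟨hyA, hyC⟩) h0
  have hIJm : MeasurableSet (I ∩ J) := by rw [hI, hJ]; exact measurableSet_Icc.inter measurableSet_Icc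
  have hKeq := measure_union_add_inter (μ := volume) (t := preC ∩ (I ∩ J)) (A ∩ (I ∩ J))
    (hpreCm.inter hIJm)
  have hsum : volume (A ∩ (I ∩ J)) + volume (preC ∩ (I ∩ J)) ≤ ENNReal.ofReal (2*r) := by
    rw [← hKeq, hnull, add_zero]
    have hsub : (A ∩ (I ∩ J)) ∪ (preC ∩ (I ∩ J)) ⊆ I :=
      Set.union_subset (fun y hy => hy.2.1) (fun y hy => hy.2.1)
    refine (measure_mono hsub).trans ?_
    rw [hI, Real.volume_Icc]
    exact ENNReal.ofReal_le_ofReal (by linarith)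
  have hA2 : ENNReal.ofReal (7/4*r) ≤ volume (A ∩ (I ∩ J)) + ENNReal.ofReal (r/2) := by
    calc ENNReal.ofReal (7/4*r) ≤ volume (A ∩ I) := hAI
    _ ≤ volume ((A ∩ (I ∩ J)) ∪ (I \ J)) := by
        refine measure_mono ?_
        rintro y ⟨hyA, hyI⟩
        by_cases hyJ : y ∈ J
        · exact Or.inl ⟨hyA, hyI, hyJ⟩
        · exact Or.inr ⟨hyI, hyJ⟩
    _ ≤ volume (A ∩ (I ∩ J)) + volume (I \ J) := measure_union_le _ _
    _ ≤ volume (A ∩ (I ∩ J)) + ENNReal.ofReal (r/2) := add_le_add_right hd1 _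
  have hC2 : ENNReal.ofReal (7/4*r) ≤ volume (preC ∩ (I ∩ J)) + ENNReal.ofReal (r/2) := by
    calc ENNReal.ofReal (7/4*r) ≤ volume (preC ∩ J) := hCJ
    _ ≤ volume ((preC ∩ (I ∩ J)) ∪ (J \ I)) := by
        refine measure_mono ?_
        rintro y ⟨hyC, hyJ⟩
        by_cases hyI : y ∈ I
        · exact Or.inl ⟨hyC, hyI, hyJ⟩
        · exact Or.inr ⟨hyJ, hyI⟩
    _ ≤ volume (preC ∩ (I ∩ J)) + volume (J \ I) := measure_union_le _ _
    _ ≤ volume (preC ∩ (I ∩ J)) + ENNReal.ofReal (r/2) := add_le_add_right hd2 _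
  have hfin : ENNReal.ofReal (7/2*r) ≤ ENNReal.ofReal (3*r) := by
    calc ENNReal.ofReal (7/2*r) = ENNReal.ofReal (7/4*r) + ENNReal.ofReal (7/4*r) := by
          rw [← ENNReal.ofReal_add (by linarith) (by linarith)]; congr 1; ring
    _ ≤ (volume (A ∩ (I ∩ J)) + ENNReal.ofReal (r/2))
        + (volume (preC ∩ (I ∩ J)) + ENNReal.ofReal (r/2)) := add_le_add hA2 hC2
    _ = (volume (A ∩ (I ∩ J)) + volume (preC ∩ (I ∩ J)))
        + (ENNReal.ofReal (r/2) + ENNReal.ofReal (r/2)) := by ring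
    _ ≤ ENNReal.ofReal (2*r) + (ENNReal.ofReal (r/2) + ENNReal.ofReal (r/2)) :=
        add_le_add_left hsum _
    _ = ENNReal.ofReal (3*r) := by
        rw [← ENNReal.ofReal_add (by linarith) (by linarith),
          ← ENNReal.ofReal_add (by linarith) (by linarith)]
        congr 1; ring
  have := (ENNReal.ofReal_le_ofReal_iff (by linarith)).mp hfin
  linarith

end Aux

/-- 3C(a): if `H ⊆ ℝ` is measurable and meets every non-trivial interval in a set of
positive measure, and `D ⊆ ℝ` has positive outer measure, then for almost every `t`,
`H ∩ (t + D)` has positive outer measure.  (A `Measure` applied to an arbitrary, possibly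
non-measurable, set gives its outer measure.) -/
theorem stmt12 (H : Set ℝ) (hH : MeasurableSet H)
    (hHpos : ∀ a b : ℝ, a < b → 0 < volume (H ∩ Set.Icc a b))
    (D : Set ℝ) (hD : 0 < volume D) :
    ∀ᵐ t : ℝ, 0 < volume (H ∩ ((fun d => t + d) '' D)) := by
  classical
  -- a bounded piece of `D` with positive outer measure
  have hDU : (⋃ n : ℕ, D ∩ Set.Icc (-(n:ℝ)) n) = D := by
    ext x
    simp only [Set.mem_iUnion, Set.mem_inter_iff, Set.mem_Icc]
    constructor
    · rintro ⟨n, hn, -⟩; exact hn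
    · intro hx
      obtain ⟨n, hn⟩ := exists_nat_ge |x|
      rw [abs_le] at hn
      exact ⟨n, hx, by linarith [hn.1], hn.2⟩
  obtain ⟨n, hn⟩ : ∃ n : ℕ, volume (D ∩ Set.Icc (-(n:ℝ)) n) ≠ 0 := by
    by_contra hcon
    push_neg at hcon
    have h0 := measure_iUnion_null (μ := volume) (s := fun n : ℕ => D ∩ Set.Icc (-(n:ℝ)) n) hcon
    rw [hDU] at h0
    exact hD.ne' h0
  set D₀ := D ∩ Set.Icc (-(n:ℝ)) n with hD₀
  have hD₀top : volume D₀ ≠ ⊤ := by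
    refine ne_top_of_le_ne_top ?_ (measure_mono Set.inter_subset_right)
    rw [Real.volume_Icc]
    exact ENNReal.ofReal_ne_top
  set D' := toMeasurable volume D₀ with hD'
  have hD'm : MeasurableSet D' := measurableSet_toMeasurable _ _
  have hD'0 : volume D' ≠ 0 := by rw [hD', measure_toMeasurable]; exact hn
  -- translation invariance in a convenient form
  have htrans : ∀ (t : ℝ) (S : Set ℝ),
      volume (H ∩ {x | x - t ∈ S}) = volume ({y | t + y ∈ H} ∩ S) := by
    intro t S
    have h1 : ((t + ·) ⁻¹' (H ∩ {x | x - t ∈ S})) = {y | t + y ∈ H} ∩ S := by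
      ext y
      simp [Set.mem_preimage, add_sub_cancel_left]
    rw [← h1]
    have h2 := measure_preimage_vadd volume t (H ∩ {x | x - t ∈ S})
    simp only [vadd_eq_add] at h2
    exact h2.symm
  have himg : ∀ t : ℝ, (fun d => t + d) '' D = {x | x - t ∈ D} := by
    intro t
    ext x
    simp only [Set.mem_image, Set.mem_setOf_eq]
    constructor
    · rintro ⟨d, hd, rfl⟩; simpa [add_sub_cancel_left] using hd
    · intro h; exact ⟨x - t, h, by ring⟩
  -- the Fubini setup
  set W := {p : ℝ × ℝ | p.2 ∈ H ∧ p.2 - p.1 ∈ D'} with hWdef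
  have hWm : MeasurableSet W :=
    (measurable_snd hH).inter ((measurable_snd.sub measurable_fst) hD'm)
  set g := fun t : ℝ => volume (Prod.mk t ⁻¹' W) with hgdef
  have hgm : Measurable g := measurable_measure_prodMk_left hWm
  set B := {t : ℝ | g t = 0} with hBdef
  have hBm : MeasurableSet B := hgm (measurableSet_singleton 0)
  have hslice : ∀ t : ℝ, Prod.mk t ⁻¹' W = H ∩ {x | x - t ∈ D'} := fun t => rfl
  have hBnull : volume B = 0 := by
    by_contra hB0
    set W' := (B ×ˢ (Set.univ : Set ℝ)) ∩ W with hW'def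
    have hW'm : MeasurableSet W' := (hBm.prod MeasurableSet.univ).inter hWm
    have hzero : (volume.prod volume) W' = 0 := by
      rw [Measure.prod_apply hW'm]
      have hsl : ∀ t : ℝ, volume (Prod.mk t ⁻¹' W') = 0 := by
        intro t
        by_cases ht : t ∈ B
        · exact measure_mono_null (fun x hx => hx.2) ht
        · have hemp : Prod.mk t ⁻¹' W' ⊆ (∅ : Set ℝ) := by
            rintro x ⟨⟨ht', -⟩, -⟩
            exact absurd ht' ht
          exact measure_mono_null hemp measure_empty
      simp only [hsl, lintegral_zero]
    have hsymm := Measure.prod_apply_symm (μ := volume) (ν := volume) hW'm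
    rw [hzero] at hsymm
    have hmeas2 : Measurable fun x : ℝ => volume ((fun t => (t, x)) ⁻¹' W') :=
      measurable_measure_prodMk_right hW'm
    have hae : ∀ᵐ x : ℝ, volume ((fun t => (t, x)) ⁻¹' W') = 0 := by
      have := (lintegral_eq_zero_iff hmeas2).mp hsymm.symm
      filter_upwards [this] with x hx using hx
    obtain ⟨u, v, huv, hposx⟩ := keyA B D' hBm hD'm hB0 hD'0
    have hHuv := hHpos u v huv
    rw [ae_iff] at hae
    have hsub : H ∩ Set.Icc u v ⊆ {x : ℝ | ¬ volume ((fun t => (t, x)) ⁻¹' W') = 0} := by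
      rintro x ⟨hxH, hxI⟩
      have hxset : (fun t => (t, x)) ⁻¹' W' = B ∩ {t | x - t ∈ D'} := by
        ext t
        simp only [hW'def, hWdef, Set.mem_preimage, Set.mem_inter_iff, Set.mem_prod,
          Set.mem_univ, and_true, Set.mem_setOf_eq]
        constructor
        · rintro ⟨h1, -, h3⟩; exact ⟨h1, h3⟩
        · rintro ⟨h1, h2⟩; exact ⟨h1, hxH, h2⟩
      simp only [Set.mem_setOf_eq, hxset]
      exact (hposx x hxI).ne'
    exact absurd (le_antisymm ((measure_mono hsub).trans (le_of_eq hae)) zero_le) hHuv.ne'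
  -- conclude
  rw [ae_iff]
  refine measure_mono_null ?_ hBnull
  intro t ht
  simp only [Set.mem_setOf_eq, not_lt, nonpos_iff_eq_zero] at ht
  show g t = 0
  have hPm : MeasurableSet {y : ℝ | t + y ∈ H} := hH.preimage (measurable_const.add measurable_id)
  have h1 : g t = volume ({y | t + y ∈ H} ∩ D') := by
    show volume (Prod.mk t ⁻¹' W) = _
    rw [hslice t, htrans t D']
  have h2 : volume ({y | t + y ∈ H} ∩ D') = volume ({y | t + y ∈ H} ∩ D₀) := by
    rw [Set.inter_comm _ D', Set.inter_comm _ D₀, hD']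
    exact Measure.measure_toMeasurable_inter hPm hD₀top
  have h3 : volume ({y | t + y ∈ H} ∩ D₀) ≤ volume ({y | t + y ∈ H} ∩ D) :=
    measure_mono (Set.inter_subset_inter_right _ Set.inter_subset_left)
  have h4 : volume ({y | t + y ∈ H} ∩ D) = volume (H ∩ (fun d => t + d) '' D) := by
    rw [himg t]
    exact (htrans t D).symm
  refine le_antisymm ?_ zero_le
  calc g t = volume ({y | t + y ∈ H} ∩ D₀) := by rw [h1, h2]
  _ ≤ volume ({y | t + y ∈ H} ∩ D) := h3
  _ = volume (H ∩ (fun d => t + d) '' D) := h4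
  _ = 0 := ht
end

section
/- Let H ⊆ ℝ be a Lebesgue measurable set such that μ(H ∩ [a,b]) > 0 whenever a < b in ℝ, where μ is Lebesgue measure. If ⟨Dₙ⟩_{n∈ℕ} is a sequence of subsets of ℝ each of positive Lebesgue outer measure, then there is a sequence ⟨tₙ⟩_{n∈ℕ} of reals such that tₘ ∈ Dₘ for every m and tₘ + tₙ ∈ H whenever m < n in ℕ. -/
open MeasureTheory Filter Set

section StmtAux
open scoped ENNReal Topology
open Metric

private lemma density_piece {S : Set ℝ} (hpos : 0 < volume S) :
    ∃ x : ℝ, ∃ ε₀ > (0:ℝ), ∀ ε : ℝ, 0 < ε → ε ≤ ε₀ →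
      ENNReal.ofReal (7/4 * ε) ≤ volume (S ∩ Icc (x - ε) (x + ε)) := by
  have hae := Besicovitch.ae_tendsto_measure_inter_div volume S
  have : (ae (volume.restrict S)).NeBot := by
    refine ae_neBot.mpr ?_
    simp only [ne_eq, Measure.restrict_eq_zero]
    exact hpos.ne'
  obtain ⟨x, hx⟩ := hae.exists
  have hlt : (ENNReal.ofReal (7/8)) < 1 := by
    rw [ENNReal.ofReal_lt_one]; norm_num
  have hev : ∀ᶠ r in 𝓝[>] (0:ℝ),
      ENNReal.ofReal (7/8) < volume (S ∩ closedBall x r) / volume (closedBall x r) :=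
    hx.eventually (lt_mem_nhds hlt)
  obtain ⟨ε₀, hε₀, hsub⟩ := mem_nhdsGT_iff_exists_Ioc_subset.mp hev
  refine ⟨x, ε₀, hε₀, fun ε hε hεle => ?_⟩
  have h1 : ENNReal.ofReal (7/8) < volume (S ∩ closedBall x ε) / volume (closedBall x ε) :=
    hsub ⟨hε, hεle⟩
  have hcb : volume (closedBall x ε) = ENNReal.ofReal (2 * ε) := Real.volume_closedBall x ε
  have hne : volume (closedBall x ε) ≠ 0 := by
    rw [hcb]; simp; positivity
  have htop : volume (closedBall x ε) ≠ ⊤ := by rw [hcb]; exact ENNReal.ofReal_ne_top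
  have h2 : ENNReal.ofReal (7/8) * volume (closedBall x ε) < volume (S ∩ closedBall x ε) :=
    (ENNReal.lt_div_iff_mul_lt (Or.inl hne) (Or.inl htop)).mp h1
  have h3 : ENNReal.ofReal (7/4 * ε) ≤ ENNReal.ofReal (7/8) * volume (closedBall x ε) := by
    rw [hcb, ← ENNReal.ofReal_mul (by norm_num)]
    exact ENNReal.ofReal_le_ofReal (by nlinarith)
  have := h3.trans h2.le
  rwa [Real.closedBall_eq_Icc] at this

private lemma lemA (H : Set ℝ) (hH : MeasurableSet H)
    (hHpos : ∀ a b : ℝ, a < b → 0 < volume (H ∩ Set.Icc a b))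
    {N B : Set ℝ} (hN : MeasurableSet N) (hB : MeasurableSet B)
    (hBpos : 0 < volume B)
    (hbad : ∀ t ∈ N, volume (B ∩ {y | t + y ∈ H}) = 0) :
    volume N = 0 := by
  by_contra hne
  have hNpos : 0 < volume N := pos_iff_ne_zero.mpr hne
  obtain ⟨t₀, ε₁, hε₁, hN₁⟩ := density_piece hNpos
  obtain ⟨x₀, ε₂, hε₂, hB₁⟩ := density_piece hBpos
  set ε := min ε₁ ε₂ with hεdef
  have hε : 0 < ε := lt_min hε₁ hε₂
  set N' := N ∩ Icc (t₀ - ε) (t₀ + ε) with hN'def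
  set B' := B ∩ Icc (x₀ - ε) (x₀ + ε) with hB'def
  have hN'meas : MeasurableSet N' := hN.inter measurableSet_Icc
  have hB'meas : MeasurableSet B' := hB.inter measurableSet_Icc
  have hN'big : ENNReal.ofReal (7/4 * ε) ≤ volume N' := hN₁ ε hε (min_le_left _ _)
  have hB'big : ENNReal.ofReal (7/4 * ε) ≤ volume B' := hB₁ ε hε (min_le_right _ _)
  set f : ℝ × ℝ → ℝ≥0∞ := fun p => H.indicator 1 p.2 * B'.indicator 1 (p.2 - p.1) with hfdef
  have hfmeas : Measurable f := by
    apply Measurable.mul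
    · exact (measurable_one.indicator hH).comp measurable_snd
    · exact (measurable_one.indicator hB'meas).comp (measurable_snd.sub measurable_fst)
  -- upper bound : the double integral is 0
  have hKzero : (∫⁻ t in N', ∫⁻ s, f (t, s)) = 0 := by
    have hinner : ∀ t ∈ N', (∫⁻ s, f (t, s)) = 0 := by
      intro t ht
      have hsub : (∫⁻ s, f (t, s)) = ∫⁻ y, f (t, t + y) :=
        (lintegral_add_left_eq_self (fun s => f (t, s)) t).symm
      have heq : ∀ y : ℝ, f (t, t + y) = (B' ∩ {y | t + y ∈ H}).indicator 1 y := by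
        intro y
        simp only [hfdef, add_sub_cancel_left]
        by_cases h1 : y ∈ B' <;> by_cases h2 : t + y ∈ H <;>
          simp [Set.indicator_apply, h1, h2]
      have hms : MeasurableSet (B' ∩ {y : ℝ | t + y ∈ H}) :=
        hB'meas.inter (hH.preimage (measurable_const_add t))
      rw [hsub]
      simp_rw [heq]
      rw [lintegral_indicator_one hms]
      have hle : volume (B' ∩ {y | t + y ∈ H}) ≤ volume (B ∩ {y | t + y ∈ H}) :=
        measure_mono (inter_subset_inter_left _ inter_subset_left)
      rw [hbad t ht.1] at hle
      exact le_antisymm hle (zero_le)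
    rw [← lintegral_indicator hN'meas]
    rw [← lintegral_zero]
    congr 1
    funext t
    by_cases ht : t ∈ N'
    · simp only [Set.indicator_of_mem ht, hinner t ht, Pi.zero_apply]
    · simp only [Set.indicator_of_notMem ht, Pi.zero_apply]
  -- swap the order of integration
  have hswap : (∫⁻ t in N', ∫⁻ s, f (t, s)) = ∫⁻ s, ∫⁻ t in N', f (t, s) :=
    lintegral_lintegral_swap hfmeas.aemeasurable
  -- lower bound
  set s₀ := t₀ + x₀ with hs₀
  set J := Icc (s₀ - ε/2) (s₀ + ε/2) with hJ
  have hHJmeas : MeasurableSet (H ∩ J) := hH.inter measurableSet_Icc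
  have hlow : ∀ s : ℝ, (H ∩ J).indicator (fun _ => ENNReal.ofReal (ε/2)) s
      ≤ ∫⁻ t in N', f (t, s) := by
    intro s
    by_cases hs : s ∈ H ∩ J
    · rw [Set.indicator_of_mem hs]
      set Y := (fun t : ℝ => s - t) ⁻¹' B' with hY
      have hYmeas : MeasurableSet Y := hB'meas.preimage (measurable_const.sub measurable_id)
      have hYvol : volume Y = volume B' :=
        (Measure.measurePreserving_sub_left volume s).measure_preimage
          hB'meas.nullMeasurableSet
      -- inner integral equals the measure of Y ∩ N'
      have hinner : (∫⁻ t in N', f (t, s)) = volume (Y ∩ N') := by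
        have : ∀ t : ℝ, f (t, s) = Y.indicator 1 t := by
          intro t
          have hsH : s ∈ H := hs.1
          have : B'.indicator (1 : ℝ → ℝ≥0∞) (s - t) = Y.indicator 1 t := by
            by_cases hyt : s - t ∈ B'
            · rw [Set.indicator_of_mem hyt, Set.indicator_of_mem (Set.mem_preimage.mpr hyt)]
              rfl
            · rw [Set.indicator_of_notMem hyt,
                Set.indicator_of_notMem (fun h => hyt (Set.mem_preimage.mp h))]
          simp [hfdef, Set.indicator_of_mem hsH, this]
        simp_rw [this]
        rw [lintegral_indicator_one hYmeas, Measure.restrict_apply hYmeas]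
      rw [hinner]
      -- inclusion–exclusion in the interval Z
      set Z := Icc (t₀ - 3/2*ε) (t₀ + 3/2*ε) with hZ
      have hNZ : N' ⊆ Z := by
        intro t ht
        have := ht.2
        simp only [mem_Icc] at this ⊢
        constructor <;> linarith [this.1, this.2]
      have hYZ : Y ⊆ Z := by
        intro t ht
        have h1 : s - t ∈ Icc (x₀ - ε) (x₀ + ε) := ht.2
        have h2 : s ∈ J := hs.2
        simp only [mem_Icc] at h1 h2 ⊢
        constructor <;> linarith [h1.1, h1.2, h2.1, h2.2]
      have hZvol : volume Z = ENNReal.ofReal (3*ε) := by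
        rw [hZ, Real.volume_Icc]; ring_nf
      have hsum : ENNReal.ofReal (3*ε) + ENNReal.ofReal (ε/2) ≤
          volume Z + volume (Y ∩ N') := by
        have h1 : volume (Y ∪ N') + volume (Y ∩ N') = volume Y + volume N' :=
          measure_union_add_inter Y hN'meas
        have h2 : volume (Y ∪ N') ≤ volume Z := measure_mono (union_subset hYZ hNZ)
        have h3 : ENNReal.ofReal (3*ε) + ENNReal.ofReal (ε/2) ≤ volume Y + volume N' := by
          rw [← ENNReal.ofReal_add (by linarith) (by linarith), hYvol]
          calc ENNReal.ofReal (3*ε + ε/2) = ENNReal.ofReal (7/4*ε + 7/4*ε) := by ring_nf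
            _ ≤ volume B' + volume N' := by
                rw [ENNReal.ofReal_add (by linarith) (by linarith)]
                exact add_le_add hB'big hN'big
        calc ENNReal.ofReal (3*ε) + ENNReal.ofReal (ε/2) ≤ volume Y + volume N' := h3
          _ = volume (Y ∪ N') + volume (Y ∩ N') := h1.symm
          _ ≤ volume Z + volume (Y ∩ N') := add_le_add h2 le_rfl
      rw [hZvol] at hsum
      exact (ENNReal.add_le_add_iff_left ENNReal.ofReal_ne_top).mp hsum
    · rw [Set.indicator_of_notMem hs]
      exact zero_le
  have hKlow : ENNReal.ofReal (ε/2) * volume (H ∩ J) ≤ ∫⁻ t in N', ∫⁻ s, f (t, s) := by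
    rw [hswap]
    calc ENNReal.ofReal (ε/2) * volume (H ∩ J)
        = ∫⁻ s, (H ∩ J).indicator (fun _ => ENNReal.ofReal (ε/2)) s := by
          rw [lintegral_indicator_const hHJmeas]
      _ ≤ ∫⁻ s, ∫⁻ t in N', f (t, s) := lintegral_mono hlow
  rw [hKzero] at hKlow
  have hHJ : 0 < volume (H ∩ J) := hHpos _ _ (by linarith)
  have hpos' : (0:ℝ≥0∞) < ENNReal.ofReal (ε/2) * volume (H ∩ J) :=
    ENNReal.mul_pos (by simp only [ne_eq, ENNReal.ofReal_eq_zero, not_le]; linarith) hHJ.ne'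
  exact absurd hKlow hpos'.not_ge

private lemma lemB (H : Set ℝ) (hH : MeasurableSet H)
    (hHpos : ∀ a b : ℝ, a < b → 0 < volume (H ∩ Set.Icc a b))
    {A : Set ℝ} (hA : 0 < volume A) :
    ∀ᵐ t : ℝ, 0 < volume (A ∩ {y | t + y ∈ H}) := by
  -- find a bounded piece of positive outer measure
  obtain ⟨n, hn⟩ : ∃ n : ℕ, volume (A ∩ Icc (-(n:ℝ)) n) ≠ 0 := by
    by_contra hcon
    push_neg at hcon
    have hcover : A ⊆ ⋃ n : ℕ, A ∩ Icc (-(n:ℝ)) n := by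
      intro x hx
      obtain ⟨n, hn⟩ := exists_nat_ge |x|
      have h1 := abs_le.mp hn
      exact mem_iUnion.mpr ⟨n, hx, by constructor <;> linarith [h1.1, h1.2]⟩
    have hle : volume A ≤ ∑' n : ℕ, volume (A ∩ Icc (-(n:ℝ)) n) :=
      (measure_mono hcover).trans (measure_iUnion_le _)
    simp only [hcon, tsum_zero, nonpos_iff_eq_zero] at hle
    exact hA.ne' hle
  set A' := A ∩ Icc (-(n:ℝ)) n with hA'
  have hA'top : volume A' ≠ ⊤ :=
    ((measure_mono inter_subset_right).trans_lt (by
      rw [Real.volume_Icc]; exact ENNReal.ofReal_lt_top)).ne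
  set B := toMeasurable volume A' with hBdef
  have hBmeas : MeasurableSet B := measurableSet_toMeasurable _ _
  have henv : ∀ S : Set ℝ, MeasurableSet S → volume (B ∩ S) = volume (A' ∩ S) := by
    intro S hS
    exact Measure.measure_toMeasurable_inter hS hA'top
  have hBpos : 0 < volume B := by
    rw [hBdef, measure_toMeasurable]
    exact pos_iff_ne_zero.mpr hn
  -- the bad set is measurable
  set g : ℝ → ℝ≥0∞ := fun t => ∫⁻ y : ℝ, B.indicator 1 y * H.indicator 1 (t + y) with hg
  have hgmeas : Measurable g := by
    have hm : Measurable (fun p : ℝ × ℝ => B.indicator (1:ℝ→ℝ≥0∞) p.2 * H.indicator 1 (p.1 + p.2)) := by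
      apply Measurable.mul
      · exact (measurable_one.indicator hBmeas).comp measurable_snd
      · exact (measurable_one.indicator hH).comp (measurable_fst.add measurable_snd)
    exact hm.lintegral_prod_right'
  have hgval : ∀ t : ℝ, g t = volume (B ∩ {y | t + y ∈ H}) := by
    intro t
    have hms : MeasurableSet (B ∩ {y : ℝ | t + y ∈ H}) :=
      hBmeas.inter (hH.preimage (measurable_const_add t))
    rw [hg]
    have : ∀ y : ℝ, B.indicator (1:ℝ→ℝ≥0∞) y * H.indicator 1 (t + y)
        = (B ∩ {y | t + y ∈ H}).indicator 1 y := by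
      intro y
      by_cases h1 : y ∈ B <;> by_cases h2 : t + y ∈ H <;>
        simp [Set.indicator_apply, h1, h2]
    simp_rw [this]
    exact lintegral_indicator_one hms
  set Nset := {t : ℝ | volume (B ∩ {y | t + y ∈ H}) = 0} with hNset
  have hNmeas : MeasurableSet Nset := by
    have : Nset = g ⁻¹' {0} := by
      ext t; simp [hNset, hgval t]
    rw [this]
    exact hgmeas (measurableSet_singleton 0)
  have hNzero : volume Nset = 0 :=
    lemA H hH hHpos hNmeas hBmeas hBpos (fun t ht => ht)
  have hae : ∀ᵐ t : ℝ, t ∉ Nset := by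
    rw [ae_iff]
    simpa using hNzero
  filter_upwards [hae] with t ht
  have hSmeas : MeasurableSet {y : ℝ | t + y ∈ H} := hH.preimage (measurable_const_add t)
  have h1 : volume (A' ∩ {y | t + y ∈ H}) = volume (B ∩ {y | t + y ∈ H}) :=
    (henv _ hSmeas).symm
  have h2 : 0 < volume (B ∩ {y | t + y ∈ H}) := pos_iff_ne_zero.mpr ht
  calc (0:ℝ≥0∞) < volume (A' ∩ {y | t + y ∈ H}) := h1 ▸ h2
    _ ≤ volume (A ∩ {y | t + y ∈ H}) :=
      measure_mono (inter_subset_inter_left _ inter_subset_left)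

end StmtAux

/-- 3C(b): if `H ⊆ ℝ` is measurable and meets every non-trivial interval in a set of
positive measure, and `⟨Dₙ⟩` is a sequence of sets of positive outer measure, then there is
a sequence `⟨tₙ⟩` with `tₘ ∈ Dₘ` for every `m` and `tₘ + tₙ ∈ H` whenever `m < n`. -/


theorem stmt13 (H : Set ℝ) (hH : MeasurableSet H)
    (hHpos : ∀ a b : ℝ, a < b → 0 < volume (H ∩ Set.Icc a b))
    (D : ℕ → Set ℝ) (hD : ∀ n, 0 < volume (D n)) :
    ∃ t : ℕ → ℝ, (∀ m, t m ∈ D m) ∧ ∀ m n : ℕ, m < n → t m + t n ∈ H := by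
  classical
  set C : (ℕ → ℝ) → ℕ → Set ℝ := fun v n => {y | ∀ m < n, v m + y ∈ H} with hC
  set Good : ℕ → (ℕ → ℝ) → Prop := fun n v =>
    (∀ m < n, v m ∈ D m) ∧ (∀ m k, m < k → k < n → v m + v k ∈ H) ∧
    (∀ j, 0 < volume (D j ∩ C v n)) with hGood
  have base : Good 0 (fun _ => 0) := by
    refine ⟨fun m hm => absurd hm (Nat.not_lt_zero m), fun m k _ hk => absurd hk (Nat.not_lt_zero k), fun j => ?_⟩
    have : C (fun _ => 0) 0 = Set.univ := by
      ext y; simp [hC]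
    rw [this, Set.inter_univ]
    exact hD j
  have step : ∀ n (v : ℕ → ℝ), Good n v → ∃ x, Good (n+1) (Function.update v n x) := by
    intro n v hv
    have hpos : ∀ j, 0 < volume (D j ∩ C v n) := hv.2.2
    have hae : ∀ᵐ x : ℝ, ∀ j : ℕ, 0 < volume ((D j ∩ C v n) ∩ {y | x + y ∈ H}) := by
      rw [ae_all_iff]
      intro j
      exact lemB H hH hHpos (hpos j)
    set P : ℝ → Prop := fun x => ∀ j : ℕ, 0 < volume ((D j ∩ C v n) ∩ {y | x + y ∈ H}) with hP
    have hzero : volume {x | ¬ P x} = 0 := by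
      rw [← ae_iff]; exact hae
    have hpos' : 0 < volume ((D n ∩ C v n) \ {x | ¬ P x}) := by
      rw [measure_diff_null hzero]
      exact hpos n
    obtain ⟨x, hxA, hxP⟩ := nonempty_of_measure_ne_zero hpos'.ne'
    rw [Set.mem_setOf_eq, not_not] at hxP
    refine ⟨x, ?_, ?_, ?_⟩
    · intro m hm
      rcases Nat.lt_succ_iff_lt_or_eq.mp hm with h | h
      · rw [Function.update_of_ne (Nat.ne_of_lt h)]
        exact hv.1 m h
      · subst h
        rw [Function.update_self]
        exact hxA.1
    · intro m k hmk hk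
      rcases Nat.lt_succ_iff_lt_or_eq.mp hk with h | h
      · rw [Function.update_of_ne (Nat.ne_of_lt (hmk.trans h)), Function.update_of_ne (Nat.ne_of_lt h)]
        exact hv.2.1 m k hmk h
      · subst h
        rw [Function.update_of_ne (Nat.ne_of_lt hmk), Function.update_self]
        exact hxA.2 m hmk
    · intro j
      have heq : D j ∩ C (Function.update v n x) (n+1) = (D j ∩ C v n) ∩ {y | x + y ∈ H} := by
        ext y
        simp only [hC, Set.mem_inter_iff, Set.mem_setOf_eq]
        constructor
        · rintro ⟨hD1, hall⟩
          refine ⟨⟨hD1, fun m hm => ?_⟩, ?_⟩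
          · have := hall m (hm.trans (Nat.lt_succ_self n))
            rwa [Function.update_of_ne (Nat.ne_of_lt hm)] at this
          · have := hall n (Nat.lt_succ_self n)
            rwa [Function.update_self] at this
        · rintro ⟨⟨hD1, hall⟩, hx⟩
          refine ⟨hD1, fun m hm => ?_⟩
          rcases Nat.lt_succ_iff_lt_or_eq.mp hm with h | h
          · rw [Function.update_of_ne (Nat.ne_of_lt h)]
            exact hall m h
          · subst h
            rw [Function.update_self]
            exact hx
      rw [heq]
      exact hxP j
  choose stepf hstepf using step
  -- recursive construction
  let g : ∀ n : ℕ, {v : ℕ → ℝ // Good n v} := fun n =>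
    Nat.rec ⟨fun _ => 0, base⟩ (fun n p => ⟨Function.update p.1 n (stepf n p.1 p.2), hstepf n p.1 p.2⟩) n
  set t : ℕ → ℝ := fun m => (g (m+1)).1 m with ht
  have hg_succ : ∀ n : ℕ, (g (n+1)).1 = Function.update (g n).1 n (stepf n (g n).1 (g n).2) := by
    intro n; rfl
  have hagree : ∀ n m : ℕ, m < n → (g n).1 m = t m := by
    intro n
    induction n with
    | zero => intro m hm; exact absurd hm (Nat.not_lt_zero m)
    | succ n ih =>
      intro m hm
      rcases Nat.lt_succ_iff_lt_or_eq.mp hm with h | h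
      · rw [hg_succ n, Function.update_of_ne (Nat.ne_of_lt h)]
        exact ih m h
      · subst h; rfl
  refine ⟨t, fun m => ?_, fun m n hmn => ?_⟩
  · have := (g (m+1)).2.1 m (Nat.lt_succ_self m)
    exact this
  · have := (g (n+1)).2.2.1 m n hmn (Nat.lt_succ_self n)
    rwa [hagree (n+1) m (hmn.trans (Nat.lt_succ_self n)), hagree (n+1) n (Nat.lt_succ_self n)] at this
end

section
/- Let H ⊆ ℝ be a Lebesgue measurable set such that μ(H ∩ [a,b]) > 0 whenever a < b in ℝ, where μ is Lebesgue measure. Let 𝒞 be the set of subsets C of [0,1] such that s + t ∉ H whenever s, t are distinct members of C, and let B ⊆ ℝ^{[0,1]} be the set of characteristic functions of members of 𝒞. Then B is stable with respect to Lebesgue measure on [0,1]. -/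
open MeasureTheory Filter Set

namespace Stmt14Aux

open MeasureTheory Filter Set Metric


-- diagonal has measure zero
lemma diag_null : (volume.prod volume) {p : ℝ × ℝ | p.1 = p.2} = 0 := by
  have hs : MeasurableSet {p : ℝ × ℝ | p.1 = p.2} :=
    measurableSet_eq_fun measurable_fst measurable_snd
  rw [Measure.prod_apply hs]
  have : ∀ x : ℝ, volume (Prod.mk x ⁻¹' {p : ℝ × ℝ | p.1 = p.2}) = 0 := by
    intro x
    have : Prod.mk x ⁻¹' {p : ℝ × ℝ | p.1 = p.2} = {x} := by
      ext y; simp [eq_comm]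
    rw [this]
    exact measure_singleton x
  simp [this]

-- slice estimate
lemma slice_est (E : Set ℝ) (hE : MeasurableSet E) (x₀ r : ℝ) (hr : 0 < r)
    (hJ : ENNReal.ofReal (7/4*r) ≤ volume (E ∩ Icc (x₀ - r) (x₀ + r)))
    (z : ℝ) (hz : |z - 2*x₀| ≤ r/2) :
    ENNReal.ofReal (r/2) ≤ volume {x : ℝ | x ∈ E ∧ z - x ∈ E} := by
  set J := Icc (x₀ - r) (x₀ + r) with hJdef
  set K := Icc (z - x₀ - r) (z - x₀ + r) with hKdef
  have hvolJ : volume J = ENNReal.ofReal (2*r) := by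
    rw [hJdef, Real.volume_Icc]; ring_nf
  have hvolK : volume K = ENNReal.ofReal (2*r) := by
    rw [hKdef, Real.volume_Icc]; ring_nf
  have habs := abs_le.1 hz
  -- J \ E small
  have h1 : volume (J \ E) ≤ ENNReal.ofReal (r/4) := by
    have hsub : E ∩ J ⊆ J := inter_subset_right
    have hfin : volume (E ∩ J) ≠ ⊤ :=
      (lt_of_le_of_lt (measure_mono hsub) (by rw [hvolJ]; exact ENNReal.ofReal_lt_top)).ne
    rw [← diff_inter_self_eq_diff (t := E), measure_diff hsub (hE.inter measurableSet_Icc).nullMeasurableSet hfin, hvolJ]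
    calc ENNReal.ofReal (2*r) - volume (E ∩ J)
        ≤ ENNReal.ofReal (2*r) - ENNReal.ofReal (7/4*r) := tsub_le_tsub le_rfl hJ
      _ = ENNReal.ofReal (2*r - 7/4*r) := (ENNReal.ofReal_sub _ (by linarith)).symm
      _ = ENNReal.ofReal (r/4) := by ring_nf
  -- K \ J small
  have h2 : volume (K \ J) ≤ ENNReal.ofReal r := by
    have hsub2 : Icc (x₀ - r/2) (x₀ + r/2) ⊆ K ∩ J := by
      intro x hx
      simp only [hKdef, hJdef, mem_inter_iff, mem_Icc] at *
      constructor <;> constructor <;> linarith [hx.1, hx.2, habs.1, habs.2]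
    have hKJ : ENNReal.ofReal r ≤ volume (K ∩ J) := by
      calc ENNReal.ofReal r = volume (Icc (x₀ - r/2) (x₀ + r/2)) := by
            rw [Real.volume_Icc]; ring_nf
        _ ≤ volume (K ∩ J) := measure_mono hsub2
    have hfin : volume (K ∩ J) ≠ ⊤ :=
      (lt_of_le_of_lt (measure_mono inter_subset_left) (by rw [hvolK]; exact ENNReal.ofReal_lt_top)).ne
    rw [← diff_self_inter (t := J), measure_diff inter_subset_left
      (measurableSet_Icc.inter measurableSet_Icc).nullMeasurableSet hfin, hvolK]
    calc ENNReal.ofReal (2*r) - volume (K ∩ J)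
        ≤ ENNReal.ofReal (2*r) - ENNReal.ofReal r := tsub_le_tsub le_rfl hKJ
      _ = ENNReal.ofReal (2*r - r) := (ENNReal.ofReal_sub _ (by linarith)).symm
      _ ≤ ENNReal.ofReal r := by rw [show 2*r - r = r by ring]
  -- J \ pre = reflection of K \ E
  set pre := (fun x : ℝ => z - x) ⁻¹' E with hpre
  have h3 : volume (J \ pre) = volume (K \ E) := by
    have heq : J \ pre = (fun x : ℝ => z - x) ⁻¹' (K \ E) := by
      ext x
      simp only [hJdef, hKdef, hpre, mem_diff, mem_preimage, mem_Icc]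
      constructor
      · rintro ⟨⟨h1', h2'⟩, h3'⟩; exact ⟨⟨by linarith, by linarith⟩, h3'⟩
      · rintro ⟨⟨h1', h2'⟩, h3'⟩; exact ⟨⟨by linarith, by linarith⟩, h3'⟩
    rw [heq]
    exact (MeasureTheory.Measure.measurePreserving_sub_left volume z).measure_preimage
      ((measurableSet_Icc.diff hE).nullMeasurableSet)
  have h4 : volume (K \ E) ≤ ENNReal.ofReal r + ENNReal.ofReal (r/4) := by
    have hsub : K \ E ⊆ (K \ J) ∪ (J \ E) := by
      intro x hx
      by_cases hxJ : x ∈ J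
      · exact Or.inr ⟨hxJ, hx.2⟩
      · exact Or.inl ⟨hx.1, hxJ⟩
    exact le_trans (measure_mono hsub) (le_trans (measure_union_le _ _) (add_le_add h2 h1))
  -- combine
  have hcover : J ⊆ {x : ℝ | x ∈ E ∧ z - x ∈ E} ∪ (J \ E) ∪ (J \ pre) := by
    intro x hx
    by_cases hxE : x ∈ E
    · by_cases hxp : x ∈ pre
      · exact Or.inl (Or.inl ⟨hxE, hxp⟩)
      · exact Or.inr ⟨hx, hxp⟩
    · exact Or.inl (Or.inr ⟨hx, hxE⟩)
  have hmain : ENNReal.ofReal (2*r) ≤ volume {x : ℝ | x ∈ E ∧ z - x ∈ E} + ENNReal.ofReal (3/2*r) := by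
    calc ENNReal.ofReal (2*r) = volume J := hvolJ.symm
      _ ≤ volume ({x : ℝ | x ∈ E ∧ z - x ∈ E} ∪ (J \ E) ∪ (J \ pre)) := measure_mono hcover
      _ ≤ volume {x : ℝ | x ∈ E ∧ z - x ∈ E} + volume (J \ E) + volume (J \ pre) :=
          le_trans (measure_union_le _ _) (add_le_add (measure_union_le _ _) le_rfl)
      _ ≤ volume {x : ℝ | x ∈ E ∧ z - x ∈ E} + ENNReal.ofReal (r/4)
            + (ENNReal.ofReal r + ENNReal.ofReal (r/4)) := by
          refine add_le_add (add_le_add le_rfl h1) ?_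
          rw [h3]; exact h4
      _ = volume {x : ℝ | x ∈ E ∧ z - x ∈ E} + ENNReal.ofReal (3/2*r) := by
          have h5 : (3/2*r) = r/4 + (r + r/4) := by ring
          rw [h5, ENNReal.ofReal_add (by linarith) (by linarith),
              ENNReal.ofReal_add (by linarith) (by linarith), add_assoc]
  have : ENNReal.ofReal (r/2) = ENNReal.ofReal (2*r) - ENNReal.ofReal (3/2*r) := by
    rw [← ENNReal.ofReal_sub _ (by linarith)]; ring_nf
  rw [this]
  exact tsub_le_iff_right.2 hmain


lemma key (H : Set ℝ) (hH : MeasurableSet H)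
    (hHpos : ∀ a b : ℝ, a < b → 0 < volume (H ∩ Set.Icc a b))
    (E : Set ℝ) (hE : MeasurableSet E) (hEpos : 0 < volume E) :
    0 < (volume.prod volume) {p : ℝ × ℝ | p.1 ∈ E ∧ p.2 ∈ E ∧ p.1 + p.2 ∈ H} := by
  -- find a density point of E
  have hae := Besicovitch.ae_tendsto_measure_inter_div_of_measurableSet volume hE
  set S := {x : ℝ | Tendsto (fun r => volume (E ∩ closedBall x r) / volume (closedBall x r))
    (nhdsWithin 0 (Set.Ioi 0)) (nhds (E.indicator 1 x))} with hSdef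
  have hScompl : volume Sᶜ = 0 := hae
  obtain ⟨x₀, hx₀E, hx₀S⟩ : ∃ x₀, x₀ ∈ E ∧ x₀ ∈ S := by
    have h1 : volume (E ∩ S) ≠ 0 := by
      intro h0
      have : volume E ≤ volume (E ∩ S) + volume (E ∩ Sᶜ) := by
        refine le_trans (measure_mono ?_) (measure_union_le _ _)
        intro x hx; by_cases hxS : x ∈ S
        · exact Or.inl ⟨hx, hxS⟩
        · exact Or.inr ⟨hx, hxS⟩
      rw [h0, zero_add] at this
      exact absurd (le_trans this (le_trans (measure_mono inter_subset_right)
        hScompl.le)) (by simpa using hEpos.ne')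
    exact nonempty_of_measure_ne_zero h1
  have hx₀ : Tendsto (fun r => volume (E ∩ closedBall x₀ r) / volume (closedBall x₀ r))
      (nhdsWithin 0 (Set.Ioi 0)) (nhds 1) := by
    have := hx₀S
    rw [hSdef, mem_setOf_eq] at this
    simpa [Set.indicator_of_mem hx₀E] using this
  -- choose a good radius r
  have hev : ∀ᶠ r in nhdsWithin (0:ℝ) (Set.Ioi 0),
      (7/8 : ENNReal) < volume (E ∩ closedBall x₀ r) / volume (closedBall x₀ r) :=
    hx₀ (Ioi_mem_nhds (by
      rw [ENNReal.div_lt_iff (Or.inl (by norm_num)) (Or.inl (by norm_num))]; norm_num))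
  obtain ⟨r, hr78, hr0⟩ := (hev.and (eventually_mem_nhdsWithin)).exists
  rw [Set.mem_Ioi] at hr0
  -- density bound in terms of Icc
  have hvolCB : volume (closedBall x₀ r) = ENNReal.ofReal (2*r) := by
    rw [Real.closedBall_eq_Icc, Real.volume_Icc]; ring_nf
  have hJ : ENNReal.ofReal (7/4*r) ≤ volume (E ∩ Icc (x₀ - r) (x₀ + r)) := by
    have h78 : (7/8 : ENNReal) * volume (closedBall x₀ r) < volume (E ∩ closedBall x₀ r) := by
      refine (ENNReal.lt_div_iff_mul_lt (Or.inl ?_) (Or.inl ?_)).1 hr78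
      · rw [hvolCB]; simp [ENNReal.ofReal_eq_zero]; linarith
      · rw [hvolCB]; exact ENNReal.ofReal_ne_top
    rw [Real.closedBall_eq_Icc] at h78
    refine le_trans ?_ h78.le
    rw [Real.volume_Icc]
    rw [show x₀ + r - (x₀ - r) = 2*r by ring]
    rw [show (7/4*r) = (7/8) * (2*r) by ring, ENNReal.ofReal_mul (by norm_num)]
    gcongr
    rw [ENNReal.ofReal_div_of_pos (by norm_num)]
    norm_num
  -- the interval around 2x₀
  have hHI := hHpos (2*x₀ - r/2) (2*x₀ + r/2) (by linarith)
  set I := Icc (2*x₀ - r/2) (2*x₀ + r/2) with hIdef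
  -- measurable sets
  have hB : MeasurableSet {p : ℝ × ℝ | p.1 ∈ E ∧ p.2 ∈ E ∧ p.1 + p.2 ∈ H} :=
    (measurable_fst hE).inter ((measurable_snd hE).inter
      ((measurable_fst.add measurable_snd) hH))
  have hA : MeasurableSet {q : ℝ × ℝ | q.1 ∈ E ∧ q.2 - q.1 ∈ E ∧ q.2 ∈ H} :=
    (measurable_fst hE).inter (((measurable_snd.sub measurable_fst) hE).inter
      (measurable_snd hH))
  -- shear transformation
  have hshear : (volume.prod volume) {q : ℝ × ℝ | q.1 ∈ E ∧ q.2 - q.1 ∈ E ∧ q.2 ∈ H}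
      = (volume.prod volume) {p : ℝ × ℝ | p.1 ∈ E ∧ p.2 ∈ E ∧ p.1 + p.2 ∈ H} := by
    have hpre : (fun z : ℝ × ℝ => (z.1, z.2 - z.1)) ⁻¹'
        {p : ℝ × ℝ | p.1 ∈ E ∧ p.2 ∈ E ∧ p.1 + p.2 ∈ H}
        = {q : ℝ × ℝ | q.1 ∈ E ∧ q.2 - q.1 ∈ E ∧ q.2 ∈ H} := by
      ext ⟨x, y⟩
      simp only [mem_preimage, mem_setOf_eq]
      rw [show x + (y - x) = y by ring]
    rw [← hpre]
    exact (measurePreserving_prod_sub volume volume).measure_preimage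
      hB.nullMeasurableSet
  -- slice lower bound
  have hslice : ∀ z ∈ H ∩ I, ENNReal.ofReal (r/2)
      ≤ volume ((fun x => (x, z)) ⁻¹' {q : ℝ × ℝ | q.1 ∈ E ∧ q.2 - q.1 ∈ E ∧ q.2 ∈ H}) := by
    intro z hz
    have hzI := hz.2
    rw [hIdef, mem_Icc] at hzI
    have habs : |z - 2*x₀| ≤ r/2 := abs_le.2 ⟨by linarith, by linarith⟩
    have hset : (fun x : ℝ => (x, z)) ⁻¹' {q : ℝ × ℝ | q.1 ∈ E ∧ q.2 - q.1 ∈ E ∧ q.2 ∈ H}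
        = {x : ℝ | x ∈ E ∧ z - x ∈ E} := by
      ext x
      simp only [mem_preimage, mem_setOf_eq]
      exact ⟨fun h => ⟨h.1, h.2.1⟩, fun h => ⟨h.1, h.2, hz.1⟩⟩
    rw [hset]
    exact slice_est E hE x₀ r hr0 hJ z habs
  -- combine
  have hlow : ENNReal.ofReal (r/2) * volume (H ∩ I)
      ≤ (volume.prod volume) {p : ℝ × ℝ | p.1 ∈ E ∧ p.2 ∈ E ∧ p.1 + p.2 ∈ H} := by
    calc ENNReal.ofReal (r/2) * volume (H ∩ I)
        = ∫⁻ _ in H ∩ I, ENNReal.ofReal (r/2) := (setLIntegral_const _ _).symm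
      _ ≤ ∫⁻ z in H ∩ I,
            volume ((fun x => (x, z)) ⁻¹' {q : ℝ × ℝ | q.1 ∈ E ∧ q.2 - q.1 ∈ E ∧ q.2 ∈ H}) :=
          setLIntegral_mono (measurable_measure_prodMk_right hA) hslice
      _ ≤ ∫⁻ z,
            volume ((fun x => (x, z)) ⁻¹' {q : ℝ × ℝ | q.1 ∈ E ∧ q.2 - q.1 ∈ E ∧ q.2 ∈ H}) :=
          setLIntegral_le_lintegral _ _
      _ = (volume.prod volume) {q : ℝ × ℝ | q.1 ∈ E ∧ q.2 - q.1 ∈ E ∧ q.2 ∈ H} :=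
          (Measure.prod_apply_symm hA).symm
      _ = _ := hshear
  refine lt_of_lt_of_le ?_ hlow
  refine ENNReal.mul_pos ?_ ?_
  · simp [ENNReal.ofReal_eq_zero]; linarith
  · exact hHI.ne'


end Stmt14Aux

/-- 3D: if `H ⊆ ℝ` is measurable and meets every non-trivial interval in a set of positive
measure, then the set of characteristic functions of subsets `C` of `[0,1]` such that
`s + t ∉ H` for all distinct `s, t ∈ C` is stable with respect to Lebesgue measure on
`[0,1]`. -/

theorem stmt14 (H : Set ℝ) (hH : MeasurableSet H)
    (hHpos : ∀ a b : ℝ, a < b → 0 < volume (H ∩ Set.Icc a b)) :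
    Stable (volume.restrict (Set.Icc (0:ℝ) 1))
      {g : ℝ → ℝ | ∃ C : Set ℝ, C ⊆ Set.Icc (0:ℝ) 1 ∧
        (∀ s ∈ C, ∀ t ∈ C, s ≠ t → s + t ∉ H) ∧
        g = C.indicator fun _ => (1:ℝ)} := by
  classical
  intro E hE hEpos α β hαβ
  set μ := volume.restrict (Set.Icc (0:ℝ) 1) with hμ
  have hEfin : μ E ≠ ⊤ := by
    refine (lt_of_le_of_lt (measure_mono (Set.subset_univ E)) ?_).ne
    rw [Measure.restrict_apply_univ, Real.volume_Icc]
    exact ENNReal.ofReal_lt_top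
  rcases lt_or_ge α 0 with hα | hα
  · refine ⟨1, 1, one_pos, one_pos, ?_⟩
    have hempty : {p : (Fin 1 → ℝ) × (Fin 1 → ℝ) |
        (∀ i, p.1 i ∈ E) ∧ (∀ j, p.2 j ∈ E) ∧
        ∃ f ∈ {g : ℝ → ℝ | ∃ C : Set ℝ, C ⊆ Set.Icc (0:ℝ) 1 ∧
          (∀ s ∈ C, ∀ t ∈ C, s ≠ t → s + t ∉ H) ∧
          g = C.indicator fun _ => (1:ℝ)},
          (∀ i, f (p.1 i) ≤ α) ∧ (∀ j, β ≤ f (p.2 j))} = ∅ := by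
      rw [Set.eq_empty_iff_forall_notMem]
      rintro p ⟨-, -, f, ⟨C, -, -, rfl⟩, hle, -⟩
      have h1 := hle 0
      have h0 : (0:ℝ) ≤ C.indicator (fun _ => (1:ℝ)) (p.1 0) :=
        Set.indicator_nonneg (fun _ _ => zero_le_one) _
      linarith
    rw [hempty, measure_empty]
    exact ENNReal.pow_pos hEpos _
  rcases lt_or_ge 1 β with hβ | hβ
  · refine ⟨1, 1, one_pos, one_pos, ?_⟩
    have hempty : {p : (Fin 1 → ℝ) × (Fin 1 → ℝ) |
        (∀ i, p.1 i ∈ E) ∧ (∀ j, p.2 j ∈ E) ∧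
        ∃ f ∈ {g : ℝ → ℝ | ∃ C : Set ℝ, C ⊆ Set.Icc (0:ℝ) 1 ∧
          (∀ s ∈ C, ∀ t ∈ C, s ≠ t → s + t ∉ H) ∧
          g = C.indicator fun _ => (1:ℝ)},
          (∀ i, f (p.1 i) ≤ α) ∧ (∀ j, β ≤ f (p.2 j))} = ∅ := by
      rw [Set.eq_empty_iff_forall_notMem]
      rintro p ⟨-, -, f, ⟨C, -, -, rfl⟩, -, hge⟩
      have h1 := hge 0
      have h0 : C.indicator (fun _ => (1:ℝ)) (p.2 0) ≤ 1 := by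
        by_cases h : p.2 0 ∈ C
        · rw [Set.indicator_of_mem h]
        · rw [Set.indicator_of_notMem h]; exact zero_le_one
      linarith
    rw [hempty, measure_empty]
    exact ENNReal.pow_pos hEpos _
  have hβ0 : 0 < β := lt_of_le_of_lt hα hαβ
  refine ⟨1, 2, one_pos, two_pos, ?_⟩
  set W₂ : Set (Fin 2 → ℝ) :=
    {u | (u 0 ∈ E ∧ u 1 ∈ E) ∧ (u 0 = u 1 ∨ u 0 + u 1 ∉ H)} with hW₂
  have hsub : {p : (Fin 1 → ℝ) × (Fin 2 → ℝ) |
        (∀ i, p.1 i ∈ E) ∧ (∀ j, p.2 j ∈ E) ∧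
        ∃ f ∈ {g : ℝ → ℝ | ∃ C : Set ℝ, C ⊆ Set.Icc (0:ℝ) 1 ∧
          (∀ s ∈ C, ∀ t ∈ C, s ≠ t → s + t ∉ H) ∧
          g = C.indicator fun _ => (1:ℝ)},
          (∀ i, f (p.1 i) ≤ α) ∧ (∀ j, β ≤ f (p.2 j))}
      ⊆ {q : Fin 1 → ℝ | q 0 ∈ E} ×ˢ W₂ := by
    rintro ⟨t, u⟩ ⟨h1, h2, f, ⟨C, hC1, hC2, rfl⟩, hle, hge⟩
    have hu : ∀ j : Fin 2, u j ∈ C := by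
      intro j
      by_contra hj
      have hgej := hge j
      rw [Set.indicator_of_notMem hj] at hgej
      linarith
    refine ⟨h1 0, ⟨h2 0, h2 1⟩, ?_⟩
    by_cases he : u 0 = u 1
    · exact Or.inl he
    · exact Or.inr (hC2 _ (hu 0) _ (hu 1) he)
  refine lt_of_le_of_lt (measure_mono hsub) ?_
  rw [Measure.prod_prod]
  have h1 : (Measure.pi fun _ : Fin 1 => μ) {q : Fin 1 → ℝ | q 0 ∈ E} = μ E := by
    have heq : {q : Fin 1 → ℝ | q 0 ∈ E} = Set.pi Set.univ (fun _ => E) := by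
      ext q
      simp [Set.mem_pi, Fin.forall_fin_one]
    rw [heq, Measure.pi_pi]
    simp
  rw [h1]
  -- transfer the second factor to ℝ × ℝ
  set W : Set (ℝ × ℝ) := {p | (p.1 ∈ E ∧ p.2 ∈ E) ∧ (p.1 = p.2 ∨ p.1 + p.2 ∉ H)} with hW
  have hdiagmeas : MeasurableSet {p : ℝ × ℝ | p.1 = p.2} :=
    measurableSet_eq_fun measurable_fst measurable_snd
  have hWmeas : MeasurableSet W :=
    ((measurable_fst hE).inter (measurable_snd hE)).inter
      (hdiagmeas.union (((measurable_fst.add measurable_snd) hH).compl))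
  have hmp := MeasureTheory.measurePreserving_piFinTwo (fun _ : Fin 2 => μ)
  have hpre : W₂ = (MeasurableEquiv.piFinTwo fun _ : Fin 2 => ℝ) ⁻¹' W := rfl
  have h2 : (Measure.pi fun _ : Fin 2 => μ) W₂ = (μ.prod μ) W := by
    rw [hpre, hmp.measure_preimage hWmeas.nullMeasurableSet]
  rw [h2]
  -- the bad set has positive measure
  set G' : Set (ℝ × ℝ) := {p | p.1 ∈ E ∧ p.2 ∈ E ∧ p.1 + p.2 ∈ H} with hG'
  have hG'meas : MeasurableSet G' :=
    (measurable_fst hE).inter ((measurable_snd hE).inter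
      ((measurable_fst.add measurable_snd) hH))
  have hEvol : 0 < volume (E ∩ Set.Icc (0:ℝ) 1) := by
    rwa [hμ, Measure.restrict_apply hE] at hEpos
  have hG'pos : 0 < (μ.prod μ) G' := by
    rw [hμ, Measure.prod_restrict, Measure.restrict_apply hG'meas]
    have heq : G' ∩ (Set.Icc (0:ℝ) 1 ×ˢ Set.Icc (0:ℝ) 1)
        = {p : ℝ × ℝ | p.1 ∈ E ∩ Set.Icc (0:ℝ) 1 ∧ p.2 ∈ E ∩ Set.Icc (0:ℝ) 1
            ∧ p.1 + p.2 ∈ H} := by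
      ext ⟨x, y⟩
      simp only [hG', Set.mem_inter_iff, Set.mem_setOf_eq, Set.mem_prod]
      tauto
    rw [heq]
    exact Stmt14Aux.key H hH hHpos (E ∩ Set.Icc (0:ℝ) 1)
      (hE.inter measurableSet_Icc) hEvol
  have hdiagμ : (μ.prod μ) {p : ℝ × ℝ | p.1 = p.2} = 0 := by
    refine le_antisymm ?_ zero_le
    rw [hμ, Measure.prod_restrict]
    exact le_trans (Measure.restrict_apply_le _ _) Stmt14Aux.diag_null.le
  set G : Set (ℝ × ℝ) := G' \ {p : ℝ × ℝ | p.1 = p.2} with hG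
  have hGpos : 0 < (μ.prod μ) G := by
    rw [hG, measure_diff_null hdiagμ]
    exact hG'pos
  have hGsub : G ⊆ E ×ˢ E := fun p hp => ⟨hp.1.1, hp.1.2.1⟩
  have hGmeas : MeasurableSet G := hG'meas.diff hdiagmeas
  have hWsub : W ⊆ (E ×ˢ E) \ G := by
    rintro ⟨x, y⟩ ⟨⟨hx, hy⟩, hor⟩
    refine ⟨⟨hx, hy⟩, ?_⟩
    rintro ⟨⟨-, -, hsum⟩, hne⟩
    rcases hor with heq | hnsum
    · exact hne heq
    · exact hnsum hsum
  have hEE : (μ.prod μ) (E ×ˢ E) = μ E * μ E := Measure.prod_prod E E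
  have hfinEE : (μ.prod μ) (E ×ˢ E) ≠ ⊤ := by
    rw [hEE]; exact ENNReal.mul_ne_top hEfin hEfin
  have hGfin : (μ.prod μ) G ≠ ⊤ :=
    (lt_of_le_of_lt (measure_mono hGsub) hfinEE.lt_top).ne
  have hmain : (μ.prod μ) W < μ E * μ E := by
    calc (μ.prod μ) W ≤ (μ.prod μ) ((E ×ˢ E) \ G) := measure_mono hWsub
      _ = (μ.prod μ) (E ×ˢ E) - (μ.prod μ) G :=
          measure_diff hGsub hGmeas.nullMeasurableSet hGfin
      _ < (μ.prod μ) (E ×ˢ E) := by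
          refine ENNReal.sub_lt_self hfinEE ?_ hGpos.ne'
          rw [hEE]
          exact mul_ne_zero hEpos.ne' hEpos.ne'
      _ = μ E * μ E := hEE
  calc μ E * (μ.prod μ) W < μ E * (μ E * μ E) :=
        ENNReal.mul_lt_mul_right hEpos.ne' hEfin hmain
    _ = μ E ^ (1 + 2) := by ring
end
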